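/- arXiv:2308.04894 — 3 statements merged into one kernel-verified Lean document; each statement's English description precedes it below -/
import Mathlib

section
/- Let N ≥ 2 and let A_1,…,A_N ∈ GL_d(ℝ) all be contracting with respect to some norm on ℝ^d, and suppose each A_i is a similarity with respect to some fixed inner product on ℝ^d. Let Q be a d×d real matrix with dimaff(A_1,…,A_N) ≤ rank Q. Then inf{s > 0 : ∑_{n=1}^∞ ∑_{|𝚒|=n} φ^s(Q A_𝚒) < ∞} = dimaff(A_1,…,A_N). -/
open scoped BigOperators Kronecker

noncomputable section

namespace PaperProj

open Matrix

/-- The `j`-th singular value (`1`-indexed, in decreasing order) of a real square matrix: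
the non-negative square roots of the eigenvalues of `AᵀA`, listed in decreasing order
with multiplicity. -/
noncomputable def sval {ι : Type*} [Fintype ι] [DecidableEq ι] (A : Matrix ι ι ℝ) (j : ℕ) : ℝ :=
  ((((Finset.univ.val.map fun i : ι =>
      Real.sqrt ((show (Aᵀ * A).IsHermitian by
        simpa [Matrix.conjTranspose_eq_transpose_of_trivial] using
          Matrix.isHermitian_conjTranspose_mul_self A).eigenvalues i)).sort
    (· ≤ ·)).reverse).getD (j - 1) 0)

/-- Falconer's singular value function `φ^s`. -/
noncomputable def svf {ι : Type*} [Fintype ι] [DecidableEq ι] (s : ℝ) (A : Matrix ι ι ℝ) : ℝ :=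
  if s ≤ (Fintype.card ι : ℝ) then
    (∏ j ∈ Finset.Icc 1 ⌊s⌋₊, sval A j) * sval A ⌈s⌉₊ ^ (s - (⌊s⌋₊ : ℝ))
  else |A.det| ^ (s / (Fintype.card ι : ℝ))

/-- The product `A_{i_1} ⋯ A_{i_n}` associated to a word `i = i_1 ⋯ i_n`. -/
noncomputable def wordProd {ι : Type*} [Fintype ι] [DecidableEq ι] {N : ℕ}
    (A : Fin N → Matrix ι ι ℝ) {n : ℕ} (i : Fin n → Fin N) : Matrix ι ι ℝ :=
  (List.ofFn fun j => A (i j)).prod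

/-- The affinity dimension: `inf {s > 0 : ∑_{n≥1} ∑_{|i|=n} φ^s(A_i) < ∞}`. -/
noncomputable def affDim {ι : Type*} [Fintype ι] [DecidableEq ι] {N : ℕ}
    (A : Fin N → Matrix ι ι ℝ) : ℝ :=
  sInf {s : ℝ | 0 < s ∧
    Summable fun n : ℕ => ∑ i : Fin (n + 1) → Fin N, svf s (wordProd A i)}

/-- The pressure `P(A_1,…,A_N; s) = lim_n (1/n) log ∑_{|i|=n} φ^s(A_i)` (the limit exists by
subadditivity, so it equals the limsup used here). -/
noncomputable def pressure {ι : Type*} [Fintype ι] [DecidableEq ι] {N : ℕ}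
    (A : Fin N → Matrix ι ι ℝ) (s : ℝ) : ℝ :=
  Filter.limsup
    (fun n : ℕ => Real.log (∑ i : Fin n → Fin N, svf s (wordProd A i)) / n) Filter.atTop

/-- The tuple `(A_1,…,A_N)` is contracting with respect to some norm on `ℝ^d`. -/
def IsContractingTuple {ι : Type*} [Fintype ι] [DecidableEq ι] {N : ℕ}
    (A : Fin N → Matrix ι ι ℝ) : Prop :=
  ∃ (ν : Seminorm ℝ (ι → ℝ)) (c : ℝ), (∀ x : ι → ℝ, x ≠ 0 → 0 < ν x) ∧ c < 1 ∧
    ∀ (i : Fin N) (x : ι → ℝ), ν ((A i).mulVec x) ≤ c * ν x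

/-- Irreducibility: no nonzero proper subspace is preserved by every map of the tuple. -/
def IrreducibleTuple {N : ℕ} {V : Type*} [AddCommGroup V] [Module ℝ V]
    (f : Fin N → V →ₗ[ℝ] V) : Prop :=
  ∀ W : Submodule ℝ V, (∀ i, W.map (f i) ≤ W) → W = ⊥ ∨ W = ⊤

/-- Strong irreducibility: no finite union of nonzero proper subspaces is preserved by
every map of the tuple. -/
def StronglyIrreducibleTuple {N : ℕ} {V : Type*} [AddCommGroup V] [Module ℝ V]
    (f : Fin N → V →ₗ[ℝ] V) : Prop :=
  ∀ (m : ℕ) (W : Fin (m + 1) → Submodule ℝ V), (∀ j, W j ≠ ⊥) → (∀ j, W j ≠ ⊤) →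
    ¬ (∀ i, (f i) '' (⋃ j, (W j : Set V)) = ⋃ j, (W j : Set V))

/-- The linear map induced on the `k`-th exterior power by a linear endomorphism. -/
noncomputable def extPowMap {V : Type*} [AddCommGroup V] [Module ℝ V] (k : ℕ)
    (f : V →ₗ[ℝ] V) : ⋀[ℝ]^k V →ₗ[ℝ] ⋀[ℝ]^k V :=
  (ExteriorAlgebra.map f).toLinearMap.restrict (p := ⋀[ℝ]^k V) (q := ⋀[ℝ]^k V)
    (by
      intro x hx
      have h : Submodule.map (ExteriorAlgebra.map f).toLinearMap (⋀[ℝ]^k V) ≤ ⋀[ℝ]^k V := by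
        conv_lhs => rw [← ExteriorAlgebra.ιMulti_span_fixedDegree]
        rw [Submodule.map_span, Submodule.span_le]
        rintro y ⟨z, ⟨m, rfl⟩, rfl⟩
        rw [AlgHom.toLinearMap_apply, ExteriorAlgebra.map_apply_ιMulti]
        rw [← ExteriorAlgebra.ιMulti_span_fixedDegree]
        exact Submodule.subset_span ⟨_, rfl⟩
      exact h ⟨x, hx, rfl⟩)

instance extPowFree {V : Type*} [AddCommGroup V] [Module ℝ V] (k : ℕ) :
    Module.Free ℝ (⋀[ℝ]^k V) := Module.Free.of_divisionRing ℝ _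

instance extPowFinite {V : Type*} [AddCommGroup V] [Module ℝ V] [Module.Finite ℝ V] (k : ℕ) :
    Module.Finite ℝ (⋀[ℝ]^k V) := by
  rw [Module.Finite.iff_fg]
  refine Submodule.FG.pow ?_ k
  rw [← Submodule.map_top (ExteriorAlgebra.ι ℝ (M := V))]
  exact Submodule.FG.map _ Module.Finite.fg_top

/-- The tuple `(A_1,…,A_N)` is `k`-irreducible: the induced tuple on the `k`-th exterior
power is irreducible. -/
def kIrreducible {ι : Type*} [Fintype ι] [DecidableEq ι] {N : ℕ} (k : ℕ)
    (A : Fin N → Matrix ι ι ℝ) : Prop :=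
  IrreducibleTuple fun i => extPowMap k (Matrix.toLin' (A i))

/-- A linear endomorphism of a finite-dimensional real vector space is proximal if it has a
simple eigenvalue whose modulus strictly exceeds the modulus of every other (complex)
eigenvalue. -/
def ProximalEnd {V : Type*} [AddCommGroup V] [Module ℝ V] [Module.Finite ℝ V]
    [Module.Free ℝ V] (f : V →ₗ[ℝ] V) : Prop :=
  ∃ lam : ℂ, ((LinearMap.charpoly f).map (algebraMap ℝ ℂ)).roots.count lam = 1 ∧
    ∀ mu ∈ ((LinearMap.charpoly f).map (algebraMap ℝ ℂ)).roots, mu ≠ lam →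
      ‖mu‖ < ‖lam‖

/-- The tuple `(A_1,…,A_N)` is proximal of all orders: for each `k = 1,…,d`, some word
product of the induced tuple on the `k`-th exterior power is a proximal linear map. -/
def ProximalAllOrders {ι : Type*} [Fintype ι] [DecidableEq ι] {N : ℕ}
    (A : Fin N → Matrix ι ι ℝ) : Prop :=
  ∀ k : ℕ, 1 ≤ k → k ≤ Fintype.card ι →
    ∃ (n : ℕ) (i : Fin (n + 1) → Fin N),
      ProximalEnd (extPowMap k (Matrix.toLin' (wordProd A i)))

/-- The least number of open `δ`-balls needed to cover `Y` (when `Y` admits a finite cover;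
junk value `0` otherwise). -/
noncomputable def coverNum {E : Type*} [PseudoMetricSpace E] (Y : Set E) (δ : ℝ) : ℕ :=
  sInf {n : ℕ | ∃ t : Finset E, t.card = n ∧ Y ⊆ ⋃ x ∈ t, Metric.ball x δ}

/-- The upper box dimension `limsup_{δ→0⁺} log N(Y,δ) / log (1/δ)`. -/
noncomputable def upperBoxDim {E : Type*} [PseudoMetricSpace E] (Y : Set E) : ℝ :=
  Filter.limsup (fun δ : ℝ => Real.log (coverNum Y δ) / Real.log (1 / δ))
    (nhdsWithin 0 (Set.Ioi 0))

/-- The operator norm of a matrix with respect to the Euclidean norm. -/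
noncomputable def opNorm {ι : Type*} [Fintype ι] [DecidableEq ι] (A : Matrix ι ι ℝ) : ℝ :=
  ‖(Matrix.toEuclideanCLM (𝕜 := ℝ) A : EuclideanSpace ℝ ι →L[ℝ] EuclideanSpace ℝ ι)‖


variable {d : ℕ}

lemma hermTM (M : Matrix (Fin d) (Fin d) ℝ) : (Mᵀ * M).IsHermitian := by
  simpa [Matrix.conjTranspose_eq_transpose_of_trivial] using
    Matrix.isHermitian_conjTranspose_mul_self M

/-- eigenvalues of `MᵀM`. -/
noncomputable def eig (M : Matrix (Fin d) (Fin d) ℝ) : Fin d → ℝ :=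
  (hermTM M).eigenvalues

noncomputable def svList (M : Matrix (Fin d) (Fin d) ℝ) : List ℝ :=
  (Finset.univ.val.map fun i => Real.sqrt (eig M i)).sort (· ≤ ·)

lemma sval_def (M : Matrix (Fin d) (Fin d) ℝ) (j : ℕ) :
    sval M j = (svList M).reverse.getD (j - 1) 0 := rfl

lemma svList_length (M : Matrix (Fin d) (Fin d) ℝ) : (svList M).length = d := by
  simp [svList]

lemma svList_sorted (M : Matrix (Fin d) (Fin d) ℝ) : (svList M).Pairwise (· ≤ ·) :=
  Multiset.pairwise_sort _ _

lemma mem_svList {M : Matrix (Fin d) (Fin d) ℝ} {a : ℝ} :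
    a ∈ svList M ↔ ∃ i, Real.sqrt (eig M i) = a := by
  simp [svList, List.mem_ofFn]

lemma eig_nonneg (M : Matrix (Fin d) (Fin d) ℝ) (i : Fin d) : 0 ≤ eig M i := by
  exact (Matrix.posSemidef_conjTranspose_mul_self M).eigenvalues_nonneg i

lemma svList_nonneg {M : Matrix (Fin d) (Fin d) ℝ} {a : ℝ} (ha : a ∈ svList M) : 0 ≤ a := by
  obtain ⟨i, rfl⟩ := mem_svList.mp ha
  exact Real.sqrt_nonneg _

lemma sval_eq_getElem (M : Matrix (Fin d) (Fin d) ℝ) {j : ℕ} (h1 : 1 ≤ j) (h2 : j ≤ d) :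
    sval M j = (svList M)[d - j]'(by rw [svList_length]; omega) := by
  rw [sval_def]
  have hlen : (svList M).reverse.length = d := by rw [List.length_reverse, svList_length]
  have hj : j - 1 < (svList M).reverse.length := by omega
  rw [List.getD_eq_getElem _ _ hj, List.getElem_reverse]
  congr 1
  rw [svList_length]
  omega

lemma sval_eq_zero_of_card_lt (M : Matrix (Fin d) (Fin d) ℝ) {j : ℕ} (h : d < j) :
    sval M j = 0 := by
  rw [sval_def]
  apply List.getD_eq_default
  rw [List.length_reverse, svList_length]
  omega

lemma sval_mem_or_zero (M : Matrix (Fin d) (Fin d) ℝ) (j : ℕ) :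
    sval M j ∈ svList M ∨ sval M j = 0 := by
  have h01 : sval M 0 = sval M 1 := rfl
  rcases Nat.eq_zero_or_pos j with rfl | hj
  · rcases Nat.eq_zero_or_pos d with hd | hd
    · right
      rw [sval_def]
      apply List.getD_eq_default
      rw [List.length_reverse, svList_length]; omega
    · left; rw [h01, sval_eq_getElem M le_rfl hd]; exact List.getElem_mem _
  · rcases le_or_gt j d with h | h
    · left; rw [sval_eq_getElem M hj h]; exact List.getElem_mem _
    · exact Or.inr (sval_eq_zero_of_card_lt M h)

lemma sval_nonneg (M : Matrix (Fin d) (Fin d) ℝ) (j : ℕ) : 0 ≤ sval M j := by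
  rcases sval_mem_or_zero M j with h | h
  · exact svList_nonneg h
  · rw [h]

/-! ### counting lemmas for sorted lists -/

lemma sorted_countP_ge {L : List ℝ} (hs : L.Pairwise (· ≤ ·)) {m : ℕ} (hm : m < L.length)
    (p : ℝ → Bool) (hp : ∀ a, L[m] ≤ a → p a) : L.length - m ≤ L.countP p := by
  have hsplit : L.take m ++ L.drop m = L := List.take_append_drop m L
  have hdrop : (L.drop m).countP p = (L.drop m).length := by
    apply List.countP_eq_length.mpr
    intro a ha
    obtain ⟨k, hk, rfl⟩ := List.mem_iff_getElem.mp ha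
    rw [List.getElem_drop]
    apply hp
    rcases Nat.eq_zero_or_pos k with rfl | hk0
    · simp
    · have hmk : m + k < L.length := by simp at hk; omega
      exact List.pairwise_iff_getElem.mp hs m (m + k) hm hmk (by omega)
  calc L.length - m = (L.drop m).length := by simp
    _ = (L.drop m).countP p := hdrop.symm
    _ ≤ (L.take m).countP p + (L.drop m).countP p := Nat.le_add_left _ _
    _ = L.countP p := by rw [← List.countP_append, hsplit]

lemma sorted_countP_le_part {L : List ℝ} (hs : L.Pairwise (· ≤ ·)) {m : ℕ} (hm : m < L.length)
    (p : ℝ → Bool) (hp : ∀ a, a ≤ L[m] → p a) : m + 1 ≤ L.countP p := by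
  have hsplit : L.take (m+1) ++ L.drop (m+1) = L := List.take_append_drop (m+1) L
  have htake : (L.take (m+1)).countP p = (L.take (m+1)).length := by
    apply List.countP_eq_length.mpr
    intro a ha
    obtain ⟨k, hk, rfl⟩ := List.mem_iff_getElem.mp ha
    rw [List.getElem_take]
    apply hp
    have hk' : k < m + 1 := by simp at hk; omega
    rcases eq_or_lt_of_le (Nat.lt_succ_iff.mp hk') with rfl | hlt
    · exact le_rfl
    · exact List.pairwise_iff_getElem.mp hs k m (by omega) hm hlt
  have hlen : (L.take (m+1)).length = m + 1 := by simp; omega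
  calc m + 1 = (L.take (m+1)).countP p := by rw [htake, hlen]
    _ ≤ (L.take (m+1)).countP p + (L.drop (m+1)).countP p := Nat.le_add_right _ _
    _ = L.countP p := by rw [← List.countP_append, hsplit]

lemma sorted_countP_le {L : List ℝ} (hs : L.Pairwise (· ≤ ·)) {m : ℕ} (hm : m < L.length)
    (p : ℝ → Bool) (hp : ∀ a, a ≤ L[m] → ¬ p a) : L.countP p ≤ L.length - m - 1 := by
  have hsplit : L.take (m+1) ++ L.drop (m+1) = L := List.take_append_drop (m+1) L
  have htake : (L.take (m+1)).countP p = 0 := by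
    apply List.countP_eq_zero.mpr
    intro a ha
    obtain ⟨k, hk, rfl⟩ := List.mem_iff_getElem.mp ha
    rw [List.getElem_take]
    apply hp
    have hk' : k < m + 1 := by simp at hk; omega
    rcases eq_or_lt_of_le (Nat.lt_succ_iff.mp hk') with rfl | hlt
    · exact le_rfl
    · exact List.pairwise_iff_getElem.mp hs k m (by omega) hm hlt
  calc L.countP p = (L.take (m+1)).countP p + (L.drop (m+1)).countP p := by
        rw [← List.countP_append, hsplit]
    _ = (L.drop (m+1)).countP p := by rw [htake, Nat.zero_add]
    _ ≤ (L.drop (m+1)).length := List.countP_le_length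
    _ ≤ L.length - m - 1 := by simp; omega

lemma card_filter_eq_countP (M : Matrix (Fin d) (Fin d) ℝ) (p : ℝ → Prop) [DecidablePred p] :
    (Finset.univ.filter fun i => p (Real.sqrt (eig M i))).card
      = (svList M).countP (fun a => decide (p a)) := by
  calc (Finset.univ.filter fun i => p (Real.sqrt (eig M i))).card
      = Multiset.card (Finset.univ.val.filter fun i => p (Real.sqrt (eig M i))) := by
        rw [Finset.card, Finset.filter_val]
    _ = Multiset.countP (fun i => p (Real.sqrt (eig M i))) Finset.univ.val :=
        (Multiset.countP_eq_card_filter _ _).symm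
    _ = Multiset.countP p (Finset.univ.val.map fun i => Real.sqrt (eig M i)) := by
        rw [Multiset.countP_map, Multiset.countP_eq_card_filter]
    _ = Multiset.countP p ↑(svList M) := by
        congr 1
        exact (Multiset.sort_eq _ _).symm
    _ = (svList M).countP (fun a => decide (p a)) := Multiset.coe_countP _ _

lemma card_filter_ge (M : Matrix (Fin d) (Fin d) ℝ) {j : ℕ} (h1 : 1 ≤ j) (h2 : j ≤ d) :
    j ≤ (Finset.univ.filter fun i => sval M j ≤ Real.sqrt (eig M i)).card := by
  rw [card_filter_eq_countP M (fun a => sval M j ≤ a)]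
  have hm : d - j < (svList M).length := by rw [svList_length]; omega
  have := sorted_countP_ge (svList_sorted M) hm (fun a => decide (sval M j ≤ a))
    (fun a ha => by simpa using le_trans (le_of_eq (sval_eq_getElem M h1 h2)) ha)
  rw [svList_length] at this
  omega

lemma card_filter_le (M : Matrix (Fin d) (Fin d) ℝ) {j : ℕ} (h1 : 1 ≤ j) (h2 : j ≤ d) :
    d - j + 1 ≤ (Finset.univ.filter fun i => Real.sqrt (eig M i) ≤ sval M j).card := by
  rw [card_filter_eq_countP M (fun a => a ≤ sval M j)]
  have hm : d - j < (svList M).length := by rw [svList_length]; omega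
  exact sorted_countP_le_part (svList_sorted M) hm (fun a => decide (a ≤ sval M j))
    (fun a ha => by simpa using le_trans ha (le_of_eq (sval_eq_getElem M h1 h2).symm))

lemma rank_eq_card_pos (M : Matrix (Fin d) (Fin d) ℝ) :
    M.rank = (Finset.univ.filter fun i => 0 < Real.sqrt (eig M i)).card := by
  have h1 : (Mᴴ * M).rank = M.rank := Matrix.rank_conjTranspose_mul_self M
  rw [← h1, (Matrix.isHermitian_conjTranspose_mul_self M).rank_eq_card_non_zero_eigs,
    Fintype.card_subtype]
  congr 1
  ext i
  simp only [Finset.mem_filter, Finset.mem_univ, true_and]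
  constructor
  · intro h
    exact Real.sqrt_pos.mpr (lt_of_le_of_ne (eig_nonneg M i) (Ne.symm h))
  · intro h
    exact ne_of_gt (Real.sqrt_pos.mp h)

lemma rank_le_d (M : Matrix (Fin d) (Fin d) ℝ) : M.rank ≤ d := by
  simpa using M.rank_le_card_width

lemma sval_pos_of_le_rank (M : Matrix (Fin d) (Fin d) ℝ) {j : ℕ} (h1 : 1 ≤ j)
    (h2 : j ≤ M.rank) : 0 < sval M j := by
  have hd : j ≤ d := h2.trans (rank_le_d M)
  by_contra hcon
  push_neg at hcon
  have hm : d - j < (svList M).length := by rw [svList_length]; omega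
  have hle := sorted_countP_le (svList_sorted M) hm (fun a => decide (0 < a)) (fun a ha => by
    simp only [decide_eq_true_eq]
    intro h0
    have : a ≤ sval M j := le_of_le_of_eq ha (sval_eq_getElem M h1 hd).symm
    linarith)
  rw [svList_length] at hle
  have hrk := rank_eq_card_pos M
  rw [card_filter_eq_countP M (fun a => 0 < a)] at hrk
  omega

lemma sval_eq_zero_of_rank_lt (M : Matrix (Fin d) (Fin d) ℝ) {j : ℕ} (h : M.rank < j) :
    sval M j = 0 := by
  rcases lt_or_ge d j with hd | hd
  · exact sval_eq_zero_of_card_lt M hd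
  · have h1 : 1 ≤ j := by omega
    by_contra hcon
    have ht : 0 < sval M j := lt_of_le_of_ne (sval_nonneg M j) (Ne.symm hcon)
    have hm : d - j < (svList M).length := by rw [svList_length]; omega
    have hge := sorted_countP_ge (svList_sorted M) hm (fun a => decide (0 < a)) (fun a ha => by
      simp only [decide_eq_true_eq]
      have : sval M j ≤ a := le_of_eq_of_le (sval_eq_getElem M h1 hd) ha
      linarith)
    rw [svList_length] at hge
    have hrk := rank_eq_card_pos M
    rw [card_filter_eq_countP M (fun a => 0 < a)] at hrk
    omega

/-! ### Euclidean quadratic form machinery -/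

open scoped RealInnerProductSpace

/-- identity map into `EuclideanSpace`. -/
def toE (x : Fin d → ℝ) : EuclideanSpace ℝ (Fin d) :=
  (WithLp.linearEquiv 2 ℝ (Fin d → ℝ)).symm x

/-- identity map out of `EuclideanSpace`. -/
def ofE (x : EuclideanSpace ℝ (Fin d)) : Fin d → ℝ :=
  (WithLp.linearEquiv 2 ℝ (Fin d → ℝ)) x

/-- matrix action on `EuclideanSpace` as a linear map. -/
noncomputable def mvL (M : Matrix (Fin d) (Fin d) ℝ) :
    EuclideanSpace ℝ (Fin d) →ₗ[ℝ] EuclideanSpace ℝ (Fin d) :=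
  (((WithLp.linearEquiv 2 ℝ (Fin d → ℝ)).symm.toLinearMap.comp M.mulVecLin).comp
    (WithLp.linearEquiv 2 ℝ (Fin d → ℝ)).toLinearMap)

lemma mvL_apply (M : Matrix (Fin d) (Fin d) ℝ) (x : EuclideanSpace ℝ (Fin d)) :
    mvL M x = toE (M.mulVec (ofE x)) := rfl

lemma mvL_mul (Q W : Matrix (Fin d) (Fin d) ℝ) (x : EuclideanSpace ℝ (Fin d)) :
    mvL (Q * W) x = mvL Q (mvL W x) := by
  show toE ((Q * W).mulVec (ofE x)) = toE (Q.mulVec (ofE (toE (W.mulVec (ofE x)))))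
  exact congrArg toE (by rw [← Matrix.mulVec_mulVec]; rfl)

lemma inner_eq_dot (x y : EuclideanSpace ℝ (Fin d)) :
    ⟪x, y⟫ = dotProduct (ofE x) (ofE y) := by
  simp [PiLp.inner_apply, dotProduct, RCLike.inner_apply, mul_comm, ofE]

lemma norm_mvL_sq (M : Matrix (Fin d) (Fin d) ℝ) (x : EuclideanSpace ℝ (Fin d)) :
    ‖mvL M x‖ ^ 2 = ⟪mvL (Mᴴ * M) x, x⟫ := by
  rw [← real_inner_self_eq_norm_sq, inner_eq_dot, inner_eq_dot]
  have hct : (Mᴴ : Matrix (Fin d) (Fin d) ℝ) = Mᵀ :=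
    Matrix.conjTranspose_eq_transpose_of_trivial M
  show dotProduct (M.mulVec (ofE x)) (M.mulVec (ofE x))
      = dotProduct ((Mᴴ * M).mulVec (ofE x)) (ofE x)
  rw [hct, ← Matrix.mulVec_mulVec, Matrix.mulVec_transpose, ← Matrix.dotProduct_mulVec]

/-- The orthonormal eigenbasis of `MᴴM`. -/
noncomputable def bas (M : Matrix (Fin d) (Fin d) ℝ) :
    OrthonormalBasis (Fin d) ℝ (EuclideanSpace ℝ (Fin d)) :=
  (hermTM M).eigenvectorBasis

lemma mvL_bas (M : Matrix (Fin d) (Fin d) ℝ) (i : Fin d) :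
    mvL (Mᴴ * M) (bas M i) = eig M i • (bas M i) := by
  exact congrArg toE ((hermTM M).mulVec_eigenvectorBasis i)

lemma norm_mvL_bas (M : Matrix (Fin d) (Fin d) ℝ) (i : Fin d) :
    ‖mvL M (bas M i)‖ = Real.sqrt (eig M i) := by
  have h1 : ‖mvL M (bas M i)‖ ^ 2 = eig M i := by
    rw [norm_mvL_sq, mvL_bas]
    have h3 : ‖(bas M i : EuclideanSpace ℝ (Fin d))‖ = 1 := (bas M).orthonormal.1 i
    rw [real_inner_smul_left, real_inner_self_eq_norm_sq, h3]
    ring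
  rw [← h1, Real.sqrt_sq (norm_nonneg _)]

lemma sval_le_of_bound (M : Matrix (Fin d) (Fin d) ℝ) {C : ℝ} (hC : 0 ≤ C)
    (h : ∀ z : EuclideanSpace ℝ (Fin d), ‖mvL M z‖ ≤ C * ‖z‖)
    (j : ℕ) : sval M j ≤ C := by
  rcases sval_mem_or_zero M j with hm | hz
  · obtain ⟨i, hi⟩ := mem_svList.mp hm
    rw [← hi, ← norm_mvL_bas M i]
    have := h (bas M i)
    rwa [(bas M).orthonormal.1 i, mul_one] at this
  · rw [hz]; exact hC

lemma le_sval_of_bound (M : Matrix (Fin d) (Fin d) ℝ) {m : ℝ} {j : ℕ} (h1 : 1 ≤ j) (h2 : j ≤ d)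
    (h : ∀ z : EuclideanSpace ℝ (Fin d), m * ‖z‖ ≤ ‖mvL M z‖) :
    m ≤ sval M j := by
  have hmem : sval M j ∈ svList M := by
    rw [sval_eq_getElem M h1 h2]; exact List.getElem_mem _
  obtain ⟨i, hi⟩ := mem_svList.mp hmem
  rw [← hi, ← norm_mvL_bas M i]
  have := h (bas M i)
  rwa [(bas M).orthonormal.1 i, mul_one] at this

lemma repr_eq_zero_of_notMem {b : OrthonormalBasis (Fin d) ℝ (EuclideanSpace ℝ (Fin d))}
    {S : Finset (Fin d)} {x : EuclideanSpace ℝ (Fin d)}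
    (hx : x ∈ Submodule.span ℝ (b '' (S : Set (Fin d)))) {i : Fin d} (hi : i ∉ S) :
    b.repr x i = 0 := by
  induction hx using Submodule.span_induction with
  | mem z hz =>
    obtain ⟨k, hk, rfl⟩ := hz
    rw [b.repr_self]
    have hik : ¬ (i = k) := fun h => hi (h ▸ hk)
    simp [EuclideanSpace.single_apply, hik]
  | zero => simp
  | add y z _ _ hy hz => simp [map_add, hy, hz]
  | smul c y _ hy => simp [_root_.map_smul, hy]

lemma quad_expansion (M : Matrix (Fin d) (Fin d) ℝ) (x : EuclideanSpace ℝ (Fin d)) :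
    ⟪mvL (Mᴴ * M) x, x⟫ = ∑ i, eig M i * ((bas M).repr x i) ^ 2 := by
  set b := bas M with hb
  have hx : (∑ i, b.repr x i • (b i : EuclideanSpace ℝ (Fin d))) = x := b.sum_repr x
  have hmv : mvL (Mᴴ * M) x
      = ∑ i, b.repr x i • (eig M i • (b i : EuclideanSpace ℝ (Fin d))) := by
    conv_lhs => rw [← hx]
    rw [map_sum]
    congr 1
    ext i
    rw [LinearMap.map_smul, mvL_bas]
  calc ⟪mvL (Mᴴ * M) x, x⟫
      = ⟪(∑ i, b.repr x i • (eig M i • (b i : EuclideanSpace ℝ (Fin d)))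
          : EuclideanSpace ℝ (Fin d)), x⟫ := by rw [hmv]
    _ = ∑ i, b.repr x i * (eig M i * ⟪(b i : EuclideanSpace ℝ (Fin d)), x⟫) := by
        rw [sum_inner]
        congr 1; ext i
        rw [real_inner_smul_left, real_inner_smul_left]
    _ = ∑ i, eig M i * (b.repr x i) ^ 2 := by
        congr 1; ext i
        rw [← b.repr_apply_apply x i]
        ring

lemma norm_sq_expansion {b : OrthonormalBasis (Fin d) ℝ (EuclideanSpace ℝ (Fin d))}
    (x : EuclideanSpace ℝ (Fin d)) : ‖x‖ ^ 2 = ∑ i, (b.repr x i) ^ 2 := by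
  rw [← real_inner_self_eq_norm_sq]
  conv_lhs => rw [← b.sum_repr x]
  rw [sum_inner]
  congr 1; ext i
  rw [real_inner_smul_left, b.sum_repr x, ← b.repr_apply_apply x i]
  ring

/-! ### Courant–Fischer style lemmas -/

lemma span_orthonormal_finrank (b : OrthonormalBasis (Fin d) ℝ (EuclideanSpace ℝ (Fin d)))
    (S : Finset (Fin d)) :
    Module.finrank ℝ (Submodule.span ℝ (b '' (S : Set (Fin d)))) = S.card := by
  have hli : LinearIndependent ℝ (fun i : {x // x ∈ S} => (b i : EuclideanSpace ℝ (Fin d))) :=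
    b.orthonormal.linearIndependent.comp _ Subtype.val_injective
  have h := finrank_span_eq_card hli
  have hset : (Set.range fun i : {x // x ∈ S} => (b i : EuclideanSpace ℝ (Fin d)))
      = (b : Fin d → EuclideanSpace ℝ (Fin d)) '' (S : Set (Fin d)) := by
    rw [show (fun i : {x // x ∈ S} => (b i : EuclideanSpace ℝ (Fin d)))
        = (b : Fin d → EuclideanSpace ℝ (Fin d)) ∘ Subtype.val from rfl,
      Set.range_comp, Subtype.range_coe]
  rw [hset] at h
  rw [h, Fintype.card_coe]

lemma quad_le_on_span (M : Matrix (Fin d) (Fin d) ℝ) (S : Finset (Fin d)) {t : ℝ} (ht : 0 ≤ t)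
    (hS : ∀ i ∈ S, Real.sqrt (eig M i) ≤ t) {x : EuclideanSpace ℝ (Fin d)}
    (hx : x ∈ Submodule.span ℝ (bas M '' (S : Set (Fin d)))) :
    ‖mvL M x‖ ≤ t * ‖x‖ := by
  have hsq : ‖mvL M x‖ ^ 2 ≤ (t * ‖x‖) ^ 2 := by
    rw [norm_mvL_sq, quad_expansion, mul_pow, norm_sq_expansion (b := bas M) x,
      Finset.mul_sum]
    apply Finset.sum_le_sum
    intro i _
    rcases Finset.decidableMem i S with hi | hi
    · have : (bas M).repr x i = 0 := repr_eq_zero_of_notMem hx hi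
      rw [this]
      simp
    · have h1 : eig M i ≤ t ^ 2 := by
        have := pow_le_pow_left₀ (Real.sqrt_nonneg _) (hS i hi) 2
        rwa [Real.sq_sqrt (eig_nonneg M i)] at this
      exact mul_le_mul_of_nonneg_right h1 (sq_nonneg _)
  have h2 := Real.sqrt_le_sqrt hsq
  rwa [Real.sqrt_sq (norm_nonneg _), Real.sqrt_sq (by positivity)] at h2

lemma quad_ge_on_span (M : Matrix (Fin d) (Fin d) ℝ) (S : Finset (Fin d)) {t : ℝ} (ht : 0 ≤ t)
    (hS : ∀ i ∈ S, t ≤ Real.sqrt (eig M i)) {x : EuclideanSpace ℝ (Fin d)}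
    (hx : x ∈ Submodule.span ℝ (bas M '' (S : Set (Fin d)))) :
    t * ‖x‖ ≤ ‖mvL M x‖ := by
  have hsq : (t * ‖x‖) ^ 2 ≤ ‖mvL M x‖ ^ 2 := by
    rw [norm_mvL_sq, quad_expansion, mul_pow, norm_sq_expansion (b := bas M) x,
      Finset.mul_sum]
    apply Finset.sum_le_sum
    intro i _
    rcases Finset.decidableMem i S with hi | hi
    · have : (bas M).repr x i = 0 := repr_eq_zero_of_notMem hx hi
      rw [this]
      simp
    · have h1 : t ^ 2 ≤ eig M i := by
        have := pow_le_pow_left₀ ht (hS i hi) 2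
        rwa [Real.sq_sqrt (eig_nonneg M i)] at this
      exact mul_le_mul_of_nonneg_right h1 (sq_nonneg _)
  have h2 := Real.sqrt_le_sqrt hsq
  rwa [Real.sqrt_sq (norm_nonneg _), Real.sqrt_sq (by positivity)] at h2

lemma finrank_euc : Module.finrank ℝ (EuclideanSpace ℝ (Fin d)) = d := by
  simp [finrank_euclideanSpace]

/-- One direction of Courant–Fischer: every `j`-dimensional subspace contains a nonzero
vector on which `M` contracts by at least `sval M j`. -/
lemma cf_exists (M : Matrix (Fin d) (Fin d) ℝ) {j : ℕ} (h1 : 1 ≤ j) (hjd : j ≤ d)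
    (W : Submodule ℝ (EuclideanSpace ℝ (Fin d))) (hW : Module.finrank ℝ W = j) :
    ∃ x : EuclideanSpace ℝ (Fin d), x ∈ W ∧ x ≠ 0 ∧ ‖mvL M x‖ ≤ sval M j * ‖x‖ := by
  classical
  set t := sval M j with htdef
  set S := Finset.univ.filter (fun i => Real.sqrt (eig M i) ≤ t) with hSdef
  have hcard : d - j + 1 ≤ S.card := card_filter_le M h1 hjd
  set V := Submodule.span ℝ (bas M '' (S : Set (Fin d))) with hVdef
  have hVrank : Module.finrank ℝ V = S.card := span_orthonormal_finrank (bas M) S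
  have hsup : Module.finrank ℝ (W ⊔ V : Submodule ℝ (EuclideanSpace ℝ (Fin d))) ≤ d := by
    exact (Submodule.finrank_le _).trans (le_of_eq finrank_euc)
  have heq := Submodule.finrank_sup_add_finrank_inf_eq W V
  have hpos : 0 < Module.finrank ℝ (W ⊓ V : Submodule ℝ (EuclideanSpace ℝ (Fin d))) := by
    omega
  have hbot : (W ⊓ V : Submodule ℝ (EuclideanSpace ℝ (Fin d))) ≠ ⊥ := by
    intro hcontra
    rw [hcontra, finrank_bot] at hpos
    omega
  obtain ⟨x, hxmem, hxne⟩ := Submodule.ne_bot_iff _ |>.mp hbot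
  refine ⟨x, hxmem.1, hxne, ?_⟩
  exact quad_le_on_span M S (sval_nonneg M j) (fun i hi => by
    simpa [hSdef] using (Finset.mem_filter.mp hi).2) hxmem.2

/-- Key singular value inequality: `σ_j(QW) ≥ σ_j(Q) · m` when `‖Wz‖ ≥ m‖z‖`. -/
lemma sval_mul_ge (Q W : Matrix (Fin d) (Fin d) ℝ) {m : ℝ} (hm : 0 < m)
    (hW : ∀ z : EuclideanSpace ℝ (Fin d), m * ‖z‖ ≤ ‖mvL W z‖)
    {j : ℕ} (h1 : 1 ≤ j) (hjd : j ≤ d) :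
    sval Q j * m ≤ sval (Q * W) j := by
  classical
  set t := sval Q j with htdef
  have ht0 : 0 ≤ t := sval_nonneg Q j
  set T := Finset.univ.filter (fun i => t ≤ Real.sqrt (eig Q i)) with hTdef
  have hTcard : j ≤ T.card := card_filter_ge Q h1 hjd
  obtain ⟨T', hT'sub, hT'card⟩ := Finset.exists_subset_card_eq hTcard
  set V' := Submodule.span ℝ (bas Q '' (T' : Set (Fin d))) with hV'def
  have hV'rank : Module.finrank ℝ V' = j := by
    rw [hV'def, span_orthonormal_finrank (bas Q) T', hT'card]
  -- W acts bijectively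
  have hinj : Function.Injective (mvL W) := by
    rw [← LinearMap.ker_eq_bot]
    apply (Submodule.eq_bot_iff _).mpr
    intro z hz
    have h0 : mvL W z = 0 := hz
    have := hW z
    rw [h0, norm_zero] at this
    have : ‖z‖ ≤ 0 := by nlinarith [norm_nonneg z]
    exact norm_le_zero_iff.mp this
  have hbij : Function.Bijective (mvL W) :=
    ⟨hinj, (LinearMap.injective_iff_surjective).mp hinj⟩
  let e : EuclideanSpace ℝ (Fin d) ≃ₗ[ℝ] EuclideanSpace ℝ (Fin d) :=
    LinearEquiv.ofBijective (mvL W) hbij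
  have hWsub : Module.finrank ℝ (V'.comap (mvL W)) = j := by
    have hcomap : V'.comap (e : EuclideanSpace ℝ (Fin d) →ₗ[ℝ] EuclideanSpace ℝ (Fin d))
        = V'.map (e.symm : EuclideanSpace ℝ (Fin d) →ₗ[ℝ] EuclideanSpace ℝ (Fin d)) :=
      Submodule.comap_equiv_eq_map_symm e V'
    have : V'.comap (mvL W) = V'.map (e.symm : EuclideanSpace ℝ (Fin d) →ₗ[ℝ]
        EuclideanSpace ℝ (Fin d)) := hcomap
    rw [this, LinearEquiv.finrank_map_eq, hV'rank]
  obtain ⟨x, hxmem, hxne, hxle⟩ := cf_exists (Q * W) h1 hjd (V'.comap (mvL W)) hWsub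
  have hWx : mvL W x ∈ V' := hxmem
  have hlow : t * ‖mvL W x‖ ≤ ‖mvL Q (mvL W x)‖ :=
    quad_ge_on_span Q T' ht0 (fun i hi => by
      have := hT'sub hi
      simpa [hTdef] using (Finset.mem_filter.mp this).2) hWx
  have hchain : t * (m * ‖x‖) ≤ sval (Q * W) j * ‖x‖ := by
    calc t * (m * ‖x‖) ≤ t * ‖mvL W x‖ := by
          exact mul_le_mul_of_nonneg_left (hW x) ht0
      _ ≤ ‖mvL Q (mvL W x)‖ := hlow
      _ = ‖mvL (Q * W) x‖ := by rw [← mvL_mul]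
      _ ≤ sval (Q * W) j * ‖x‖ := hxle
  have hxpos : 0 < ‖x‖ := norm_pos_iff.mpr hxne
  have hchain' : (t * m) * ‖x‖ ≤ sval (Q * W) j * ‖x‖ := by
    rw [mul_assoc]; exact hchain
  exact le_of_mul_le_mul_right hchain' hxpos

/-! ### svf level lemmas -/


lemma svf_def (s : ℝ) (M : Matrix (Fin d) (Fin d) ℝ) :
    svf s M = if s ≤ (d : ℝ) then
      (∏ j ∈ Finset.Icc 1 ⌊s⌋₊, sval M j) * sval M ⌈s⌉₊ ^ (s - (⌊s⌋₊ : ℝ))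
    else |M.det| ^ (s / (d : ℝ)) := by
  rw [svf, Fintype.card_fin]

lemma svf_nonneg (s : ℝ) (M : Matrix (Fin d) (Fin d) ℝ) : 0 ≤ svf s M := by
  rw [svf_def]
  split
  · exact mul_nonneg (Finset.prod_nonneg fun j _ => sval_nonneg M j)
      (Real.rpow_nonneg (sval_nonneg M _) _)
  · exact Real.rpow_nonneg (abs_nonneg _) _

lemma rpow_split {C s : ℝ} (hC : 0 < C) : C ^ s = C ^ (⌊s⌋₊ : ℕ) * C ^ (s - (⌊s⌋₊ : ℝ)) := by
  rw [← Real.rpow_natCast C ⌊s⌋₊, ← Real.rpow_add hC, add_sub_cancel]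

lemma svf_le_pow {M : Matrix (Fin d) (Fin d) ℝ} {C s : ℝ} (hC : 0 < C)
    (hble : ∀ j, sval M j ≤ C) (hs : 0 < s) (hsd : s ≤ (d : ℝ)) :
    svf s M ≤ C ^ s := by
  rw [svf_def, if_pos hsd, rpow_split hC]
  have h1 : (∏ j ∈ Finset.Icc 1 ⌊s⌋₊, sval M j) ≤ C ^ (⌊s⌋₊ : ℕ) := by
    calc (∏ j ∈ Finset.Icc 1 ⌊s⌋₊, sval M j) ≤ ∏ j ∈ Finset.Icc 1 ⌊s⌋₊, C :=
          Finset.prod_le_prod (fun j _ => sval_nonneg M j) (fun j _ => hble j)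
      _ = C ^ (⌊s⌋₊ : ℕ) := by rw [Finset.prod_const, Nat.card_Icc, Nat.add_sub_cancel]
  have h2 : sval M ⌈s⌉₊ ^ (s - (⌊s⌋₊ : ℝ)) ≤ C ^ (s - (⌊s⌋₊ : ℝ)) :=
    Real.rpow_le_rpow (sval_nonneg M _) (hble _) (by
      have := Nat.floor_le hs.le
      linarith)
  exact mul_le_mul h1 h2 (Real.rpow_nonneg (sval_nonneg M _) _) (pow_nonneg hC.le _)

lemma pow_le_svf {M : Matrix (Fin d) (Fin d) ℝ} {c s : ℝ} (hc : 0 < c)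
    (h : ∀ j, 1 ≤ j → j ≤ d → c ≤ sval M j) (hs : 0 < s) (hsd : s ≤ (d : ℝ)) :
    c ^ s ≤ svf s M := by
  rw [svf_def, if_pos hsd, rpow_split hc]
  have hfl : ⌊s⌋₊ ≤ d := by
    have := Nat.floor_le_floor hsd
    rwa [Nat.floor_natCast] at this
  have hcl : 1 ≤ ⌈s⌉₊ := Nat.one_le_ceil_iff.mpr hs
  have hcd : ⌈s⌉₊ ≤ d := Nat.ceil_le.mpr hsd
  have h1 : (c : ℝ) ^ (⌊s⌋₊ : ℕ) ≤ ∏ j ∈ Finset.Icc 1 ⌊s⌋₊, sval M j := by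
    calc (c : ℝ) ^ (⌊s⌋₊ : ℕ) = ∏ j ∈ Finset.Icc 1 ⌊s⌋₊, c := by
          rw [Finset.prod_const, Nat.card_Icc, Nat.add_sub_cancel]
      _ ≤ ∏ j ∈ Finset.Icc 1 ⌊s⌋₊, sval M j :=
          Finset.prod_le_prod (fun j _ => hc.le) (fun j hj => by
            obtain ⟨hj1, hj2⟩ := Finset.mem_Icc.mp hj
            exact h j hj1 (hj2.trans hfl))
  have h2 : c ^ (s - (⌊s⌋₊ : ℝ)) ≤ sval M ⌈s⌉₊ ^ (s - (⌊s⌋₊ : ℝ)) :=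
    Real.rpow_le_rpow hc.le (h _ hcl hcd) (by
      have := Nat.floor_le hs.le
      linarith)
  exact mul_le_mul h1 h2 (Real.rpow_nonneg hc.le _) (Finset.prod_nonneg fun j _ =>
    sval_nonneg M j)

lemma svf_mul_ge (Q W : Matrix (Fin d) (Fin d) ℝ) {m s : ℝ} (hm : 0 < m)
    (hW : ∀ z : EuclideanSpace ℝ (Fin d), m * ‖z‖ ≤ ‖mvL W z‖)
    (hs : 0 < s) (hsd : s ≤ (d : ℝ)) :
    svf s Q * m ^ s ≤ svf s (Q * W) := by
  have hfl : ⌊s⌋₊ ≤ d := by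
    have := Nat.floor_le_floor hsd
    rwa [Nat.floor_natCast] at this
  have hcl : 1 ≤ ⌈s⌉₊ := Nat.one_le_ceil_iff.mpr hs
  have hcd : ⌈s⌉₊ ≤ d := Nat.ceil_le.mpr hsd
  have key : ∀ j, 1 ≤ j → j ≤ d → sval Q j * m ≤ sval (Q * W) j := fun j h1 h2 =>
    sval_mul_ge Q W hm hW h1 h2
  rw [svf_def, if_pos hsd, svf_def, if_pos hsd]
  have h1 : (∏ j ∈ Finset.Icc 1 ⌊s⌋₊, sval Q j) * m ^ (⌊s⌋₊ : ℕ)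
      ≤ ∏ j ∈ Finset.Icc 1 ⌊s⌋₊, sval (Q * W) j := by
    calc (∏ j ∈ Finset.Icc 1 ⌊s⌋₊, sval Q j) * m ^ (⌊s⌋₊ : ℕ)
        = ∏ j ∈ Finset.Icc 1 ⌊s⌋₊, (sval Q j * m) := by
          rw [Finset.prod_mul_distrib, Finset.prod_const, Nat.card_Icc, Nat.add_sub_cancel]
      _ ≤ ∏ j ∈ Finset.Icc 1 ⌊s⌋₊, sval (Q * W) j :=
          Finset.prod_le_prod (fun j _ => mul_nonneg (sval_nonneg Q j) hm.le)
            (fun j hj => by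
              obtain ⟨hj1, hj2⟩ := Finset.mem_Icc.mp hj
              exact key j hj1 (hj2.trans hfl))
  have h2 : (sval Q ⌈s⌉₊ * m) ^ (s - (⌊s⌋₊ : ℝ))
      ≤ sval (Q * W) ⌈s⌉₊ ^ (s - (⌊s⌋₊ : ℝ)) :=
    Real.rpow_le_rpow (mul_nonneg (sval_nonneg Q _) hm.le) (key _ hcl hcd) (by
      have := Nat.floor_le hs.le
      linarith)
  have h2' : sval Q ⌈s⌉₊ ^ (s - (⌊s⌋₊ : ℝ)) * m ^ (s - (⌊s⌋₊ : ℝ))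
      = (sval Q ⌈s⌉₊ * m) ^ (s - (⌊s⌋₊ : ℝ)) :=
    (Real.mul_rpow (sval_nonneg Q _) hm.le).symm
  calc (∏ j ∈ Finset.Icc 1 ⌊s⌋₊, sval Q j) * sval Q ⌈s⌉₊ ^ (s - (⌊s⌋₊ : ℝ)) * m ^ s
      = ((∏ j ∈ Finset.Icc 1 ⌊s⌋₊, sval Q j) * m ^ (⌊s⌋₊ : ℕ))
        * ((sval Q ⌈s⌉₊ * m) ^ (s - (⌊s⌋₊ : ℝ))) := by
        rw [rpow_split hm, ← h2']
        ring
    _ ≤ (∏ j ∈ Finset.Icc 1 ⌊s⌋₊, sval (Q * W) j)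
        * sval (Q * W) ⌈s⌉₊ ^ (s - (⌊s⌋₊ : ℝ)) :=
        mul_le_mul h1 h2 (Real.rpow_nonneg (mul_nonneg (sval_nonneg Q _) hm.le) _)
          (Finset.prod_nonneg fun j _ => sval_nonneg _ j)

lemma svf_pos_of_rank (Q : Matrix (Fin d) (Fin d) ℝ) {s : ℝ} (hs : 0 < s)
    (hsr : s ≤ (Q.rank : ℝ)) : 0 < svf s Q := by
  have hsd : s ≤ (d : ℝ) := hsr.trans (Nat.cast_le.mpr (rank_le_d Q))
  rw [svf_def, if_pos hsd]
  apply mul_pos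
  · apply Finset.prod_pos
    intro j hj
    obtain ⟨hj1, hj2⟩ := Finset.mem_Icc.mp hj
    apply sval_pos_of_le_rank Q hj1
    have : ⌊s⌋₊ ≤ Q.rank := by
      have := Nat.floor_le_floor hsr
      rwa [Nat.floor_natCast] at this
    omega
  · apply Real.rpow_pos_of_pos
    exact sval_pos_of_le_rank Q (Nat.one_le_ceil_iff.mpr hs) (Nat.ceil_le.mpr hsr)

lemma svf_zero_of_rank_lt (M : Matrix (Fin d) (Fin d) ℝ) {s : ℝ} (hr : (M.rank : ℝ) < s)
    (hsd : s ≤ (d : ℝ)) : svf s M = 0 := by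
  have hs : 0 < s := lt_of_le_of_lt (Nat.cast_nonneg _) hr
  rw [svf_def, if_pos hsd]
  by_cases hint : (⌊s⌋₊ : ℝ) = s
  · have hrank : M.rank < ⌊s⌋₊ := by
      have : (M.rank : ℝ) < (⌊s⌋₊ : ℝ) := by rw [hint]; exact hr
      exact_mod_cast this
    have hmem : ⌊s⌋₊ ∈ Finset.Icc 1 ⌊s⌋₊ := Finset.mem_Icc.mpr ⟨by omega, le_rfl⟩
    rw [Finset.prod_eq_zero hmem (sval_eq_zero_of_rank_lt M (by omega)), zero_mul]
  · have hflt : (⌊s⌋₊ : ℝ) < s := lt_of_le_of_ne (Nat.floor_le hs.le) hint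
    have hceil : M.rank < ⌈s⌉₊ := by
      have h1 : (M.rank : ℝ) < (⌈s⌉₊ : ℝ) := hr.trans_le (Nat.le_ceil s)
      exact_mod_cast h1
    rw [sval_eq_zero_of_rank_lt M hceil, Real.zero_rpow (by linarith), mul_zero]

lemma svf_of_card_lt (M : Matrix (Fin d) (Fin d) ℝ) {s : ℝ} (h : (d : ℝ) < s) :
    svf s M = |M.det| ^ (s / (d : ℝ)) := by
  rw [svf_def, if_neg (not_le.mpr h)]

/-! ### orthogonal matrices and the similarity structure -/


lemma wordProd_zero {N : ℕ} (A : Fin N → Matrix (Fin d) (Fin d) ℝ) (i : Fin 0 → Fin N) :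
    wordProd A i = 1 := by
  rw [wordProd, List.ofFn_zero, List.prod_nil]

lemma wordProd_succ {N n : ℕ} (A : Fin N → Matrix (Fin d) (Fin d) ℝ)
    (i : Fin (n + 1) → Fin N) :
    wordProd A i = A (i 0) * wordProd A (Fin.tail i) := by
  rw [wordProd, List.ofFn_succ, List.prod_cons]
  rfl

lemma mvL_smul (c : ℝ) (M : Matrix (Fin d) (Fin d) ℝ) (x : EuclideanSpace ℝ (Fin d)) :
    mvL (c • M) x = c • mvL M x := by
  show toE ((c • M).mulVec (ofE x)) = c • toE (M.mulVec (ofE x))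
  rw [Matrix.smul_mulVec]
  rfl

lemma mvL_one (x : EuclideanSpace ℝ (Fin d)) : mvL (1 : Matrix (Fin d) (Fin d) ℝ) x = x := by
  show toE ((1 : Matrix (Fin d) (Fin d) ℝ).mulVec (ofE x)) = x
  rw [Matrix.one_mulVec]
  rfl

lemma ortho_norm {O : Matrix (Fin d) (Fin d) ℝ} (hO : Oᵀ * O = 1)
    (z : EuclideanSpace ℝ (Fin d)) : ‖mvL O z‖ = ‖z‖ := by
  have h1 : ‖mvL O z‖ ^ 2 = ‖z‖ ^ 2 := by
    rw [norm_mvL_sq]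
    have hOc : (Oᴴ : Matrix (Fin d) (Fin d) ℝ) * O = 1 := by
      rw [Matrix.conjTranspose_eq_transpose_of_trivial]; exact hO
    rw [hOc, mvL_one, real_inner_self_eq_norm_sq]
  have := Real.sqrt_le_sqrt h1.le
  have h2 := Real.sqrt_le_sqrt h1.ge
  rw [Real.sqrt_sq (norm_nonneg _), Real.sqrt_sq (norm_nonneg _)] at this h2
  exact le_antisymm this h2

lemma ortho_mul {O O' : Matrix (Fin d) (Fin d) ℝ} (hO : Oᵀ * O = 1) (hO' : O'ᵀ * O' = 1) :
    (O * O')ᵀ * (O * O') = 1 := by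
  rw [Matrix.transpose_mul]
  calc O'ᵀ * Oᵀ * (O * O') = O'ᵀ * (Oᵀ * O) * O' := by
        rw [Matrix.mul_assoc, Matrix.mul_assoc, Matrix.mul_assoc]
    _ = O'ᵀ * O' := by rw [hO, Matrix.mul_one]
    _ = 1 := hO'

lemma ortho_abs_det {O : Matrix (Fin d) (Fin d) ℝ} (hO : Oᵀ * O = 1) : |O.det| = 1 := by
  have h1 : O.det * O.det = 1 := by
    have := congrArg Matrix.det hO
    rwa [Matrix.det_mul, Matrix.det_transpose, Matrix.det_one] at this
  calc |O.det| = Real.sqrt (O.det ^ 2) := (Real.sqrt_sq_eq_abs _).symm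
    _ = Real.sqrt 1 := by rw [sq, h1]
    _ = 1 := Real.sqrt_one

/-- Word structure: products of similarities are scaled orthogonal conjugates. -/
lemma word_structure {N : ℕ} (A : Fin N → Matrix (Fin d) (Fin d) ℝ)
    (P : Matrix (Fin d) (Fin d) ℝ) (r : Fin N → ℝ)
    (hdec : ∀ a, ∃ O : Matrix (Fin d) (Fin d) ℝ, Oᵀ * O = 1 ∧ P * A a = r a • (O * P)) :
    ∀ {n : ℕ} (i : Fin n → Fin N), ∃ O : Matrix (Fin d) (Fin d) ℝ,
      Oᵀ * O = 1 ∧ P * wordProd A i = (∏ j, r (i j)) • (O * P) := by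
  intro n
  induction n with
  | zero =>
    intro i
    refine ⟨1, by simp, ?_⟩
    rw [wordProd_zero]
    simp
  | succ n ih =>
    intro i
    obtain ⟨O₁, hO₁, h1⟩ := hdec (i 0)
    obtain ⟨O₂, hO₂, h2⟩ := ih (Fin.tail i)
    refine ⟨O₁ * O₂, ortho_mul hO₁ hO₂, ?_⟩
    have hprod : (∏ j, r (i j)) = r (i 0) * ∏ j, r (Fin.tail i j) := by
      rw [Fin.prod_univ_succ]
      rfl
    calc P * wordProd A i = P * A (i 0) * wordProd A (Fin.tail i) := by
          rw [wordProd_succ, Matrix.mul_assoc]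
      _ = (r (i 0) • (O₁ * P)) * wordProd A (Fin.tail i) := by rw [h1]
      _ = r (i 0) • (O₁ * (P * wordProd A (Fin.tail i))) := by
          rw [Matrix.smul_mul, Matrix.mul_assoc]
      _ = r (i 0) • (O₁ * ((∏ j, r (Fin.tail i j)) • (O₂ * P))) := by rw [h2]
      _ = (∏ j, r (i j)) • (O₁ * O₂ * P) := by
          rw [Matrix.mul_smul, smul_smul, hprod, Matrix.mul_assoc]

/-- norm bounds for a scaled-orthogonal-conjugate matrix. -/
lemma word_norm_bounds {W P O : Matrix (Fin d) (Fin d) ℝ} {ρ kP kI : ℝ}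
    (hρ : 0 < ρ) (hkP0 : 0 ≤ kP) (hkI0 : 0 ≤ kI)
    (hO : Oᵀ * O = 1) (hW : P * W = ρ • (O * P)) (hPdet : IsUnit P.det)
    (hkP : ∀ z : EuclideanSpace ℝ (Fin d), ‖mvL P z‖ ≤ kP * ‖z‖)
    (hkI : ∀ z : EuclideanSpace ℝ (Fin d), ‖mvL P⁻¹ z‖ ≤ kI * ‖z‖) :
    ∀ z : EuclideanSpace ℝ (Fin d),
      ρ * ‖z‖ ≤ (kP * kI) * ‖mvL W z‖ ∧ ‖mvL W z‖ ≤ ρ * (kP * kI) * ‖z‖ := by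
  intro z
  have hPW : ∀ w : EuclideanSpace ℝ (Fin d), ‖mvL P (mvL W w)‖ = ρ * ‖mvL P w‖ := by
    intro w
    have h1 : mvL P (mvL W w) = ρ • mvL O (mvL P w) := by
      rw [← mvL_mul, hW, mvL_smul, mvL_mul]
    rw [h1, norm_smul, Real.norm_eq_abs, abs_of_pos hρ, ortho_norm hO]
  have hrec : ∀ w : EuclideanSpace ℝ (Fin d), ‖w‖ ≤ kI * ‖mvL P w‖ := by
    intro w
    have h1 : mvL P⁻¹ (mvL P w) = w := by
      rw [← mvL_mul, Matrix.nonsing_inv_mul _ hPdet, mvL_one]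
    calc ‖w‖ = ‖mvL P⁻¹ (mvL P w)‖ := by rw [h1]
      _ ≤ kI * ‖mvL P w‖ := hkI _
  constructor
  · calc ρ * ‖z‖ ≤ ρ * (kI * ‖mvL P z‖) :=
          mul_le_mul_of_nonneg_left (hrec z) hρ.le
      _ = kI * (ρ * ‖mvL P z‖) := by ring
      _ = kI * ‖mvL P (mvL W z)‖ := by rw [hPW z]
      _ ≤ kI * (kP * ‖mvL W z‖) := mul_le_mul_of_nonneg_left (hkP _) hkI0
      _ = (kP * kI) * ‖mvL W z‖ := by ring
  · calc ‖mvL W z‖ ≤ kI * ‖mvL P (mvL W z)‖ := hrec _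
      _ = kI * (ρ * ‖mvL P z‖) := by rw [hPW z]
      _ ≤ kI * (ρ * (kP * ‖z‖)) := by
          exact mul_le_mul_of_nonneg_left
            (mul_le_mul_of_nonneg_left (hkP z) hρ.le) hkI0
      _ = ρ * (kP * kI) * ‖z‖ := by ring

/-! ### seminorm and summability helpers -/

lemma exists_opBound (M : Matrix (Fin d) (Fin d) ℝ) :
    ∃ C : ℝ, 0 ≤ C ∧ ∀ z : EuclideanSpace ℝ (Fin d), ‖mvL M z‖ ≤ C * ‖z‖ := by
  set f := LinearMap.toContinuousLinearMap (mvL M) with hf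
  refine ⟨‖f‖, norm_nonneg f, fun z => ?_⟩
  have h := f.le_opNorm z
  have hfz : f z = mvL M z := rfl
  rwa [hfz] at h

lemma seminorm_sum_le (ν : Seminorm ℝ (Fin d → ℝ)) {ι : Type*} [DecidableEq ι]
    (s : Finset ι) (f : ι → (Fin d → ℝ)) :
    ν (∑ i ∈ s, f i) ≤ ∑ i ∈ s, ν (f i) := by
  classical
  induction s using Finset.induction with
  | empty => simp
  | insert _ _ h ih =>
    rw [Finset.sum_insert h, Finset.sum_insert h]
    exact le_trans (map_add_le_add ν _ _) (by linarith)

lemma seminorm_upper (ν : Seminorm ℝ (Fin d → ℝ)) :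
    ∃ K : ℝ, 0 ≤ K ∧ ∀ x : EuclideanSpace ℝ (Fin d), ν (ofE x) ≤ K * ‖x‖ := by
  refine ⟨∑ i, ν ((Pi.single (M := fun _ : Fin d => ℝ) i 1)), Finset.sum_nonneg fun i _ => apply_nonneg ν _,
    fun x => ?_⟩
  have hx : ofE x = ∑ i, Pi.single i (ofE x i) := (Finset.univ_sum_single (ofE x)).symm
  have hcoord : ∀ i, |ofE x i| ≤ ‖x‖ := by
    intro i
    have h1 : @inner ℝ _ _ (EuclideanSpace.single i (1:ℝ)) x = ofE x i := by
      rw [EuclideanSpace.inner_single_left]; simp; rfl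
    calc |ofE x i| = |@inner ℝ _ _ (EuclideanSpace.single i (1:ℝ)) x| := by rw [h1]
      _ ≤ ‖EuclideanSpace.single i (1:ℝ)‖ * ‖x‖ := abs_real_inner_le_norm _ _
      _ = ‖x‖ := by rw [EuclideanSpace.norm_single]; simp
  calc ν (ofE x) = ν (∑ i, Pi.single i (ofE x i)) := by rw [← hx]
    _ ≤ ∑ i, ν (Pi.single i (ofE x i)) := seminorm_sum_le ν _ _
    _ = ∑ i, |ofE x i| * ν ((Pi.single (M := fun _ : Fin d => ℝ) i 1)) := by
        refine Finset.sum_congr rfl fun i _ => ?_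
        have : Pi.single i (ofE x i)
            = (ofE x i) • (Pi.single (M := fun _ : Fin d => ℝ) i 1) := by
          funext j
          by_cases hji : j = i <;> simp [Pi.single_apply, hji]
        rw [this, map_smul_eq_mul]
        rfl
    _ ≤ ∑ i, ‖x‖ * ν ((Pi.single (M := fun _ : Fin d => ℝ) i 1)) := Finset.sum_le_sum fun i _ =>
        mul_le_mul_of_nonneg_right (hcoord i) (apply_nonneg ν _)
    _ = (∑ i, ν ((Pi.single (M := fun _ : Fin d => ℝ) i 1))) * ‖x‖ := by
        rw [← Finset.mul_sum, mul_comm]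

lemma seminorm_lower (ν : Seminorm ℝ (Fin d → ℝ))
    (hpos : ∀ y : Fin d → ℝ, y ≠ 0 → 0 < ν y) (hd : 0 < d) :
    ∃ m : ℝ, 0 < m ∧ ∀ x : EuclideanSpace ℝ (Fin d), m * ‖x‖ ≤ ν (ofE x) := by
  obtain ⟨K, hK0, hK⟩ := seminorm_upper ν
  set g : EuclideanSpace ℝ (Fin d) → ℝ := fun x => ν (ofE x) with hg
  have hlip : ∀ x y : EuclideanSpace ℝ (Fin d), |g x - g y| ≤ K * ‖x - y‖ := by
    intro x y
    have h1 : g x - g y ≤ K * ‖x - y‖ := by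
      have : g x ≤ g y + ν (ofE x - ofE y) := by
        have := map_add_le_add ν (ofE x - ofE y) (ofE y)
        simp only [sub_add_cancel] at this
        linarith
      have h2 : ν (ofE x - ofE y) = ν (ofE (x - y)) := rfl
      have h3 := hK (x - y)
      rw [h2] at this
      linarith
    have h2 : g y - g x ≤ K * ‖x - y‖ := by
      have : g y ≤ g x + ν (ofE y - ofE x) := by
        have := map_add_le_add ν (ofE y - ofE x) (ofE x)
        simp only [sub_add_cancel] at this
        linarith
      have h2' : ν (ofE y - ofE x) = ν (ofE (x - y)) := by
        have : ofE y - ofE x = -(ofE (x - y)) := by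
          show ofE y - ofE x = -(ofE x - ofE y)
          ring
        rw [this, map_neg_eq_map]
      have h3 := hK (x - y)
      rw [h2'] at this
      linarith
    exact abs_sub_le_iff.mpr ⟨h1, h2⟩
  have hcont : Continuous g := by
    apply continuous_iff_continuousAt.mpr
    intro x
    apply Metric.continuousAt_iff.mpr
    intro ε hε
    refine ⟨ε / (K + 1), by positivity, fun {y} hy => ?_⟩
    have h1 := hlip y x
    have h2 : K * ‖y - x‖ ≤ K * (ε / (K + 1)) := by
      apply mul_le_mul_of_nonneg_left _ hK0
      rw [← dist_eq_norm]
      exact hy.le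
    have hK1 : (0:ℝ) < K + 1 := by linarith
    have h3 : K * (ε / (K + 1)) < ε := by
      rw [mul_comm, div_mul_eq_mul_div, div_lt_iff₀ hK1]
      nlinarith
    calc dist (g y) (g x) = |g y - g x| := Real.dist_eq _ _
      _ ≤ K * ‖y - x‖ := hlip y x
      _ < ε := lt_of_le_of_lt h2 h3
  set x₀ : EuclideanSpace ℝ (Fin d) := EuclideanSpace.single ⟨0, hd⟩ (1:ℝ) with hx₀def
  have hx₀ : ‖x₀‖ = 1 := by rw [hx₀def, EuclideanSpace.norm_single]; simp
  have hne : (Metric.sphere (0 : EuclideanSpace ℝ (Fin d)) 1).Nonempty :=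
    ⟨x₀, mem_sphere_zero_iff_norm.mpr hx₀⟩
  obtain ⟨xm, hxm_mem, hxm_min⟩ :=
    (isCompact_sphere (0 : EuclideanSpace ℝ (Fin d)) 1).exists_isMinOn hne hcont.continuousOn
  have hxm_norm : ‖xm‖ = 1 := mem_sphere_zero_iff_norm.mp hxm_mem
  have hxm_ne : xm ≠ 0 := by
    intro h
    rw [h, norm_zero] at hxm_norm
    norm_num at hxm_norm
  have hofE_ne : ofE xm ≠ 0 := by
    intro h
    apply hxm_ne
    have : toE (ofE xm) = toE 0 := by rw [h]
    exact (show xm = toE (ofE xm) from rfl).trans (this.trans (WithLp.linearEquiv 2 ℝ (Fin d → ℝ)).symm.map_zero)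
  refine ⟨g xm, hpos _ hofE_ne, fun x => ?_⟩
  rcases eq_or_ne x 0 with rfl | hx
  · simp only [norm_zero, mul_zero]
    exact apply_nonneg ν _
  · set u : EuclideanSpace ℝ (Fin d) := ‖x‖⁻¹ • x with hu
    have hxnorm : 0 < ‖x‖ := norm_pos_iff.mpr hx
    have hunorm : ‖u‖ = 1 := by
      rw [hu, norm_smul, norm_inv, norm_norm, inv_mul_cancel₀ hxnorm.ne']
    have humem : u ∈ Metric.sphere (0 : EuclideanSpace ℝ (Fin d)) 1 := by simp [hunorm]
    have hmin := hxm_min humem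
    have hxu : x = ‖x‖ • u := by
      rw [hu, smul_smul, mul_inv_cancel₀ hxnorm.ne', one_smul]
    have hgx : g x = ‖x‖ * g u := by
      rw [hg]
      show ν (ofE x) = ‖x‖ * ν (ofE u)
      have : ofE x = ‖x‖ • ofE u := by
        conv_lhs => rw [hxu]
        exact map_smul (WithLp.linearEquiv 2 ℝ (Fin d → ℝ)) _ _
      rw [this, map_smul_eq_mul]
      congr 1
      exact abs_of_pos hxnorm
    calc g xm * ‖x‖ ≤ g u * ‖x‖ := mul_le_mul_of_nonneg_right hmin hxnorm.le
      _ = g x := by rw [hgx]; ring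
  
lemma word_contr {N : ℕ} (A : Fin N → Matrix (Fin d) (Fin d) ℝ) (ν : Seminorm ℝ (Fin d → ℝ))
    {c : ℝ} (hc0 : 0 ≤ c) (hc : ∀ a (x : Fin d → ℝ), ν ((A a).mulVec x) ≤ c * ν x) :
    ∀ {n : ℕ} (i : Fin n → Fin N) (x : Fin d → ℝ),
      ν ((wordProd A i).mulVec x) ≤ c ^ n * ν x := by
  intro n
  induction n with
  | zero =>
    intro i x
    rw [wordProd_zero, Matrix.one_mulVec, pow_zero, one_mul]
  | succ n ih =>
    intro i x
    rw [wordProd_succ, ← Matrix.mulVec_mulVec]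
    calc ν ((A (i 0)).mulVec ((wordProd A (Fin.tail i)).mulVec x))
        ≤ c * ν ((wordProd A (Fin.tail i)).mulVec x) := hc _ _
      _ ≤ c * (c ^ n * ν x) := mul_le_mul_of_nonneg_left (ih _ x) hc0
      _ = c ^ (n + 1) * ν x := by ring

lemma word_det {W P O : Matrix (Fin d) (Fin d) ℝ} {ρ : ℝ} (hρ : 0 < ρ)
    (hO : Oᵀ * O = 1) (hW : P * W = ρ • (O * P)) (hPdet : IsUnit P.det) :
    |W.det| = ρ ^ d := by
  have h1 := congrArg Matrix.det hW
  rw [Matrix.det_mul, Matrix.det_smul, Matrix.det_mul] at h1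
  have hcard : Fintype.card (Fin d) = d := Fintype.card_fin d
  rw [hcard] at h1
  have hPne : P.det ≠ 0 := hPdet.ne_zero
  have h2 : W.det = ρ ^ d * O.det := by
    apply mul_left_cancel₀ hPne
    rw [h1]
    ring
  rw [h2, abs_mul, abs_pow, abs_of_pos hρ, ortho_abs_det hO, mul_one]

lemma sum_words_pow {N : ℕ} (g : Fin N → ℝ) :
    ∀ n : ℕ, ∑ i : Fin n → Fin N, ∏ j, g (i j) = (∑ a, g a) ^ n := by
  intro n
  induction n with
  | zero => simp
  | succ n ih =>
    have he := Fintype.sum_equiv (Fin.consEquiv fun _ : Fin (n + 1) => Fin N).symm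
      (fun i => ∏ j, g (i j)) (fun p => g p.1 * ∏ j, g (p.2 j)) (by
        intro i
        show ∏ j, g (i j) = g (i 0) * ∏ j : Fin n, g (Fin.tail i j)
        rw [Fin.prod_univ_succ]
        rfl)
    rw [he, Fintype.sum_prod_type]
    have : ∀ a : Fin N, ∑ t : Fin n → Fin N, g a * ∏ j, g (t j)
        = g a * ((∑ b, g b) ^ n) := by
      intro a
      rw [← Finset.mul_sum, ih]
    rw [Finset.sum_congr rfl fun a _ => this a, ← Finset.sum_mul, pow_succ, mul_comm]

lemma summable_compare {N : ℕ} {f g : (n : ℕ) → (Fin (n+1) → Fin N) → ℝ} {K : ℝ}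
    (hf0 : ∀ n i, 0 ≤ f n i) (hle : ∀ n i, f n i ≤ K * g n i)
    (hg : Summable fun n => ∑ i : Fin (n+1) → Fin N, g n i) :
    Summable fun n => ∑ i : Fin (n+1) → Fin N, f n i := by
  apply Summable.of_nonneg_of_le (fun n => Finset.sum_nonneg fun i _ => hf0 n i)
    (fun n => ?_) (hg.mul_left K)
  calc ∑ i : Fin (n+1) → Fin N, f n i ≤ ∑ i : Fin (n+1) → Fin N, K * g n i :=
        Finset.sum_le_sum fun i _ => hle n i
    _ = K * ∑ i : Fin (n+1) → Fin N, g n i := by rw [← Finset.mul_sum]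

/-! ### letter decomposition -/

lemma letter_dec {G P Aa : Matrix (Fin d) (Fin d) ℝ} {ra : ℝ} (hra : 0 < ra)
    (hPdet : IsUnit P.det) (hPG : Pᵀ * P = G) (hsim : Aaᵀ * G * Aa = (ra ^ 2) • G) :
    ∃ O : Matrix (Fin d) (Fin d) ℝ, Oᵀ * O = 1 ∧ P * Aa = ra • (O * P) := by
  set X := P * Aa * P⁻¹ with hX
  have hXX : Xᵀ * X = (ra ^ 2) • 1 := by
    have e1 : Xᵀ * X = P⁻¹ᵀ * ((Aaᵀ * G * Aa) * P⁻¹) := by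
      rw [← hPG]
      simp only [hX, Matrix.transpose_mul, Matrix.mul_assoc]
    rw [hsim] at e1
    have e2 : P⁻¹ᵀ * (((ra ^ 2) • G) * P⁻¹) = (ra ^ 2) • (P⁻¹ᵀ * (G * P⁻¹)) := by
      rw [Matrix.smul_mul, Matrix.mul_smul]
    have e3 : P⁻¹ᵀ * (G * P⁻¹) = 1 := by
      rw [← hPG]
      calc P⁻¹ᵀ * ((Pᵀ * P) * P⁻¹) = P⁻¹ᵀ * (Pᵀ * (P * P⁻¹)) := by
            rw [Matrix.mul_assoc]
        _ = P⁻¹ᵀ * Pᵀ := by rw [Matrix.mul_nonsing_inv _ hPdet, Matrix.mul_one]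
        _ = (P * P⁻¹)ᵀ := (Matrix.transpose_mul _ _).symm
        _ = 1 := by rw [Matrix.mul_nonsing_inv _ hPdet, Matrix.transpose_one]
    rw [e1, e2, e3]
  refine ⟨ra⁻¹ • X, ?_, ?_⟩
  · rw [Matrix.transpose_smul, Matrix.smul_mul, Matrix.mul_smul, smul_smul, hXX, smul_smul]
    have h2 : ra⁻¹ * ra⁻¹ * ra ^ 2 = 1 := by
      field_simp
    rw [h2, one_smul]
  · rw [Matrix.smul_mul, smul_smul]
    have h1 : ra * ra⁻¹ = 1 := mul_inv_cancel₀ hra.ne'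
    rw [h1, one_smul, hX, Matrix.mul_assoc, Matrix.nonsing_inv_mul _ hPdet, Matrix.mul_one]

/-! ### main theorem -/




/-- Theorem 2(i). If the invertible contracting tuple `(A_1,…,A_N)`
consists of similarities with respect to some inner product on `ℝ^d` (encoded by a positive
definite matrix `G`), and `dimaff(A_1,…,A_N) ≤ rank Q`, then
`inf {s > 0 : ∑_{n≥1} ∑_{|i|=n} φ^s(Q A_i) < ∞} = dimaff(A_1,…,A_N)`. -/
theorem statement1 {d N : ℕ} (hN : 2 ≤ N)
    (A : Fin N → Matrix (Fin d) (Fin d) ℝ) (hInv : ∀ i, IsUnit (A i))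
    (hContr : IsContractingTuple A)
    (hSim : ∃ G : Matrix (Fin d) (Fin d) ℝ, G.PosDef ∧
      ∀ i, ∃ r : ℝ, 0 < r ∧ (A i)ᵀ * G * A i = (r ^ 2) • G)
    (Q : Matrix (Fin d) (Fin d) ℝ) (hrank : affDim A ≤ (Q.rank : ℝ)) :
    sInf {s : ℝ | 0 < s ∧
        Summable fun n : ℕ => ∑ i : Fin (n + 1) → Fin N, svf s (Q * wordProd A i)} =
      affDim A := by
  classical
  have haff : affDim A = sInf {s : ℝ | 0 < s ∧
      Summable fun n : ℕ => ∑ i : Fin (n + 1) → Fin N, svf s (wordProd A i)} := rfl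
  set SA := {s : ℝ | 0 < s ∧
      Summable fun n : ℕ => ∑ i : Fin (n + 1) → Fin N, svf s (wordProd A i)} with hSAdef
  set SQ := {s : ℝ | 0 < s ∧
      Summable fun n : ℕ => ∑ i : Fin (n + 1) → Fin N, svf s (Q * wordProd A i)} with hSQdef
  rcases Nat.eq_zero_or_pos d with hd0 | hd
  · -- degenerate case d = 0
    subst hd0
    have hone : ∀ (s : ℝ), 0 < s → ∀ M : Matrix (Fin 0) (Fin 0) ℝ, svf s M = 1 := by
      intro s hs M
      rw [svf_def, if_neg (by push_cast; linarith)]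
      rw [Nat.cast_zero, div_zero, Real.rpow_zero]
    have hns : ∀ (f : ℕ → ℝ), (∀ n, f n = (N:ℝ) ^ (n+1)) → ¬ Summable f := by
      intro f hf hsum
      have hN1 : (1:ℝ) ≤ (N:ℝ) := by exact_mod_cast (by omega : 1 ≤ N)
      have h1 : ∀ n, (1:ℝ) ≤ f n := by
        intro n
        rw [hf]
        exact one_le_pow₀ hN1
      have := ge_of_tendsto hsum.tendsto_atTop_zero (Filter.Eventually.of_forall h1)
      linarith
    have hcardsum : ∀ (s : ℝ), 0 < s → ∀ (g : ℕ → Matrix (Fin 0) (Fin 0) ℝ → ℝ), True := fun _ _ _ => trivial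
    have hSA0 : SA = ∅ := by
      ext s
      simp only [hSAdef, Set.mem_setOf_eq, Set.mem_empty_iff_false, iff_false, not_and]
      intro hs hsum
      refine hns _ (fun n => ?_) hsum
      calc ∑ i : Fin (n+1) → Fin N, svf s (wordProd A i)
          = ∑ _i : Fin (n+1) → Fin N, (1:ℝ) :=
            Finset.sum_congr rfl fun i _ => hone s hs _
        _ = (N:ℝ) ^ (n+1) := by
            rw [Finset.sum_const, nsmul_eq_mul, mul_one, Finset.card_univ, Fintype.card_fun]
            push_cast
            simp
    have hSQ0 : SQ = ∅ := by
      ext s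
      simp only [hSQdef, Set.mem_setOf_eq, Set.mem_empty_iff_false, iff_false, not_and]
      intro hs hsum
      refine hns _ (fun n => ?_) hsum
      calc ∑ i : Fin (n+1) → Fin N, svf s (Q * wordProd A i)
          = ∑ _i : Fin (n+1) → Fin N, (1:ℝ) :=
            Finset.sum_congr rfl fun i _ => hone s hs _
        _ = (N:ℝ) ^ (n+1) := by
            rw [Finset.sum_const, nsmul_eq_mul, mul_one, Finset.card_univ, Fintype.card_fun]
            push_cast
            simp
    rw [haff, hSA0, hSQ0]
  · -- main case d ≥ 1
    obtain ⟨ν, c, hνpos, hc1, hν⟩ := hContr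
    obtain ⟨G, hG, hsim⟩ := hSim
    choose r hrpos hsimr using hsim
    obtain ⟨P, hGP⟩ : ∃ P : Matrix (Fin d) (Fin d) ℝ, G = Pᴴ * P := by
      open scoped MatrixOrder in
      exact CStarAlgebra.nonneg_iff_eq_star_mul_self.mp hG.posSemidef.nonneg
    have hPT : Pᵀ * P = G := by
      rw [hGP, Matrix.conjTranspose_eq_transpose_of_trivial]
    have hPdet : IsUnit P.det := by
      have hGdet : 0 < G.det := hG.det_pos
      rw [← hPT, Matrix.det_mul, Matrix.det_transpose] at hGdet
      refine isUnit_iff_ne_zero.mpr (fun h => ?_)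
      rw [h, mul_zero] at hGdet
      exact lt_irrefl 0 hGdet
    have hdec : ∀ a, ∃ O : Matrix (Fin d) (Fin d) ℝ, Oᵀ * O = 1 ∧ P * A a = r a • (O * P) :=
      fun a => letter_dec (hrpos a) hPdet hPT (hsimr a)
    obtain ⟨kP, hkP0, hkP⟩ := exists_opBound (d := d) P
    obtain ⟨kI, hkI0, hkI⟩ := exists_opBound (d := d) P⁻¹
    obtain ⟨kQ, hkQ0, hkQ⟩ := exists_opBound (d := d) Q
    set x₀ : EuclideanSpace ℝ (Fin d) := EuclideanSpace.single ⟨0, hd⟩ (1:ℝ) with hx₀def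
    have hx₀ : ‖x₀‖ = 1 := by rw [hx₀def, EuclideanSpace.norm_single]; simp
    set CP := kP * kI with hCP
    have hCP1 : 1 ≤ CP := by
      have h1 : mvL P⁻¹ (mvL P x₀) = x₀ := by
        rw [← mvL_mul, Matrix.nonsing_inv_mul _ hPdet, mvL_one]
      calc (1:ℝ) = ‖x₀‖ := hx₀.symm
        _ = ‖mvL P⁻¹ (mvL P x₀)‖ := by rw [h1]
        _ ≤ kI * ‖mvL P x₀‖ := hkI _
        _ ≤ kI * (kP * ‖x₀‖) := mul_le_mul_of_nonneg_left (hkP _) hkI0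
        _ = CP := by rw [hx₀, hCP]; ring
    have hCP0 : 0 < CP := lt_of_lt_of_le one_pos hCP1
    have hρpos : ∀ {n : ℕ} (i : Fin n → Fin N), 0 < ∏ j, r (i j) :=
      fun i => Finset.prod_pos fun j _ => hrpos _
    have hword : ∀ {n : ℕ} (i : Fin n → Fin N), ∃ O : Matrix (Fin d) (Fin d) ℝ,
        Oᵀ * O = 1 ∧ P * wordProd A i = (∏ j, r (i j)) • (O * P) :=
      fun {n} i => word_structure A P r hdec i
    have hWlow : ∀ {n : ℕ} (i : Fin n → Fin N) (z : EuclideanSpace ℝ (Fin d)),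
        ((∏ j, r (i j)) / CP) * ‖z‖ ≤ ‖mvL (wordProd A i) z‖ := by
      intro n i z
      obtain ⟨O, hO, hPW⟩ := hword i
      have hb := (word_norm_bounds (hρpos i) hkP0 hkI0 hO hPW hPdet hkP hkI z).1
      rw [div_mul_eq_mul_div, div_le_iff₀ hCP0]
      calc (∏ j, r (i j)) * ‖z‖ ≤ (kP * kI) * ‖mvL (wordProd A i) z‖ := hb
        _ = ‖mvL (wordProd A i) z‖ * CP := by rw [hCP]; ring
    have hWup : ∀ {n : ℕ} (i : Fin n → Fin N) (z : EuclideanSpace ℝ (Fin d)),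
        ‖mvL (wordProd A i) z‖ ≤ ((∏ j, r (i j)) * CP) * ‖z‖ := by
      intro n i z
      obtain ⟨O, hO, hPW⟩ := hword i
      have hb := (word_norm_bounds (hρpos i) hkP0 hkI0 hO hPW hPdet hkP hkI z).2
      calc ‖mvL (wordProd A i) z‖ ≤ (∏ j, r (i j)) * (kP * kI) * ‖z‖ := hb
        _ = ((∏ j, r (i j)) * CP) * ‖z‖ := by rw [hCP]
    -- contraction ratio bounds
    have hx₀ne : ofE x₀ ≠ 0 := by
      intro h
      have h2 : toE (ofE x₀) = toE 0 := by rw [h]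
      have h3 : x₀ = 0 := (show x₀ = toE (ofE x₀) from rfl).trans (h2.trans (WithLp.linearEquiv 2 ℝ (Fin d → ℝ)).symm.map_zero)
      rw [h3, norm_zero] at hx₀
      norm_num at hx₀
    have hc0 : 0 ≤ c := by
      have h1 := hν ⟨0, by omega⟩ (ofE x₀)
      have h2 : 0 ≤ ν ((A ⟨0, by omega⟩).mulVec (ofE x₀)) := apply_nonneg ν _
      have h3 : 0 < ν (ofE x₀) := hνpos _ hx₀ne
      nlinarith
    obtain ⟨Kν, hKν0, hKν⟩ := seminorm_upper (d := d) ν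
    obtain ⟨mν, hmν, hνlow⟩ := seminorm_lower ν hνpos hd
    have hkey : ∀ (a : Fin N) (n : ℕ), (r a) ^ n ≤ (CP * Kν / mν) * c ^ n := by
      intro a n
      set W := wordProd A (fun _ : Fin n => a) with hWdef
      have hρeq : (∏ j : Fin n, r ((fun _ : Fin n => a) j)) = (r a) ^ n := by
        rw [Finset.prod_const, Finset.card_univ, Fintype.card_fin]
      have h1 : ((r a) ^ n / CP) * ‖x₀‖ ≤ ‖mvL W x₀‖ := by
        have := hWlow (fun _ : Fin n => a) x₀
        rwa [hρeq] at this
      rw [hx₀, mul_one] at h1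
      have h2 : mν * ‖mvL W x₀‖ ≤ ν (W.mulVec (ofE x₀)) := hνlow (mvL W x₀)
      have h3 : ν (W.mulVec (ofE x₀)) ≤ c ^ n * ν (ofE x₀) :=
        word_contr A ν hc0 (fun a' x => hν a' x) (fun _ : Fin n => a) (ofE x₀)
      have h4 : ν (ofE x₀) ≤ Kν := by
        have := hKν x₀
        rwa [hx₀, mul_one] at this
      have hc6 : mν * ‖mvL W x₀‖ ≤ c ^ n * Kν := by
        calc mν * ‖mvL W x₀‖ ≤ ν (W.mulVec (ofE x₀)) := h2
          _ ≤ c ^ n * ν (ofE x₀) := h3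
          _ ≤ c ^ n * Kν :=
              mul_le_mul_of_nonneg_left h4 (pow_nonneg hc0 n)
      have h1' : (r a) ^ n ≤ ‖mvL W x₀‖ * CP := (div_le_iff₀ hCP0).mp h1
      have h5 : (r a) ^ n / CP ≤ (c ^ n * Kν) / mν := by
        rw [div_le_div_iff₀ hCP0 hmν]
        calc (r a) ^ n * mν ≤ (‖mvL W x₀‖ * CP) * mν :=
              mul_le_mul_of_nonneg_right h1' hmν.le
          _ = (mν * ‖mvL W x₀‖) * CP := by ring
          _ ≤ (c ^ n * Kν) * CP := mul_le_mul_of_nonneg_right hc6 hCP0.le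

      calc (r a) ^ n = ((r a) ^ n / CP) * CP := by field_simp
        _ ≤ ((c ^ n * Kν) / mν) * CP := mul_le_mul_of_nonneg_right h5 hCP0.le
        _ = (CP * Kν / mν) * c ^ n := by ring
    have hrc : ∀ a, r a ≤ c := by
      intro a
      by_contra hcon
      push_neg at hcon
      rcases eq_or_lt_of_le hc0 with hceq | hcpos
      · have h1 := hkey a 1
        rw [← hceq, pow_one, pow_one, mul_zero] at h1
        exact absurd h1 (not_le.mpr (hrpos a))
      · obtain ⟨n, hn⟩ := pow_unbounded_of_one_lt (CP * Kν / mν)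
          ((one_lt_div hcpos).mpr hcon)
        have h1 := hkey a n
        rw [div_pow] at hn
        have h2 : (CP * Kν / mν) * c ^ n < (r a) ^ n := by
          rw [← lt_div_iff₀ (pow_pos hcpos n)] at *
          exact hn
        linarith
    have hrlt1 : ∀ a, r a < 1 := fun a => lt_of_le_of_lt (hrc a) hc1
    have hcpos : 0 < c := lt_of_lt_of_le (hrpos ⟨0, by omega⟩) (hrc _)
    -- determinant values
    have hdet : ∀ {n : ℕ} (i : Fin n → Fin N),
        |(wordProd A i).det| = (∏ j, r (i j)) ^ d := by
      intro n i
      obtain ⟨O, hO, hPW⟩ := hword i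
      exact word_det (hρpos i) hO hPW hPdet
    have hsvfA_det : ∀ (s : ℝ), (d:ℝ) < s → ∀ {n : ℕ} (i : Fin n → Fin N),
        svf s (wordProd A i) = (∏ j, r (i j)) ^ s := by
      intro s hds n i
      rw [svf_of_card_lt _ hds, hdet i]
      have hd0 : (d:ℝ) ≠ 0 := by positivity
      have hmul : (d:ℝ) * (s / d) = s := by field_simp
      rw [← Real.rpow_natCast (∏ j, r (i j)) d, ← Real.rpow_mul (hρpos i).le, hmul]
    -- SA is nonempty
    obtain ⟨k, hk⟩ := exists_pow_lt_of_lt_one (show (0:ℝ) < 1/(N:ℝ) by positivity) hc1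
    set s₀ : ℝ := ((k + d + 1 : ℕ) : ℝ) with hs₀def
    have hs₀d : (d:ℝ) < s₀ := by
      rw [hs₀def]
      exact_mod_cast (by omega : d < k + d + 1)
    have hs₀pos : 0 < s₀ := lt_of_le_of_lt (Nat.cast_nonneg d) hs₀d
    set q₀ : ℝ := ∑ a, (r a) ^ s₀ with hq₀def
    have hq₀0 : 0 ≤ q₀ := Finset.sum_nonneg fun a _ => Real.rpow_nonneg (hrpos a).le _
    have hq₀ : q₀ < 1 := by
      have h1 : ∀ a : Fin N, (r a) ^ s₀ ≤ c ^ (k + d + 1 : ℕ) := by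
        intro a
        rw [hs₀def, Real.rpow_natCast]
        exact pow_le_pow_left₀ (hrpos a).le (hrc a) _
      have h2 : c ^ (k + d + 1 : ℕ) ≤ c ^ k :=
        pow_le_pow_of_le_one hcpos.le hc1.le (by omega)
      calc q₀ ≤ ∑ _a : Fin N, c ^ k := Finset.sum_le_sum fun a _ => (h1 a).trans h2
        _ = (N:ℝ) * c ^ k := by rw [Finset.sum_const, nsmul_eq_mul, Finset.card_univ,
              Fintype.card_fin]
        _ < (N:ℝ) * (1/(N:ℝ)) := by
            apply mul_lt_mul_of_pos_left hk
            positivity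
        _ = 1 := by field_simp
    have hs₀SA : s₀ ∈ SA := by
      refine ⟨hs₀pos, ?_⟩
      have hid : ∀ n : ℕ, (∑ i : Fin (n+1) → Fin N, svf s₀ (wordProd A i)) = q₀ ^ (n+1) := by
        intro n
        calc (∑ i : Fin (n+1) → Fin N, svf s₀ (wordProd A i))
            = ∑ i : Fin (n+1) → Fin N, ∏ j, (r (i j)) ^ s₀ := by
              refine Finset.sum_congr rfl fun i _ => ?_
              rw [hsvfA_det s₀ hs₀d i]
              exact (Real.finset_prod_rpow Finset.univ _ (fun j _ => (hrpos _).le) s₀).symm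
          _ = q₀ ^ (n+1) := by
              rw [sum_words_pow (fun a => (r a) ^ s₀) (n+1), hq₀def]
      have hgeo : Summable (fun n : ℕ => q₀ ^ (n+1)) := by
        have := (summable_geometric_of_lt_one hq₀0 hq₀).mul_left q₀
        refine this.congr fun n => ?_
        rw [← pow_succ']
      exact hgeo.congr fun n => (hid n).symm
    have hSAne : SA.Nonempty := ⟨s₀, hs₀SA⟩
    have hbddA : BddBelow SA := ⟨0, fun x hx => hx.1.le⟩
    have hbddQ : BddBelow SQ := ⟨0, fun x hx => hx.1.le⟩
    -- per-word svf bounds in the regime 0 < s ≤ d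
    have hlowA : ∀ (s : ℝ), 0 < s → s ≤ (d:ℝ) → ∀ {n : ℕ} (i : Fin n → Fin N),
        ((∏ j, r (i j)) / CP) ^ s ≤ svf s (wordProd A i) := by
      intro s hs0 hsd n i
      apply pow_le_svf (div_pos (hρpos i) hCP0) _ hs0 hsd
      intro j hj1 hjd
      exact le_sval_of_bound _ hj1 hjd (hWlow i)
    have hupA : ∀ (s : ℝ), 0 < s → s ≤ (d:ℝ) → ∀ {n : ℕ} (i : Fin n → Fin N),
        svf s (wordProd A i) ≤ ((∏ j, r (i j)) * CP) ^ s := by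
      intro s hs0 hsd n i
      apply svf_le_pow (mul_pos (hρpos i) hCP0) _ hs0 hsd
      intro j
      exact sval_le_of_bound _ (mul_nonneg (hρpos i).le hCP0.le) (hWup i) j
    have hupQ : ∀ (s : ℝ), 0 < s → s ≤ (d:ℝ) → ∀ {n : ℕ} (i : Fin n → Fin N),
        svf s (Q * wordProd A i) ≤ ((kQ + 1) * ((∏ j, r (i j)) * CP)) ^ s := by
      intro s hs0 hsd n i
      have hρ := hρpos i
      apply svf_le_pow (by positivity) _ hs0 hsd
      intro j
      apply sval_le_of_bound _ (by positivity) _ j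
      intro z
      calc ‖mvL (Q * wordProd A i) z‖ = ‖mvL Q (mvL (wordProd A i) z)‖ := by rw [mvL_mul]
        _ ≤ kQ * ‖mvL (wordProd A i) z‖ := hkQ _
        _ ≤ kQ * (((∏ j, r (i j)) * CP) * ‖z‖) :=
            mul_le_mul_of_nonneg_left (hWup i z) hkQ0
        _ ≤ (kQ + 1) * (((∏ j, r (i j)) * CP) * ‖z‖) := by
            have hρ := hρpos i
            apply mul_le_mul_of_nonneg_right (by linarith) (by positivity)
        _ = ((kQ + 1) * ((∏ j, r (i j)) * CP)) * ‖z‖ := by ring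
    have hlowQ : ∀ (s : ℝ), 0 < s → s ≤ (d:ℝ) → ∀ {n : ℕ} (i : Fin n → Fin N),
        svf s Q * ((∏ j, r (i j)) / CP) ^ s ≤ svf s (Q * wordProd A i) := by
      intro s hs0 hsd n i
      exact svf_mul_ge Q (wordProd A i) (div_pos (hρpos i) hCP0) (hWlow i) hs0 hsd
    -- subset SA ⊆ SQ
    have hsub : SA ⊆ SQ := by
      rintro s ⟨hs0, hsumA⟩
      refine ⟨hs0, ?_⟩
      rcases le_or_gt s (d:ℝ) with hsd | hsd
      · refine summable_compare (K := ((kQ + 1) * CP * CP) ^ s)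
          (fun n i => svf_nonneg _ _) (fun n i => ?_) hsumA
        have hρ := hρpos i
        have heqc : ((kQ + 1) * ((∏ j, r (i j)) * CP)) ^ s
            = ((kQ + 1) * CP * CP) ^ s * ((∏ j, r (i j)) / CP) ^ s := by
          rw [← Real.mul_rpow (by positivity) (by positivity)]
          congr 1
          field_simp
        calc svf s (Q * wordProd A i) ≤ ((kQ + 1) * ((∏ j, r (i j)) * CP)) ^ s :=
              hupQ s hs0 hsd i
          _ = ((kQ + 1) * CP * CP) ^ s * ((∏ j, r (i j)) / CP) ^ s := heqc
          _ ≤ ((kQ + 1) * CP * CP) ^ s * svf s (wordProd A i) :=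
              mul_le_mul_of_nonneg_left (hlowA s hs0 hsd i) (by positivity)
      · refine summable_compare (K := |Q.det| ^ (s / (d:ℝ)))
          (fun n i => svf_nonneg _ _) (fun n i => ?_) hsumA
        have h1 : svf s (Q * wordProd A i)
            = |Q.det| ^ (s/(d:ℝ)) * svf s (wordProd A i) := by
          rw [svf_of_card_lt _ hsd, hsvfA_det s hsd i, Matrix.det_mul, abs_mul,
            Real.mul_rpow (abs_nonneg _) (abs_nonneg _), hdet i]
          congr 1
          have hd0 : (d:ℝ) ≠ 0 := by positivity
          have hmul : (d:ℝ) * (s / d) = s := by field_simp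
          rw [← Real.rpow_natCast (∏ j, r (i j)) d, ← Real.rpow_mul (hρpos i).le, hmul]
        exact le_of_eq h1
    -- lower bounds for elements of SQ
    have hge : ∀ s ∈ SQ, sInf SA ≤ s := by
      rintro s ⟨hs0, hsumQ⟩
      rcases le_or_gt s ((Q.rank : ℕ):ℝ) with hsr | hsr
      · have hsd : s ≤ (d:ℝ) := hsr.trans (Nat.cast_le.mpr (rank_le_d Q))
        have hQpos : 0 < svf s Q := svf_pos_of_rank Q hs0 hsr
        have hmem : s ∈ SA := by
          refine ⟨hs0, ?_⟩
          refine summable_compare (K := (CP * CP) ^ s / svf s Q)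
            (fun n i => svf_nonneg _ _) (fun n i => ?_) hsumQ
          have heqc : ((∏ j, r (i j)) * CP) ^ s
              = (CP * CP) ^ s * ((∏ j, r (i j)) / CP) ^ s := by
            rw [← Real.mul_rpow (by positivity) (div_nonneg (hρpos i).le hCP0.le)]
            congr 1
            field_simp
          calc svf s (wordProd A i) ≤ ((∏ j, r (i j)) * CP) ^ s := hupA s hs0 hsd i
            _ = (CP * CP) ^ s * ((∏ j, r (i j)) / CP) ^ s := heqc
            _ = ((CP * CP) ^ s / svf s Q) * (svf s Q * ((∏ j, r (i j)) / CP) ^ s) := by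
                field_simp
            _ ≤ ((CP * CP) ^ s / svf s Q) * svf s (Q * wordProd A i) :=
                mul_le_mul_of_nonneg_left (hlowQ s hs0 hsd i) (by positivity)
        exact csInf_le hbddA hmem
      · have hlt : sInf SA < s := by
          calc sInf SA = affDim A := haff.symm
            _ ≤ ((Q.rank : ℕ):ℝ) := hrank
            _ < s := hsr
        exact hlt.le
    have h1 : sInf SQ ≤ sInf SA := csInf_le_csInf hbddQ hSAne hsub
    have h2 : sInf SA ≤ sInf SQ := le_csInf ⟨s₀, hsub hs₀SA⟩ hge
    rw [haff]
    exact le_antisymm h1 h2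

end PaperProj
end
end

section
/- Let A_1,…,A_N ∈ GL_d(ℝ), let Q be a d×d real matrix, and let k be an integer with k ≤ rank Q such that (A_1,…,A_N) is k-irreducible. Then the quantity κ := min over all B ∈ M_d(ℝ) satisfying B² = B = Bᵀ and rank B = k of (max over words 𝚔 with |𝚔| ≤ C(d,k) of σ_k(Q A_𝚔 B)) is strictly positive, where C(d,k) denotes the binomial coefficient d choose k. -/
open scoped BigOperators Kronecker

noncomputable section

namespace PaperProj

open Matrix

section Stmt4Aux

lemma isHermitian_transpose_mul_self' {ι : Type*} [Fintype ι] (A : Matrix ι ι ℝ) :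
    (Aᵀ * A).IsHermitian := by
  simpa [Matrix.conjTranspose_eq_transpose_of_trivial] using
    Matrix.isHermitian_conjTranspose_mul_self A

namespace S4L

lemma foldr_max_le_mem {l : List ℝ} {a : ℝ} (c : ℝ) (h : a ∈ l) : a ≤ l.foldr max c := by
  induction l with
  | nil => simp at h
  | cons b t ih =>
    rcases List.mem_cons.1 h with rfl | h
    · exact le_max_left _ _
    · exact le_trans (ih h) (le_max_right _ _)

lemma foldr_max_init (l : List ℝ) (c : ℝ) : c ≤ l.foldr max c := by
  induction l with
  | nil => simp
  | cons b t ih => exact le_trans ih (le_max_right _ _)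

lemma exists_mem_of_le_foldr_max {l : List ℝ} {c ε : ℝ} (h : ε ≤ l.foldr max c) (hc : c < ε) :
    ∃ a ∈ l, ε ≤ a := by
  induction l with
  | nil => simp at h; exact absurd (lt_of_lt_of_le hc h) (lt_irrefl _)
  | cons b t ih =>
    simp only [List.foldr_cons] at h
    rcases le_total (t.foldr max c) b with hb | hb
    · exact ⟨b, List.mem_cons_self, le_trans h (by rw [max_eq_left hb])⟩
    · rw [max_eq_right hb] at h
      obtain ⟨a, ha, hεa⟩ := ih h
      exact ⟨a, List.mem_cons_of_mem _ ha, hεa⟩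

lemma continuous_foldr_max {α : Type*} {X : Type*} [TopologicalSpace X] (l : List α)
    (f : α → X → ℝ) (hf : ∀ a, Continuous (f a)) (c : ℝ) :
    Continuous fun x => (l.map fun a => f a x).foldr max c := by
  induction l with
  | nil => simpa using continuous_const
  | cons b t ih =>
    simp only [List.map_cons, List.foldr_cons]
    exact Continuous.max (hf b) ih

lemma sorted_getD_ge {c : ℝ} : ∀ (l : List ℝ), l.Pairwise (· ≥ ·) → ∀ j, j < l.length →
    j < l.countP (fun x => decide (c ≤ x)) → c ≤ l.getD j 0 := by
  intro l
  induction l with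
  | nil => intro _ j hj; simp at hj
  | cons b t ih =>
    intro hs j hj hcount
    cases j with
    | zero =>
      simp only [List.getD_cons_zero]
      by_contra hcb
      push_neg at hcb
      have h0 : (b :: t).countP (fun x => decide (c ≤ x)) = 0 := by
        rw [List.countP_eq_zero]
        intro a ha
        rcases List.mem_cons.1 ha with rfl | ha
        · simpa using not_le.2 hcb
        · have := (List.pairwise_cons.1 hs).1 a ha
          simpa using not_le.2 (lt_of_le_of_lt this hcb)
      omega
    | succ j =>
      simp only [List.getD_cons_succ]
      have hcnt : (b :: t).countP (fun x => decide (c ≤ x)) ≤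
          t.countP (fun x => decide (c ≤ x)) + 1 := by
        rw [List.countP_cons]
        split <;> omega
      exact ih (List.pairwise_cons.1 hs).2 j (by simpa using hj) (by omega)

lemma le_sval {d : ℕ} (M : Matrix (Fin d) (Fin d) ℝ) (k : ℕ) (hk : 1 ≤ k) (hkd : k ≤ d) {c : ℝ}
    (h : k ≤ (Finset.univ.filter fun i =>
      c ≤ Real.sqrt ((isHermitian_transpose_mul_self' M).eigenvalues i)).card) :
    c ≤ sval M k := by
  have hf : True := trivial
  let f : Fin d → ℝ := fun i =>
    Real.sqrt ((isHermitian_transpose_mul_self' M).eigenvalues i)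
  set L : List ℝ := ((Finset.univ.val.map f).sort (· ≤ ·)).reverse with hL
  have hlen : L.length = d := by
    simp [hL, Multiset.length_sort]
  have hsorted : L.Pairwise (· ≥ ·) := by
    have h1 : ((Finset.univ.val.map f).sort (· ≤ ·)).Pairwise (· ≤ ·) :=
      Multiset.pairwise_sort _ _
    exact List.pairwise_reverse.2 h1
  have hcount : L.countP (fun x => decide (c ≤ x)) =
      (Finset.univ.filter fun i => c ≤ f i).card := by
    rw [hL, List.countP_reverse]
    have h2 : (((Finset.univ.val.map f).sort (· ≤ ·)).countP fun x => decide (c ≤ x)) =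
        Multiset.countP (fun x => c ≤ x) (Finset.univ.val.map f) := by
      conv_rhs => rw [← Multiset.sort_eq (Finset.univ.val.map f) (· ≤ ·)]
      simp [Multiset.coe_countP]
    rw [h2, Multiset.countP_map]
    rfl
  have : c ≤ L.getD (k - 1) 0 := by
    apply sorted_getD_ge L hsorted (k-1) (by omega)
    rw [hcount]
    have h' : (Finset.univ.filter fun i => c ≤ f i).card =
        (Finset.univ.filter fun i =>
          c ≤ Real.sqrt ((isHermitian_transpose_mul_self' M).eigenvalues i)).card := by
      congr 1
    omega
  simpa [sval, hL, hf] using this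

end S4L

namespace S4E
variable {d : ℕ}
local notation "Euc" => EuclideanSpace ℝ (Fin d)

lemma inner_eq_dot (x y : Euc) :
    (inner ℝ x y : ℝ) = (WithLp.equiv 2 (Fin d → ℝ) x) ⬝ᵥ (WithLp.equiv 2 (Fin d → ℝ) y) := by
  simp [PiLp.inner_apply, RCLike.inner_apply, dotProduct, mul_comm]

lemma inner_self_eq_sum_sq (b : OrthonormalBasis (Fin d) ℝ Euc) (x : Euc) :
    (inner ℝ x x : ℝ) = ∑ i, (inner ℝ (b i) x : ℝ) ^ 2 := by
  rw [← b.sum_inner_mul_inner x x]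
  congr 1; ext i
  rw [real_inner_comm x (b i)]; ring

lemma quadform_eigen {H : Matrix (Fin d) (Fin d) ℝ} (hH : H.IsHermitian) (x : Euc) :
    (WithLp.equiv 2 (Fin d → ℝ) x) ⬝ᵥ (H *ᵥ (WithLp.equiv 2 (Fin d → ℝ) x)) =
    ∑ i, hH.eigenvalues i * (inner ℝ (hH.eigenvectorBasis i) x : ℝ) ^ 2 := by
  have hHt : Hᵀ = H := by rw [← Matrix.conjTranspose_eq_transpose_of_trivial]; exact hH
  set xv := WithLp.equiv 2 (Fin d → ℝ) x with hxv
  set y : Euc := (WithLp.equiv 2 (Fin d → ℝ)).symm (H *ᵥ xv) with hy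
  have h0 : xv ⬝ᵥ (H *ᵥ xv) = (inner ℝ x y : ℝ) := by
    rw [inner_eq_dot]; simp [hy, hxv]
  rw [h0, ← (hH.eigenvectorBasis).sum_inner_mul_inner x y]
  congr 1; ext i
  have h1 : (inner ℝ (hH.eigenvectorBasis i) y : ℝ) =
      hH.eigenvalues i * (inner ℝ (hH.eigenvectorBasis i) x : ℝ) := by
    rw [inner_eq_dot, inner_eq_dot]
    simp only [hy, Equiv.apply_symm_apply]
    have hvm : ∀ u : Fin d → ℝ, u ᵥ* H = H *ᵥ u := by
      intro u
      conv_lhs => rw [← hHt]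
      rw [Matrix.vecMul_transpose]
    rw [Matrix.dotProduct_mulVec, hvm]
    rw [show (WithLp.equiv 2 (Fin d → ℝ)) (hH.eigenvectorBasis i) = (hH.eigenvectorBasis i).ofLp from rfl]
    rw [hH.mulVec_eigenvectorBasis i]
    rw [smul_dotProduct]
    rfl
  rw [h1, real_inner_comm x (hH.eigenvectorBasis i)]; ring

lemma min_eig_le {H : Matrix (Fin d) (Fin d) ℝ} (hH : H.IsHermitian) (hd : 0 < d) (x : Euc) :
    ∃ i, hH.eigenvalues i * (inner ℝ x x : ℝ) ≤
      (WithLp.equiv 2 (Fin d → ℝ) x) ⬝ᵥ (H *ᵥ (WithLp.equiv 2 (Fin d → ℝ) x)) := by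
  have : Nonempty (Fin d) := ⟨⟨0, hd⟩⟩
  obtain ⟨i0, _, hi0⟩ := Finset.exists_min_image Finset.univ hH.eigenvalues
    ⟨⟨0, hd⟩, Finset.mem_univ _⟩
  refine ⟨i0, ?_⟩
  rw [quadform_eigen hH x, inner_self_eq_sum_sq hH.eigenvectorBasis x, Finset.mul_sum]
  apply Finset.sum_le_sum
  intro i _
  exact mul_le_mul_of_nonneg_right (hi0 i (Finset.mem_univ i)) (sq_nonneg _)

lemma trace_eq_sum_eigs {H : Matrix (Fin d) (Fin d) ℝ} (hH : H.IsHermitian) :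
    H.trace = ∑ i, hH.eigenvalues i := by
  simpa using hH.trace_eq_sum_eigenvalues

/-- The key eigenvalue-count lemma. -/
lemma eig_count {k : ℕ} (hk : 1 ≤ k) (hkd : k ≤ d)
    (M B : Matrix (Fin d) (Fin d) ℝ)
    (hB2 : B * B = B) (hBt : Bᵀ = B) (hrkB : B.rank = k)
    {T ε : ℝ} (hT1 : 1 ≤ T) (htr : (Mᴴ * M).trace + d ≤ T)
    (hε : 0 < ε) (hdet : ε ≤ (Mᴴ * M + 1 - B).det) :
    k ≤ (Finset.univ.filter fun i =>
      ε / T ^ (d-1) ≤ (isHermitian_transpose_mul_self' M).eigenvalues i).card := by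
  classical
  have hd : 0 < d := lt_of_lt_of_le hk hkd
  have hT0 : (0:ℝ) < T := lt_of_lt_of_le one_pos hT1
  have hTpow : (0:ℝ) < T ^ (d-1) := pow_pos hT0 _
  set c : ℝ := ε / T ^ (d-1) with hc
  have hc0 : 0 < c := div_pos hε hTpow
  set h0 : (Mᴴ * M).IsHermitian := isHermitian_transpose_mul_self' M with hh0
  set b := h0.eigenvectorBasis with hb
  set S : Finset (Fin d) := Finset.univ.filter (fun i => c ≤ h0.eigenvalues i) with hS
  by_contra hcard
  push_neg at hcard
  -- basic facts about H
  have hBh : Bᴴ = B := by rw [Matrix.conjTranspose_eq_transpose_of_trivial]; exact hBt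
  have h1B : (1 - B)ᴴ * (1 - B) = 1 - B := by
    rw [Matrix.conjTranspose_sub, Matrix.conjTranspose_one, hBh]
    rw [sub_mul, one_mul, mul_sub, mul_one, hB2]
    abel
  have hPSD1 : (1 - B).PosSemidef := by
    rw [← h1B]; exact Matrix.posSemidef_conjTranspose_mul_self _
  have hPSDH : (Mᴴ * M + 1 - B).PosSemidef := by
    have : Mᴴ * M + 1 - B = Mᴴ * M + (1 - B) := by rw [add_sub_assoc]
    rw [this]
    exact (Matrix.posSemidef_conjTranspose_mul_self M).add hPSD1
  set H := Mᴴ * M + 1 - B with hH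
  have hHherm : H.IsHermitian := hPSDH.1
  -- construct x
  set eL : Euc ≃ₗ[ℝ] (Fin d → ℝ) := WithLp.linearEquiv 2 ℝ (Fin d → ℝ) with heL
  set K1 : Submodule ℝ (Fin d → ℝ) := LinearMap.range B.mulVecLin with hK1
  have hfix : ∀ v ∈ K1, B *ᵥ v = v := by
    rintro v ⟨y, rfl⟩
    simp only [Matrix.mulVecLin_apply]
    rw [Matrix.mulVec_mulVec, hB2]
  set W2 : Submodule ℝ Euc := K1.map (eL.symm : (Fin d → ℝ) →ₗ[ℝ] Euc) with hW2
  have hfr2 : Module.finrank ℝ W2 = k := by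
    rw [hW2, LinearEquiv.finrank_map_eq]
    exact hrkB
  set W1 : Submodule ℝ Euc :=
    Submodule.span ℝ (Set.range fun j : {i : Fin d // i ∈ Sᶜ} => b j.1) with hW1
  have hindep : LinearIndependent ℝ (fun j : {i : Fin d // i ∈ Sᶜ} => b j.1) :=
    b.orthonormal.linearIndependent.comp Subtype.val Subtype.val_injective
  have hfr1 : Module.finrank ℝ W1 = d - S.card := by
    rw [hW1, finrank_span_eq_card hindep]
    simp [Fintype.card_coe, Finset.card_compl]
  have hfrE : Module.finrank ℝ Euc = d := by simp
  have hlow : 0 < Module.finrank ℝ ↥(W1 ⊓ W2) := by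
    have hsum := Submodule.finrank_sup_add_finrank_inf_eq W1 W2
    have hle := Submodule.finrank_le (W1 ⊔ W2)
    rw [hfrE] at hle
    have hcard' : S.card < k := hcard
    omega
  obtain ⟨⟨x, hxmem⟩, hxne'⟩ := Module.finrank_pos_iff_exists_ne_zero.1 hlow
  have hxne : x ≠ 0 := by
    intro h; exact hxne' (by simpa [Submodule.mk_eq_zero] using h)
  have hxW1 : x ∈ W1 := hxmem.1
  have hxW2 : x ∈ W2 := hxmem.2
  -- B fixes x
  have hBx : B *ᵥ (WithLp.equiv 2 (Fin d → ℝ) x) = WithLp.equiv 2 (Fin d → ℝ) x := by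
    obtain ⟨v, hv, hvx⟩ := hxW2
    have : WithLp.equiv 2 (Fin d → ℝ) x = v := by
      rw [← hvx]; rfl
    rw [this]; exact hfix v hv
  -- orthogonality
  have horth : ∀ i ∈ S, (inner ℝ (b i) x : ℝ) = 0 := by
    intro i hi
    refine Submodule.span_induction (p := fun y _ => (inner ℝ (b i) y : ℝ) = 0) ?_ ?_ ?_ ?_ hxW1
    · rintro y ⟨j, rfl⟩
      exact b.orthonormal.2 (fun hij => (Finset.mem_compl.1 j.2) (hij ▸ hi))
    · exact inner_zero_right _
    · intro y z _ _ hy hz; rw [inner_add_right, hy, hz, add_zero]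
    · intro a y _ hy; rw [real_inner_smul_right, hy, mul_zero]
  -- strict quadratic bound
  have hxx : (0:ℝ) < (inner ℝ x x : ℝ) := by
    rcases lt_or_eq_of_le (real_inner_self_nonneg (x := x)) with h | h
    · exact h
    · exact absurd (inner_self_eq_zero.1 h.symm) hxne
  have hq0 : (WithLp.equiv 2 (Fin d → ℝ) x) ⬝ᵥ ((Mᴴ * M) *ᵥ (WithLp.equiv 2 (Fin d → ℝ) x)) <
      c * (inner ℝ x x : ℝ) := by
    rw [quadform_eigen h0 x, inner_self_eq_sum_sq b x, Finset.mul_sum]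
    have hwit : ∃ i, (inner ℝ (b i) x : ℝ) ≠ 0 := by
      by_contra hall
      push_neg at hall
      apply hxne
      rw [← b.sum_repr' x]
      simp [hall]
    obtain ⟨iw, hiw⟩ := hwit
    have hiwS : iw ∉ S := fun hmem => hiw (horth iw hmem)
    apply Finset.sum_lt_sum
    · intro i _
      by_cases hiS : i ∈ S
      · rw [horth i hiS]; simp
      · have : h0.eigenvalues i < c := by
          by_contra hge
          exact hiS (Finset.mem_filter.2 ⟨Finset.mem_univ _, not_lt.1 hge⟩)
        exact mul_le_mul_of_nonneg_right (le_of_lt this) (sq_nonneg _)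
    · refine ⟨iw, Finset.mem_univ _, ?_⟩
      have : h0.eigenvalues iw < c := by
        by_contra hge
        exact hiwS (Finset.mem_filter.2 ⟨Finset.mem_univ _, not_lt.1 hge⟩)
      exact mul_lt_mul_of_pos_right this (by positivity)
  have hqH : (WithLp.equiv 2 (Fin d → ℝ) x) ⬝ᵥ (H *ᵥ (WithLp.equiv 2 (Fin d → ℝ) x)) <
      c * (inner ℝ x x : ℝ) := by
    set xv := WithLp.equiv 2 (Fin d → ℝ) x with hxv
    have hexp : H *ᵥ xv = (Mᴴ * M) *ᵥ xv + xv - B *ᵥ xv := by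
      rw [hH, Matrix.sub_mulVec, Matrix.add_mulVec, Matrix.one_mulVec]
    rw [hexp, hBx]
    simpa using hq0
  -- minimum eigenvalue of H is < c
  obtain ⟨i0, hi0⟩ := min_eig_le hHherm hd x
  have hμ : hHherm.eigenvalues i0 < c := by
    have := lt_of_le_of_lt hi0 hqH
    exact lt_of_mul_lt_mul_right this hxx.le
  -- eigenvalue bounds
  have hμnonneg : ∀ i, 0 ≤ hHherm.eigenvalues i := fun i => hPSDH.eigenvalues_nonneg i
  have htrB : 0 ≤ B.trace := by
    have hBsq : ∀ i, B i i = ∑ j, B i j * B i j := by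
      intro i
      conv_lhs => rw [← hB2]
      rw [Matrix.mul_apply]
      congr 1; ext j
      congr 1
      have := congrFun (congrFun hBt i) j
      simpa [Matrix.transpose_apply] using this
    rw [Matrix.trace]
    apply Finset.sum_nonneg
    intro i _
    rw [Matrix.diag_apply, hBsq i]
    exact Finset.sum_nonneg fun j _ => mul_self_nonneg _
  have htrH : H.trace ≤ T := by
    rw [hH]
    rw [Matrix.trace_sub, Matrix.trace_add, Matrix.trace_one]
    have : (Fintype.card (Fin d) : ℝ) = d := by simp
    rw [this]
    linarith
  have hμT : ∀ i, hHherm.eigenvalues i ≤ T := by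
    intro i
    calc hHherm.eigenvalues i ≤ ∑ j, hHherm.eigenvalues j :=
          Finset.single_le_sum (fun j _ => hμnonneg j) (Finset.mem_univ i)
      _ = H.trace := (trace_eq_sum_eigs hHherm).symm
      _ ≤ T := htrH
  -- determinant bound
  have hdetH : H.det = ∏ i, hHherm.eigenvalues i := by
    simpa using hHherm.det_eq_prod_eigenvalues
  have hprod : ∏ i, hHherm.eigenvalues i =
      hHherm.eigenvalues i0 * ∏ i ∈ Finset.univ.erase i0, hHherm.eigenvalues i :=
    (Finset.mul_prod_erase Finset.univ _ (Finset.mem_univ i0)).symm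
  have hrest : ∏ i ∈ Finset.univ.erase i0, hHherm.eigenvalues i ≤ T ^ (d-1) := by
    calc ∏ i ∈ Finset.univ.erase i0, hHherm.eigenvalues i
        ≤ ∏ _i ∈ Finset.univ.erase i0, T :=
          Finset.prod_le_prod (fun i _ => hμnonneg i) (fun i _ => hμT i)
      _ = T ^ (d-1) := by
          rw [Finset.prod_const, Finset.card_erase_of_mem (Finset.mem_univ i0)]
          simp
  have hrestnonneg : 0 ≤ ∏ i ∈ Finset.univ.erase i0, hHherm.eigenvalues i :=
    Finset.prod_nonneg fun i _ => hμnonneg i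
  have hfinal : H.det < ε := by
    rw [hdetH, hprod]
    calc hHherm.eigenvalues i0 * ∏ i ∈ Finset.univ.erase i0, hHherm.eigenvalues i
        ≤ hHherm.eigenvalues i0 * T ^ (d-1) :=
          mul_le_mul_of_nonneg_left hrest (hμnonneg i0)
      _ < c * T ^ (d-1) := mul_lt_mul_of_pos_right hμ hTpow
      _ = ε := by rw [hc]; field_simp
  exact absurd hdet (not_le.2 hfinal)

end S4E

namespace S4X
open ExteriorAlgebra
open ExteriorAlgebra

variable {d k N : ℕ}

lemma mem_ιMulti (v : Fin k → (Fin d → ℝ)) :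
    ExteriorAlgebra.ιMulti ℝ k v ∈ ⋀[ℝ]^k (Fin d → ℝ) := by
  rw [← ExteriorAlgebra.ιMulti_span_fixedDegree]
  exact Submodule.subset_span ⟨v, rfl⟩

/-- The wedge of `k` vectors, as an element of the `k`-th exterior power. -/
noncomputable def ιE (v : Fin k → (Fin d → ℝ)) : ⋀[ℝ]^k (Fin d → ℝ) :=
  ⟨ExteriorAlgebra.ιMulti ℝ k v, mem_ιMulti v⟩

lemma extPow_apply (f : (Fin d → ℝ) →ₗ[ℝ] (Fin d → ℝ)) (v : Fin k → (Fin d → ℝ)) :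
    extPowMap k f (ιE v) = ιE (f ∘ v) := by
  apply Subtype.ext
  have h1 : ((extPowMap k f) (ιE v) : ExteriorAlgebra ℝ (Fin d → ℝ)) =
      (ExteriorAlgebra.map f) ((ιE v : ⋀[ℝ]^k (Fin d → ℝ)) : ExteriorAlgebra ℝ (Fin d → ℝ)) := by
    unfold extPowMap
    rw [LinearMap.restrict_coe_apply]
    rfl
  rw [h1]
  show (ExteriorAlgebra.map f) (ExteriorAlgebra.ιMulti ℝ k v) = ExteriorAlgebra.ιMulti ℝ k (f ∘ v)
  rw [ExteriorAlgebra.map_apply_ιMulti]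

lemma ιMulti_ne_zero_of_linearIndependent {u : Fin k → (Fin d → ℝ)}
    (hu : LinearIndependent ℝ u) : ExteriorAlgebra.ιMulti ℝ k u ≠ 0 := by
  classical
  -- build an alternating functional which is 1 on `u`
  set W : Submodule ℝ (Fin d → ℝ) := Submodule.span ℝ (Set.range u) with hW
  let bw : Module.Basis (Fin k) ℝ W := Module.Basis.span hu
  obtain ⟨W', hcompl⟩ := Submodule.exists_isCompl W
  set proj : (Fin d → ℝ) →ₗ[ℝ] W := W.linearProjOfIsCompl W' hcompl with hproj
  set ℓ : (Fin d → ℝ) →ₗ[ℝ] (Fin k → ℝ) :=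
    LinearMap.pi (fun j => (bw.coord j).comp proj) with hℓ
  set φ : ((Fin d → ℝ) [⋀^Fin k]→ₗ[ℝ] ℝ) := (Matrix.detRowAlternating).compLinearMap ℓ with hφ
  have hφu : φ u = 1 := by
    rw [hφ, AlternatingMap.compLinearMap_apply]
    have hmat : (Matrix.of fun i j => ℓ (u i) j) = (1 : Matrix (Fin k) (Fin k) ℝ) := by
      ext i j
      have humem : u i ∈ W := Submodule.subset_span ⟨i, rfl⟩
      have hproju : proj (u i) = ⟨u i, humem⟩ :=
        Submodule.linearProjOfIsCompl_apply_left hcompl ⟨u i, humem⟩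
      have hbw : (⟨u i, humem⟩ : W) = bw i := by
        apply Subtype.ext
        rw [Module.Basis.span_apply]
      simp only [Matrix.of_apply, hℓ, LinearMap.pi_apply, LinearMap.comp_apply, hproju, hbw]
      by_cases h : i = j <;>
        simp [Module.Basis.coord_apply, Module.Basis.repr_self, Finsupp.single_apply, Matrix.one_apply, h]
    show Matrix.detRowAlternating (fun i => ℓ (u i)) = 1
    show (Matrix.of fun i j => ℓ (u i) j).det = 1
    rw [hmat, Matrix.det_one]
  intro hzero
  set F : (i : ℕ) → ((Fin d → ℝ) [⋀^Fin i]→ₗ[ℝ] ℝ) :=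
    Function.update (fun i => (0 : (Fin d → ℝ) [⋀^Fin i]→ₗ[ℝ] ℝ)) k φ with hF
  have h1 : ExteriorAlgebra.liftAlternating F (ExteriorAlgebra.ιMulti ℝ k u) = φ u := by
    rw [ExteriorAlgebra.liftAlternating_apply_ιMulti, hF, Function.update_self]
  rw [hzero, map_zero, hφu] at h1
  exact zero_ne_one h1

lemma ιE_ne_zero_of_linearIndependent {u : Fin k → (Fin d → ℝ)}
    (hu : LinearIndependent ℝ u) : ιE u ≠ 0 := by
  intro h
  exact ιMulti_ne_zero_of_linearIndependent hu (by simpa [ιE, Submodule.mk_eq_zero] using h)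

lemma ιE_eq_zero_of_not_linearIndependent {u : Fin k → (Fin d → ℝ)}
    (hu : ¬ LinearIndependent ℝ u) : ιE u = 0 := by
  apply Subtype.ext
  show ExteriorAlgebra.ιMulti ℝ k u = 0
  exact (ExteriorAlgebra.ιMulti ℝ k).map_linearDependent u hu

/-- index type for increasing wedges of standard basis vectors -/
abbrev SubIdx (d k : ℕ) := {s : Finset (Fin d) // s.card = k}

noncomputable def genWedge (s : SubIdx d k) : ⋀[ℝ]^k (Fin d → ℝ) :=
  ιE (fun i => Pi.basisFun ℝ (Fin d) ((s.1.orderIsoOfFin s.2) i))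

lemma ιMulti_mem_span_genWedge (v : Fin k → (Fin d → ℝ)) :
    ExteriorAlgebra.ιMulti ℝ k v ∈ Submodule.span ℝ
      (Set.range fun s : SubIdx d k => (genWedge s : ExteriorAlgebra ℝ (Fin d → ℝ))) := by
  classical
  set e : Fin d → (Fin d → ℝ) := fun j => Pi.basisFun ℝ (Fin d) j with he
  set f := ExteriorAlgebra.ιMulti ℝ k (M := Fin d → ℝ) with hf
  have hv : v = fun i => ∑ j, v i j • e j := by
    funext i
    have := (Pi.basisFun ℝ (Fin d)).sum_repr (v i)
    simp only [Pi.basisFun_repr] at this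
    exact this.symm
  have hexp : f v = ∑ c : Fin k → Fin d, (∏ i, v i (c i)) • f (fun i => e (c i)) := by
    conv_lhs => rw [hv]
    have h1 : f.toMultilinearMap (fun i => ∑ j, v i j • e j) =
        ∑ c : Fin k → Fin d, f.toMultilinearMap (fun i => v i (c i) • e (c i)) :=
      f.toMultilinearMap.map_sum (fun i j => v i j • e j)
    have h2 : ∀ c : Fin k → Fin d, f.toMultilinearMap (fun i => v i (c i) • e (c i)) =
        (∏ i, v i (c i)) • f.toMultilinearMap (fun i => e (c i)) := fun c =>
      f.toMultilinearMap.map_smul_univ (fun i => v i (c i)) (fun i => e (c i))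
    show f.toMultilinearMap (fun i => ∑ j, v i j • e j) = _
    rw [h1]
    exact Finset.sum_congr rfl (fun c _ => h2 c)
  rw [hexp]
  apply Submodule.sum_mem
  intro c _
  apply Submodule.smul_mem
  by_cases hcinj : Function.Injective c
  · -- reorder into an increasing wedge
    set s : Finset (Fin d) := Finset.univ.image c with hs
    have hcard : s.card = k := by
      rw [hs, Finset.card_image_of_injective _ hcinj, Finset.card_univ, Fintype.card_fin]
    set oi := s.orderIsoOfFin hcard with hoi
    set cS : Fin k → {x // x ∈ s} := fun i => ⟨c i, Finset.mem_image_of_mem c (Finset.mem_univ i)⟩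
      with hcS
    have hcSinj : Function.Injective cS := fun a b hab => hcinj (congrArg Subtype.val hab)
    have hbij : Function.Bijective cS :=
      (Fintype.bijective_iff_injective_and_card cS).2 ⟨hcSinj, by simp [Fintype.card_coe, hcard]⟩
    set σ : Equiv.Perm (Fin k) := (Equiv.ofBijective cS hbij).trans oi.toEquiv.symm with hσ
    have hval : ∀ i, oi (σ i) = (Equiv.ofBijective cS hbij) i := by
      intro i
      simp only [hσ, Equiv.trans_apply]
      exact oi.toEquiv.apply_symm_apply _
    have hcomp : (fun i => e ((oi i : Fin d))) ∘ σ = fun i => e (c i) := by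
      funext i
      simp only [Function.comp_apply]
      congr 1
      rw [show ((oi (σ i) : Fin d)) = c i from by rw [hval i]; rfl]
    have hperm : f (fun i => e (c i)) =
        Equiv.Perm.sign σ • f (fun i => e ((oi i : Fin d))) := by
      rw [← hcomp]
      exact AlternatingMap.map_perm f _ σ
    have hgen : f (fun i => e ((oi i : Fin d))) =
        (genWedge (⟨s, hcard⟩ : SubIdx d k) : ExteriorAlgebra ℝ (Fin d → ℝ)) := rfl
    rw [hperm, hgen]
    have hmem : (genWedge (⟨s, hcard⟩ : SubIdx d k) : ExteriorAlgebra ℝ (Fin d → ℝ)) ∈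
        Submodule.span ℝ
          (Set.range fun s : SubIdx d k => (genWedge s : ExteriorAlgebra ℝ (Fin d → ℝ))) :=
      Submodule.subset_span ⟨⟨s, hcard⟩, rfl⟩
    rcases Int.units_eq_one_or (Equiv.Perm.sign σ) with hsgn | hsgn
    · rw [hsgn, one_smul]; exact hmem
    · rw [hsgn]
      have : (-1 : ℤˣ) • (genWedge (⟨s, hcard⟩ : SubIdx d k) : ExteriorAlgebra ℝ (Fin d → ℝ)) =
          -(genWedge (⟨s, hcard⟩ : SubIdx d k) : ExteriorAlgebra ℝ (Fin d → ℝ)) := by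
        rw [Units.smul_def]
        simp
      rw [this]
      exact Submodule.neg_mem _ hmem
  · have h0 : f (fun i => e (c i)) = 0 := by
      rw [Function.not_injective_iff] at hcinj
      obtain ⟨a, b, hab, hne⟩ := hcinj
      exact AlternatingMap.map_eq_zero_of_eq f _ (by rw [hab]) hne
    rw [h0]
    exact Submodule.zero_mem _

lemma span_genWedge_top :
    Submodule.span ℝ (Set.range (genWedge : SubIdx d k → ⋀[ℝ]^k (Fin d → ℝ))) = ⊤ := by
  classical
  apply Submodule.map_injective_of_injective (Submodule.injective_subtype (⋀[ℝ]^k (Fin d → ℝ)))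
  rw [Submodule.map_span, Submodule.map_subtype_top]
  have himg : (⋀[ℝ]^k (Fin d → ℝ)).subtype '' (Set.range (genWedge : SubIdx d k → _)) =
      Set.range fun s : SubIdx d k => (genWedge s : ExteriorAlgebra ℝ (Fin d → ℝ)) := by
    ext x
    constructor
    · rintro ⟨y, ⟨t, rfl⟩, rfl⟩; exact ⟨t, rfl⟩
    · rintro ⟨t, rfl⟩; exact ⟨genWedge t, ⟨t, rfl⟩, rfl⟩
  rw [himg]
  apply le_antisymm
  · rw [Submodule.span_le]
    rintro x ⟨t, rfl⟩
    exact mem_ιMulti _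
  · intro x hx
    have hx' : x ∈ Submodule.span ℝ
        (Set.range (ExteriorAlgebra.ιMulti ℝ k (M := Fin d → ℝ))) := by
      rw [ExteriorAlgebra.ιMulti_span_fixedDegree]; exact hx
    refine Submodule.span_le.2 ?_ hx'
    rintro y ⟨v, rfl⟩
    exact ιMulti_mem_span_genWedge v

lemma finrank_extPow_le :
    Module.finrank ℝ (⋀[ℝ]^k (Fin d → ℝ)) ≤ Nat.choose d k := by
  classical
  have h1 := finrank_span_le_card (R := ℝ)
    (Set.range (genWedge : SubIdx d k → ⋀[ℝ]^k (Fin d → ℝ)))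
  rw [span_genWedge_top] at h1
  have h2 : Module.finrank ℝ (⊤ : Submodule ℝ (⋀[ℝ]^k (Fin d → ℝ))) =
      Module.finrank ℝ (⋀[ℝ]^k (Fin d → ℝ)) := finrank_top ℝ _
  have h3 : (Set.range (genWedge : SubIdx d k → ⋀[ℝ]^k (Fin d → ℝ))).toFinset.card ≤
      Nat.choose d k := by
    calc (Set.range (genWedge : SubIdx d k → ⋀[ℝ]^k (Fin d → ℝ))).toFinset.card
        ≤ Fintype.card (SubIdx d k) := by
          rw [Set.toFinset_range]
          exact le_trans (Finset.card_image_le) (by simp)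
      _ = Nat.choose d k := by
          rw [Fintype.card_finset_len, Fintype.card_fin]
  omega

lemma wordProd_nil (A : Fin N → Matrix (Fin d) (Fin d) ℝ) (kk : Fin 0 → Fin N) :
    wordProd A kk = 1 := by
  unfold wordProd
  rw [List.ofFn_zero, List.prod_nil]

lemma wordProd_cons (A : Fin N → Matrix (Fin d) (Fin d) ℝ) {m : ℕ} (i : Fin N)
    (kk : Fin m → Fin N) : wordProd A (Fin.cons i kk) = A i * wordProd A kk := by
  unfold wordProd
  rw [List.ofFn_succ]
  simp [Fin.cons_zero, Fin.cons_succ]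

lemma exists_indep_of_rank (Q : Matrix (Fin d) (Fin d) ℝ) (hQ : k ≤ Q.rank) :
    ∃ x : Fin k → (Fin d → ℝ), LinearIndependent ℝ (fun j => Q *ᵥ x j) := by
  classical
  set Rg := LinearMap.range Q.mulVecLin with hRg
  have hfr : Module.finrank ℝ Rg = Q.rank := rfl
  let br := Module.finBasis ℝ Rg
  have hk' : k ≤ Module.finrank ℝ Rg := by rw [hfr]; exact hQ
  set z : Fin k → Rg := fun j => br (Fin.castLE hk' j) with hzdef
  have hz : LinearIndependent ℝ z := br.linearIndependent.comp _ (Fin.castLE_injective hk')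
  have hchoice : ∀ j, ∃ y, Q.mulVecLin y = (z j : Fin d → ℝ) := fun j => (z j).2
  choose x hxz using hchoice
  refine ⟨x, ?_⟩
  have hrw : (fun j => Q *ᵥ x j) = fun j => ((z j : Rg) : Fin d → ℝ) := funext fun j => by
    rw [← hxz j]; rfl
  rw [hrw]
  exact hz.map' Rg.subtype (Submodule.ker_subtype Rg)

set_option synthInstance.maxHeartbeats 1000000 in
lemma exists_good_word (A : Fin N → Matrix (Fin d) (Fin d) ℝ) (Q : Matrix (Fin d) (Fin d) ℝ)
    (hkirr : kIrreducible k A)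
    (x : Fin k → (Fin d → ℝ)) (hx : LinearIndependent ℝ (fun j => Q *ᵥ x j))
    (u : Fin k → (Fin d → ℝ)) (hu : LinearIndependent ℝ u) :
    ∃ (m : ℕ) (kk : Fin m → Fin N), m + 1 ≤ Nat.choose d k ∧
      LinearIndependent ℝ (fun j => (Q * wordProd A kk) *ᵥ u j) := by
  classical
  set D := Module.finrank ℝ (⋀[ℝ]^k (Fin d → ℝ)) with hD
  set gens : ℕ → Set (⋀[ℝ]^k (Fin d → ℝ)) := fun n =>
    {z | ∃ m, m ≤ n ∧ ∃ kk : Fin m → Fin N, z = ιE (fun j => wordProd A kk *ᵥ u j)} with hgens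
  set Sn : ℕ → Submodule ℝ (⋀[ℝ]^k (Fin d → ℝ)) := fun n => Submodule.span ℝ (gens n) with hSn
  have hmono : Monotone Sn := by
    apply monotone_nat_of_le_succ
    intro n
    apply Submodule.span_mono
    rintro z ⟨m, hm, kk, hz⟩
    exact ⟨m, by omega, kk, hz⟩
  have hu0 : ιE u ∈ Sn 0 := by
    apply Submodule.subset_span
    refine ⟨0, le_refl 0, (fun j => j.elim0), ?_⟩
    congr 1
    funext j
    rw [wordProd_nil, Matrix.one_mulVec]
  have huNe : ιE u ≠ 0 := ιE_ne_zero_of_linearIndependent hu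
  have hne : ∀ n, Sn n ≠ ⊥ := by
    intro n hbot
    have hmem : ιE u ∈ Sn n := hmono (Nat.zero_le n) hu0
    rw [hbot, Submodule.mem_bot] at hmem
    exact huNe hmem
  have hinv : ∀ n, Sn (n+1) = Sn n →
      ∀ i, (Sn n).map (extPowMap k (Matrix.toLin' (A i))) ≤ Sn n := by
    intro n heq i
    have hmap : (Sn n).map (extPowMap k (Matrix.toLin' (A i))) =
        Submodule.span ℝ ((extPowMap k (Matrix.toLin' (A i))) '' gens n) :=
      Submodule.map_span _ _
    rw [hmap]
    refine le_trans ?_ (le_of_eq heq)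
    apply Submodule.span_le.2
    rintro z ⟨w, ⟨m, hm, kk, rfl⟩, rfl⟩
    apply Submodule.subset_span
    refine ⟨m+1, by omega, Fin.cons i kk, ?_⟩
    rw [extPow_apply]
    congr 1
    funext j
    show Matrix.toLin' (A i) (wordProd A kk *ᵥ u j) = wordProd A (Fin.cons i kk) *ᵥ u j
    rw [Matrix.toLin'_apply, Matrix.mulVec_mulVec, wordProd_cons]
  have hgrow : ∀ n, n + 1 ≤ Module.finrank ℝ (Sn n) ∨ Sn n = ⊤ := by
    intro n
    induction n with
    | zero =>
      left
      have : 0 < Module.finrank ℝ (Sn 0) := by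
        refine (Module.finrank_pos_iff_exists_ne_zero (R := ℝ) (M := ↥(Sn 0))).2 ?_
        refine ⟨⟨ιE u, hu0⟩, ?_⟩
        intro h
        rw [Submodule.mk_eq_zero] at h
        exact huNe h
      omega
    | succ n ih =>
      rcases ih with h | h
      · by_cases heq : Sn (n+1) = Sn n
        · right
          rcases hkirr (Sn n) (hinv n heq) with hbot | htop
          · exact absurd hbot (hne n)
          · rw [heq, htop]
        · left
          have hlt : Sn n < Sn (n+1) :=
            lt_of_le_of_ne (hmono (Nat.le_succ n)) (Ne.symm heq)
          have := Submodule.finrank_lt_finrank_of_lt hlt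
          omega
      · right
        exact eq_top_iff.2 (h ▸ hmono (Nat.le_succ n))
  have hD1 : 1 ≤ D := by
    have : 0 < Module.finrank ℝ (⋀[ℝ]^k (Fin d → ℝ)) :=
      Module.finrank_pos_iff_exists_ne_zero.2 ⟨ιE u, huNe⟩
    omega
  have htopD : Sn (D - 1) = ⊤ := by
    rcases hgrow (D-1) with h | h
    · apply Submodule.eq_top_of_finrank_eq
      have hle := Submodule.finrank_le (Sn (D-1))
      omega
    · exact h
  set TQ := extPowMap k (Matrix.toLin' Q) with hTQ
  have hTQx : TQ (ιE x) ≠ 0 := by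
    rw [hTQ, extPow_apply]
    have hrw : (Matrix.toLin' Q) ∘ x = fun j => Q *ᵥ x j :=
      funext fun j => by rw [Function.comp_apply, Matrix.toLin'_apply]
    rw [hrw]
    exact ιE_ne_zero_of_linearIndependent hx
  have hexists : ∃ z ∈ gens (D-1), TQ z ≠ 0 := by
    by_contra hall
    push_neg at hall
    have hker : Sn (D-1) ≤ LinearMap.ker TQ :=
      Submodule.span_le.2 (fun z hz => LinearMap.mem_ker.2 (hall z hz))
    rw [htopD] at hker
    exact hTQx (LinearMap.mem_ker.1 (hker (Submodule.mem_top)))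
  obtain ⟨z, ⟨m, hm, kk, rfl⟩, hz⟩ := hexists
  refine ⟨m, kk, ?_, ?_⟩
  · have := finrank_extPow_le (d := d) (k := k)
    omega
  · by_contra hdep
    apply hz
    rw [hTQ, extPow_apply]
    have hrw : (Matrix.toLin' Q) ∘ (fun j => wordProd A kk *ᵥ u j) =
        fun j => (Q * wordProd A kk) *ᵥ u j :=
      funext fun j => by rw [Function.comp_apply, Matrix.toLin'_apply, Matrix.mulVec_mulVec]
    rw [hrw]
    exact ιE_eq_zero_of_not_linearIndependent hdep

lemma trace_eq_sum_eigs' {H : Matrix (Fin d) (Fin d) ℝ} (hH : H.IsHermitian) :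
    H.trace = ∑ i, hH.eigenvalues i := by
  simpa using hH.trace_eq_sum_eigenvalues

lemma trace_eq_rank (B : Matrix (Fin d) (Fin d) ℝ) (hB2 : B * B = B) (hBt : Bᵀ = B) :
    B.trace = (B.rank : ℝ) := by
  classical
  have hH : B.IsHermitian := by
    rw [Matrix.IsHermitian, Matrix.conjTranspose_eq_transpose_of_trivial]; exact hBt
  have heig : ∀ i, hH.eigenvalues i = 0 ∨ hH.eigenvalues i = 1 := by
    intro i
    have h1 := hH.mulVec_eigenvectorBasis i
    have h2 : (B * B) *ᵥ ⇑(hH.eigenvectorBasis i) =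
        (hH.eigenvalues i * hH.eigenvalues i) • ⇑(hH.eigenvectorBasis i) := by
      rw [← Matrix.mulVec_mulVec, h1, Matrix.mulVec_smul, h1, smul_smul]
    rw [hB2, h1] at h2
    have h3 : (hH.eigenvalues i - hH.eigenvalues i * hH.eigenvalues i) •
        ⇑(hH.eigenvectorBasis i) = 0 := by
      rw [sub_smul, h2, sub_self]
    have hv : ⇑(hH.eigenvectorBasis i) ≠ 0 := by
      intro h
      apply hH.eigenvectorBasis.orthonormal.ne_zero i
      apply (WithLp.equiv 2 (Fin d → ℝ)).injective
      simpa using h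
    rcases smul_eq_zero.1 h3 with h | h
    · have : hH.eigenvalues i * (1 - hH.eigenvalues i) = 0 := by linarith [h]
      rcases mul_eq_zero.1 this with h' | h'
      · exact Or.inl h'
      · exact Or.inr (by linarith)
    · exact absurd h hv
  rw [trace_eq_sum_eigs' hH, hH.rank_eq_card_non_zero_eigs]
  rw [Fintype.card_subtype]
  rw [Finset.card_eq_sum_ones, Nat.cast_sum]
  rw [Finset.sum_filter]
  apply Finset.sum_congr rfl
  intro i _
  rcases heig i with h | h <;> simp [h]

lemma entry_bound (B : Matrix (Fin d) (Fin d) ℝ) (hB2 : B * B = B) (hBt : Bᵀ = B) :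
    ∀ i j, |B i j| ≤ 1 := by
  have hBsq : ∀ j, B j j = ∑ i, B i j * B i j := by
    intro j
    conv_lhs => rw [← hB2]
    rw [Matrix.mul_apply]
    congr 1; ext i
    have h1 : B j i = B i j := by
      have := congrFun (congrFun hBt i) j
      simpa [Matrix.transpose_apply] using this
    rw [h1]
  intro i j
  have h1 : B i j * B i j ≤ B j j := by
    have := Finset.single_le_sum (f := fun l => B l j * B l j)
      (fun l _ => mul_self_nonneg _) (Finset.mem_univ i)
    rw [← hBsq j] at this
    exact this
  have h2 : B j j * B j j ≤ B j j := by
    have := Finset.single_le_sum (f := fun l => B l j * B l j)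
      (fun l _ => mul_self_nonneg _) (Finset.mem_univ j)
    rw [← hBsq j] at this
    exact this
  have h3 : B j j ≤ 1 := by nlinarith [mul_self_nonneg (B j j)]
  exact abs_le.2 ⟨by nlinarith, by nlinarith⟩

lemma isCompact_projSet (k : ℕ) :
    IsCompact {B : Matrix (Fin d) (Fin d) ℝ | B * B = B ∧ Bᵀ = B ∧ B.trace = (k:ℝ)} := by
  have hK : IsCompact {B : Matrix (Fin d) (Fin d) ℝ | ∀ i j, B i j ∈ Set.Icc (-1:ℝ) 1} := by
    have h1 : IsCompact {f : Fin d → Fin d → ℝ | ∀ i j, f i j ∈ Set.Icc (-1:ℝ) 1} := by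
      have h2 := isCompact_univ_pi (s := fun _ : Fin d =>
        {g : Fin d → ℝ | ∀ j, g j ∈ Set.Icc (-1:ℝ) 1})
        (fun _ => by
          have h3 := isCompact_univ_pi (s := fun _ : Fin d => Set.Icc (-1:ℝ) 1)
            (fun _ => isCompact_Icc)
          convert h3 using 1
          ext g
          simp only [Set.mem_univ_pi, Set.mem_setOf_eq])
      convert h2 using 1
      ext f
      simp only [Set.mem_univ_pi, Set.mem_setOf_eq]
    exact h1
  apply IsCompact.of_isClosed_subset hK
  · apply IsClosed.inter
    · exact isClosed_eq ((continuous_id.matrix_mul continuous_id)) continuous_id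
    · apply IsClosed.inter
      · exact isClosed_eq (continuous_id.matrix_transpose) continuous_id
      · exact isClosed_eq (continuous_id.matrix_trace) continuous_const
  · rintro B ⟨hB2, hBt, _⟩
    intro i j
    have := entry_bound B hB2 hBt i j
    rw [Set.mem_Icc]
    exact abs_le.1 this

lemma exists_proj {k : ℕ} (hkd : k ≤ d) :
    ∃ B : Matrix (Fin d) (Fin d) ℝ, B * B = B ∧ Bᵀ = B ∧ B.rank = k := by
  classical
  set w : Fin d → ℝ := fun i => if (i:ℕ) < k then 1 else 0 with hw
  refine ⟨Matrix.diagonal w, ?_, ?_, ?_⟩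
  · rw [Matrix.diagonal_mul_diagonal]
    have hww : (fun i => w i * w i) = w := by
      funext i
      by_cases h : (i:ℕ) < k <;> simp [hw, h]
    rw [hww]
  · exact Matrix.diagonal_transpose w
  · rw [Matrix.rank_diagonal]
    rw [Fintype.card_subtype]
    have hfilter : (Finset.univ.filter fun i : Fin d => w i ≠ 0) =
        Finset.univ.filter fun i : Fin d => (i:ℕ) < k := by
      apply Finset.filter_congr
      intro i _
      by_cases h : (i:ℕ) < k <;> simp [hw, h]
    rw [hfilter]
    have hmap : (Finset.univ.filter fun i : Fin d => (i:ℕ) < k) =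
        Finset.univ.map ⟨Fin.castLE hkd, Fin.castLE_injective hkd⟩ := by
      ext a
      simp only [Finset.mem_filter, Finset.mem_univ, true_and, Finset.mem_map,
        Function.Embedding.coeFn_mk]
      constructor
      · intro h
        exact ⟨⟨a.1, h⟩, by ext; rfl⟩
      · rintro ⟨b, rfl⟩
        exact b.2
    rw [hmap, Finset.card_map, Finset.card_univ, Fintype.card_fin]

lemma trace_bound (K B : Matrix (Fin d) (Fin d) ℝ) (hB : ∀ i j, |B i j| ≤ 1) :
    ((K * B)ᴴ * (K * B)).trace ≤ ∑ i : Fin d, ∑ _j : Fin d, (∑ l, |K i l|)^2 := by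
  set M := K * B with hM
  have htr : (Mᴴ * M).trace = ∑ j, ∑ i, M i j * M i j := by
    rw [Matrix.trace]
    apply Finset.sum_congr rfl
    intro j _
    rw [Matrix.diag_apply, Matrix.mul_apply]
    apply Finset.sum_congr rfl
    intro i _
    simp [Matrix.conjTranspose_apply]
  rw [htr, Finset.sum_comm]
  apply Finset.sum_le_sum
  intro i _
  apply Finset.sum_le_sum
  intro j _
  have habs : |M i j| ≤ ∑ l, |K i l| := by
    rw [hM, Matrix.mul_apply]
    calc |∑ l, K i l * B l j| ≤ ∑ l, |K i l * B l j| := Finset.abs_sum_le_sum_abs _ _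
      _ ≤ ∑ l, |K i l| := by
          apply Finset.sum_le_sum
          intro l _
          rw [abs_mul]
          exact mul_le_of_le_one_right (abs_nonneg _) (hB l j)
  calc M i j * M i j = |M i j| * |M i j| := (abs_mul_abs_self _).symm
    _ ≤ (∑ l, |K i l|) * (∑ l, |K i l|) :=
        mul_le_mul habs habs (abs_nonneg _) (le_trans (abs_nonneg _) habs)
    _ = (∑ l, |K i l|)^2 := (sq _).symm

end S4X

end Stmt4Aux

/-- positivity of the minimum in the proof of Lemma 4. If `(A_1,…,A_N)`
is `k`-irreducible with `1 ≤ k ≤ rank Q`, then the minimum over rank-`k` orthogonal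
projections `B` of `max_{|kk| ≤ d.choose k} σ_k(Q A_kk B)` is strictly positive, i.e. there
exists `κ > 0` bounding all these maxima from below. -/
theorem statement4 {d N : ℕ} (A : Fin N → Matrix (Fin d) (Fin d) ℝ)
    (hInv : ∀ i, IsUnit (A i)) (Q : Matrix (Fin d) (Fin d) ℝ) (k : ℕ)
    (hk0 : 1 ≤ k) (hk2 : k ≤ Q.rank) (hkirr : kIrreducible k A) :
    ∃ κ : ℝ, 0 < κ ∧ ∀ B : Matrix (Fin d) (Fin d) ℝ,
      B * B = B → Bᵀ = B → B.rank = k →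
      ∃ (m : ℕ) (kk : Fin m → Fin N), m ≤ Nat.choose d k ∧
        κ ≤ sval (Q * wordProd A kk * B) k := by
  classical
  have hkd : k ≤ d := by
    have h1 := Matrix.rank_le_card_width Q
    simp only [Fintype.card_fin] at h1
    omega
  have hd : 0 < d := lt_of_lt_of_le hk0 hkd
  set D0 := Nat.choose d k with hD0
  have hD0pos : 0 < D0 := Nat.choose_pos hkd
  -- the finite list of words of length at most `D0`
  let Words := (m : Fin (D0+1)) × (Fin (m : ℕ) → Fin N)
  set wlist : List Words := (Finset.univ (α := Words)).toList with hwlist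
  set gw : Words → Matrix (Fin d) (Fin d) ℝ → ℝ := fun w B =>
    ((Q * wordProd A w.2 * B)ᴴ * (Q * wordProd A w.2 * B) + 1 - B).det with hgw
  set F : Matrix (Fin d) (Fin d) ℝ → ℝ := fun B => (wlist.map fun w => gw w B).foldr max 0
    with hF
  have hgwcont : ∀ w : Words, Continuous (gw w) := by
    intro w
    apply Continuous.matrix_det
    have h1 : Continuous fun B : Matrix (Fin d) (Fin d) ℝ => Q * wordProd A w.2 * B :=
      continuous_const.matrix_mul continuous_id
    exact ((h1.matrix_conjTranspose.matrix_mul h1).add continuous_const).sub continuous_id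
  have hFcont : Continuous F := S4L.continuous_foldr_max wlist gw hgwcont 0
  set SS := {B : Matrix (Fin d) (Fin d) ℝ | B * B = B ∧ Bᵀ = B ∧ B.trace = (k:ℝ)} with hSS
  have hScompact := S4X.isCompact_projSet (d := d) k
  have hmemS : ∀ B : Matrix (Fin d) (Fin d) ℝ, B * B = B → Bᵀ = B → B.rank = k → B ∈ SS := by
    intro B h1 h2 h3
    exact ⟨h1, h2, by rw [S4X.trace_eq_rank B h1 h2, h3]⟩
  have hrankS : ∀ B ∈ SS, B.rank = k := by
    rintro B ⟨h1, h2, h3⟩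
    have h4 := S4X.trace_eq_rank B h1 h2
    rw [h4] at h3
    exact_mod_cast h3
  obtain ⟨B₀, hB₀1, hB₀2, hB₀3⟩ := S4X.exists_proj hkd
  obtain ⟨B₁, hB₁S, hB₁min⟩ :=
    hScompact.exists_isMinOn ⟨B₀, hmemS _ hB₀1 hB₀2 hB₀3⟩ hFcont.continuousOn
  set ε := F B₁ with hε
  -- trace constant
  set tW : Words → ℝ := fun w =>
    ∑ i : Fin d, ∑ _j : Fin d, (∑ l, |(Q * wordProd A w.2) i l|)^2 with htW
  set T : ℝ := 1 + d + (wlist.map tW).foldr max 0 with hT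
  have hfold0 : (0:ℝ) ≤ (wlist.map tW).foldr max 0 := S4L.foldr_max_init _ 0
  have hT1 : 1 ≤ T := by
    rw [hT]
    have : (0:ℝ) ≤ d := Nat.cast_nonneg d
    linarith
  have hT0 : (0:ℝ) < T := lt_of_lt_of_le one_pos hT1
  -- positivity of the minimum
  have hεpos : 0 < ε := by
    have hB₁2 : B₁ * B₁ = B₁ := hB₁S.1
    have hB₁t : B₁ᵀ = B₁ := hB₁S.2.1
    have hB₁rk : B₁.rank = k := hrankS B₁ hB₁S
    -- a basis of the range of B₁
    set Rg := LinearMap.range B₁.mulVecLin with hRg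
    have hfrRg : Module.finrank ℝ Rg = k := hB₁rk
    let bu : Module.Basis (Fin k) ℝ Rg := (Module.finBasis ℝ Rg).reindex (finCongr hfrRg)
    set u : Fin k → (Fin d → ℝ) := fun j => (bu j : Fin d → ℝ) with hu
    have huind : LinearIndependent ℝ u :=
      bu.linearIndependent.map' Rg.subtype (Submodule.ker_subtype Rg)
    obtain ⟨x, hx⟩ := S4X.exists_indep_of_rank Q hk2
    obtain ⟨m, kk, hm1, hindep⟩ := S4X.exists_good_word A Q hkirr x hx u huind
    set w1 : Words := ⟨⟨m, by omega⟩, kk⟩ with hw1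
    -- positive definiteness at B₁
    set M := Q * wordProd A kk * B₁ with hM
    have hB₁h : B₁ᴴ = B₁ := by
      rw [Matrix.conjTranspose_eq_transpose_of_trivial]; exact hB₁t
    have h1B : (1 - B₁)ᴴ * (1 - B₁) = 1 - B₁ := by
      rw [Matrix.conjTranspose_sub, Matrix.conjTranspose_one, hB₁h]
      rw [sub_mul, one_mul, mul_sub, mul_one, hB₁2]
      abel
    have hdotself : ∀ (C : Matrix (Fin d) (Fin d) ℝ) (v : Fin d → ℝ),
        v ⬝ᵥ ((Cᴴ * C) *ᵥ v) = (C *ᵥ v) ⬝ᵥ (C *ᵥ v) := by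
      intro C v
      rw [← Matrix.mulVec_mulVec, Matrix.dotProduct_mulVec]
      congr 1
      rw [show Cᴴ = Cᵀ from Matrix.conjTranspose_eq_transpose_of_trivial C]
      rw [Matrix.vecMul_transpose]
    have hPD : (Mᴴ * M + 1 - B₁).PosDef := by
      rw [Matrix.posDef_iff_dotProduct_mulVec]
      constructor
      · have hpsd : (Mᴴ * M + 1 - B₁).PosSemidef := by
          have heq : Mᴴ * M + 1 - B₁ = Mᴴ * M + (1 - B₁) := by rw [add_sub_assoc]
          rw [heq]
          have h2 : (1 - B₁).PosSemidef := by
            rw [← h1B]; exact Matrix.posSemidef_conjTranspose_mul_self _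
          exact (Matrix.posSemidef_conjTranspose_mul_self M).add h2
        exact hpsd.1
      · intro v hv
        have hexpand : v ⬝ᵥ ((Mᴴ * M + 1 - B₁) *ᵥ v) =
            (M *ᵥ v) ⬝ᵥ (M *ᵥ v) + ((1 - B₁) *ᵥ v) ⬝ᵥ ((1 - B₁) *ᵥ v) := by
          have heq : Mᴴ * M + 1 - B₁ = Mᴴ * M + (1 - B₁)ᴴ * (1 - B₁) := by
            rw [h1B, add_sub_assoc]
          rw [heq, Matrix.add_mulVec, dotProduct_add, hdotself M v, hdotself (1 - B₁) v]
        have hd1 : (0:ℝ) ≤ (M *ᵥ v) ⬝ᵥ (M *ᵥ v) :=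
          Finset.sum_nonneg fun i _ => mul_self_nonneg _
        have hd2 : (0:ℝ) ≤ ((1 - B₁) *ᵥ v) ⬝ᵥ ((1 - B₁) *ᵥ v) :=
          Finset.sum_nonneg fun i _ => mul_self_nonneg _
        have hne : v ⬝ᵥ ((Mᴴ * M + 1 - B₁) *ᵥ v) ≠ 0 := by
          rw [hexpand]
          intro hzero
          have hMv : M *ᵥ v = 0 := by
            apply dotProduct_self_eq_zero.1
            linarith
          have hBv : (1 - B₁) *ᵥ v = 0 := by
            apply dotProduct_self_eq_zero.1
            linarith
          have hfix : B₁ *ᵥ v = v := by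
            have h5 : (1 - B₁) *ᵥ v = v - B₁ *ᵥ v := by
              rw [Matrix.sub_mulVec, Matrix.one_mulVec]
            rw [h5] at hBv
            have := sub_eq_zero.1 hBv
            exact this.symm
          -- v lies in the range of B₁
          have hvRg : v ∈ Rg := ⟨v, hfix⟩
          set velt : Rg := ⟨v, hvRg⟩ with hvelt
          have hsum : v = ∑ j, (bu.repr velt) j • u j := by
            have h6 := bu.sum_repr velt
            have h7 := congrArg (Rg.subtype) h6
            rw [map_sum] at h7
            simp only [_root_.map_smul, Submodule.coe_subtype] at h7
            exact h7.symm
          have hQWv : (Q * wordProd A kk) *ᵥ v = 0 := by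
            have h8 : M *ᵥ v = (Q * wordProd A kk) *ᵥ (B₁ *ᵥ v) := by
              rw [hM, Matrix.mulVec_mulVec]
            rw [h8, hfix] at hMv
            exact hMv
          have hcoef : ∀ j, (bu.repr velt) j = 0 := by
            have h9 : (Q * wordProd A kk) *ᵥ v =
                ∑ j, (bu.repr velt) j • ((Q * wordProd A kk) *ᵥ u j) := by
              conv_lhs => rw [hsum]
              rw [show (Q * wordProd A kk) *ᵥ (∑ j, (bu.repr velt) j • u j) =
                  (Q * wordProd A kk).mulVecLin (∑ j, (bu.repr velt) j • u j) from rfl]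
              rw [map_sum]
              refine Finset.sum_congr rfl fun j _ => ?_
              rw [_root_.map_smul, Matrix.mulVecLin_apply]
            rw [hQWv] at h9
            exact Fintype.linearIndependent_iff.1 hindep _ h9.symm
          have hvelt0 : velt = 0 := by
            apply bu.repr.injective
            ext j
            simp [hcoef j]
          apply hv
          have h10 := congrArg (Subtype.val) hvelt0
          simpa [hvelt] using h10
        rcases lt_or_eq_of_le (by rw [hexpand]; linarith : (0:ℝ) ≤ v ⬝ᵥ ((Mᴴ * M + 1 - B₁) *ᵥ v))
          with hlt | heq0
        · simpa using hlt
        · exact absurd heq0.symm hne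
    have hgwpos : 0 < gw w1 B₁ := hPD.det_pos
    have hw1mem : gw w1 B₁ ∈ (wlist.map fun w => gw w B₁) :=
      List.mem_map.2 ⟨w1, by simp [hwlist], rfl⟩
    exact lt_of_lt_of_le hgwpos (S4L.foldr_max_le_mem 0 hw1mem)
  -- conclusion
  have hcpos : 0 < ε / T ^ (d-1) := div_pos hεpos (pow_pos hT0 _)
  refine ⟨Real.sqrt (ε / T ^ (d-1)), Real.sqrt_pos.2 hcpos, ?_⟩
  intro B hB2 hBt hBrk
  have hBS : B ∈ SS := hmemS B hB2 hBt hBrk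
  have hFB : ε ≤ F B := isMinOn_iff.1 hB₁min B hBS
  obtain ⟨gv, hgvmem, hgvge⟩ := S4L.exists_mem_of_le_foldr_max hFB hεpos
  rw [List.mem_map] at hgvmem
  obtain ⟨w, hwmem, rfl⟩ := hgvmem
  refine ⟨(w.1 : ℕ), w.2, Fin.is_le w.1, ?_⟩
  set M := Q * wordProd A w.2 * B with hM
  have htrb : (Mᴴ * M).trace + d ≤ T := by
    have h1 := S4X.trace_bound (Q * wordProd A w.2) B (S4X.entry_bound B hB2 hBt)
    have h2 : tW w ≤ (wlist.map tW).foldr max 0 :=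
      S4L.foldr_max_le_mem 0 (List.mem_map.2 ⟨w, by simp [hwlist], rfl⟩)
    have h3 : (Mᴴ * M).trace ≤ tW w := h1
    rw [hT]
    linarith
  have hcount := S4E.eig_count hk0 hkd M B hB2 hBt (hrankS B hBS) hT1 htrb hεpos hgvge
  apply S4L.le_sval M k hk0 hkd
  refine le_trans hcount (Finset.card_le_card ?_)
  intro i hi
  rw [Finset.mem_filter] at hi ⊢
  exact ⟨hi.1, Real.sqrt_le_sqrt hi.2⟩

end PaperProj
end
end

section
/- Let A, B ∈ GL_2(ℝ) have strictly positive entries and positive determinants, with Aᵀ ≠ A and Bᵀ ≠ B. Denote by λ_1 > λ_2 > 0 the eigenvalues of A and μ_1 > μ_2 > 0 the eigenvalues of B, and suppose λ_1/λ_2 > μ_1/μ_2 (so that A⊗B has four distinct positive real eigenvalues). Then the pair (A⊗B, Aᵀ⊗Bᵀ) is strongly irreducible: no finite union of nonzero proper linear subspaces of ℝ⁴ is preserved by both A⊗B and Aᵀ⊗Bᵀ. -/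
open scoped BigOperators Kronecker

noncomputable section

namespace PaperProj

open Matrix

section Aux

open Polynomial

lemma mulVec2 (M : Matrix (Fin 2) (Fin 2) ℝ) (x : Fin 2 → ℝ) (i : Fin 2) :
    (M *ᵥ x) i = M i 0 * x 0 + M i 1 * x 1 := by
  simp [Matrix.mulVec, dotProduct, Fin.sum_univ_two]

lemma dot2 (u v : Fin 2 → ℝ) : u ⬝ᵥ v = u 0 * v 0 + u 1 * v 1 := by
  simp [dotProduct, Fin.sum_univ_two]

lemma exists_ne_zero_coord {n : ℕ} {v : Fin n → ℝ} (h : v ≠ 0) : ∃ i, v i ≠ 0 := by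
  by_contra hc
  push_neg at hc
  exact h (funext fun i => hc i)

lemma charpoly_root {A : Matrix (Fin 2) (Fin 2) ℝ} {l l' : ℝ}
    (hl : A.charpoly = (X - C l) * (X - C l')) :
    (A - l • (1 : Matrix (Fin 2) (Fin 2) ℝ)).det = 0 := by
  have h2 : A.charpoly = (X - C (A 0 0)) * (X - C (A 1 1)) - C (A 0 1) * C (A 1 0) := by
    show (A.charmatrix).det = _
    rw [Matrix.det_fin_two, charmatrix_apply_eq, charmatrix_apply_eq,
      charmatrix_apply_ne _ _ _ (by decide), charmatrix_apply_ne _ _ _ (by decide)]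
    ring
  have he : (((X : ℝ[X]) - C l) * (X - C l')).eval l
      = ((X - C (A 0 0)) * (X - C (A 1 1)) - C (A 0 1) * C (A 1 0)).eval l := by
    rw [← hl, ← h2]
  simp only [eval_mul, eval_sub, eval_X, eval_C, sub_self, zero_mul] at he
  rw [Matrix.det_fin_two]
  simp only [Matrix.sub_apply, Matrix.smul_apply, Matrix.one_apply, smul_eq_mul]
  norm_num
  linear_combination -he

lemma det_transpose_sub (A : Matrix (Fin 2) (Fin 2) ℝ) (l : ℝ) :
    (Aᵀ - l • (1 : Matrix (Fin 2) (Fin 2) ℝ)).det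
      = (A - l • (1 : Matrix (Fin 2) (Fin 2) ℝ)).det := by
  rw [show Aᵀ - l • (1 : Matrix (Fin 2) (Fin 2) ℝ) = (A - l • 1)ᵀ by
    rw [Matrix.transpose_sub, Matrix.transpose_smul, Matrix.transpose_one], Matrix.det_transpose]

lemma eigvec_of_det {A : Matrix (Fin 2) (Fin 2) ℝ} {l : ℝ}
    (hdet : (A - l • (1 : Matrix (Fin 2) (Fin 2) ℝ)).det = 0) :
    ∃ v : Fin 2 → ℝ, v ≠ 0 ∧ A *ᵥ v = l • v := by
  obtain ⟨v, hv0, hv⟩ := (Matrix.exists_mulVec_eq_zero_iff).mpr hdet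
  refine ⟨v, hv0, ?_⟩
  have h : A *ᵥ v - l • v = 0 := by
    rw [← hv, Matrix.sub_mulVec, Matrix.smul_mulVec, Matrix.one_mulVec]
  exact sub_eq_zero.mp h

lemma no_common_eigenvector {A : Matrix (Fin 2) (Fin 2) ℝ} (hAsym : Aᵀ ≠ A)
    {u : Fin 2 → ℝ} {lam mu : ℝ} (hu : u ≠ 0)
    (h1 : A *ᵥ u = lam • u) (h2 : Aᵀ *ᵥ u = mu • u) : False := by
  have hbc : A 0 1 ≠ A 1 0 := by
    intro h
    apply hAsym
    ext i j
    fin_cases i <;> fin_cases j <;> simp [Matrix.transpose_apply, h]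
  have eA0 : A 0 0 * u 0 + A 0 1 * u 1 = lam * u 0 := by
    have := congrFun h1 0; rwa [mulVec2] at this
  have eA1 : A 1 0 * u 0 + A 1 1 * u 1 = lam * u 1 := by
    have := congrFun h1 1; rwa [mulVec2] at this
  have eT0 : A 0 0 * u 0 + A 1 0 * u 1 = mu * u 0 := by
    have := congrFun h2 0; rw [mulVec2] at this; simpa [Matrix.transpose_apply] using this
  have eT1 : A 0 1 * u 0 + A 1 1 * u 1 = mu * u 1 := by
    have := congrFun h2 1; rw [mulVec2] at this; simpa [Matrix.transpose_apply] using this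
  have key : (A 0 1 - A 1 0) * (u 0 ^ 2 + u 1 ^ 2) = 0 := by
    linear_combination u 1 * eA0 - u 1 * eT0 - u 0 * eA1 + u 0 * eT1
  have hs : u 0 ^ 2 + u 1 ^ 2 ≠ 0 := by
    obtain ⟨i, hi⟩ := exists_ne_zero_coord hu
    have h0 : (0:ℝ) ≤ u 0 ^ 2 := sq_nonneg _
    have h1' : (0:ℝ) ≤ u 1 ^ 2 := sq_nonneg _
    fin_cases i
    · have : 0 < u 0 ^ 2 := lt_of_le_of_ne (sq_nonneg _) (Ne.symm (pow_ne_zero 2 hi))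
      nlinarith
    · have : 0 < u 1 ^ 2 := lt_of_le_of_ne (sq_nonneg _) (Ne.symm (pow_ne_zero 2 hi))
      nlinarith
  rcases mul_eq_zero.mp key with h | h
  · exact hbc (sub_eq_zero.mp h)
  · exact hs h

lemma dot_eigenvec_zero {A : Matrix (Fin 2) (Fin 2) ℝ} {v vp : Fin 2 → ℝ} {l lp : ℝ}
    (hne : lp ≠ l) (hv : A *ᵥ v = l • v) (hvp : Aᵀ *ᵥ vp = lp • vp) :
    vp ⬝ᵥ v = 0 := by
  have eA0 : A 0 0 * v 0 + A 0 1 * v 1 = l * v 0 := by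
    have := congrFun hv 0; rwa [mulVec2] at this
  have eA1 : A 1 0 * v 0 + A 1 1 * v 1 = l * v 1 := by
    have := congrFun hv 1; rwa [mulVec2] at this
  have eT0 : A 0 0 * vp 0 + A 1 0 * vp 1 = lp * vp 0 := by
    have := congrFun hvp 0; rw [mulVec2] at this; simpa [Matrix.transpose_apply] using this
  have eT1 : A 0 1 * vp 0 + A 1 1 * vp 1 = lp * vp 1 := by
    have := congrFun hvp 1; rw [mulVec2] at this; simpa [Matrix.transpose_apply] using this
  have key : (lp - l) * (vp 0 * v 0 + vp 1 * v 1) = 0 := by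
    linear_combination -(v 0 * eT0) - v 1 * eT1 + vp 0 * eA0 + vp 1 * eA1
  rw [dot2]
  rcases mul_eq_zero.mp key with h | h
  · exact absurd (sub_eq_zero.mp h) hne
  · exact h

lemma eig_det_ne_zero {A : Matrix (Fin 2) (Fin 2) ℝ} {v1 v2 : Fin 2 → ℝ} {l1 l2 : ℝ}
    (h12 : l1 ≠ l2) (hv1 : A *ᵥ v1 = l1 • v1) (hv2 : A *ᵥ v2 = l2 • v2)
    (h1 : v1 ≠ 0) (h2 : v2 ≠ 0) : v1 0 * v2 1 - v1 1 * v2 0 ≠ 0 := by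
  intro hD
  have cross : ∀ i j : Fin 2, v1 i * v2 j = v2 i * v1 j := by
    simp only [Fin.forall_fin_two]
    refine ⟨⟨by ring, by linear_combination hD⟩, by linear_combination -hD, by ring⟩
  have e1 : ∀ j : Fin 2, A j 0 * v1 0 + A j 1 * v1 1 = l1 * v1 j := by
    intro j; have := congrFun hv1 j; rwa [mulVec2] at this
  have e2 : ∀ j : Fin 2, A j 0 * v2 0 + A j 1 * v2 1 = l2 * v2 j := by
    intro j; have := congrFun hv2 j; rwa [mulVec2] at this
  have key : ∀ i j : Fin 2, v1 i * v2 j * (l2 - l1) = 0 := by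
    intro i j
    linear_combination -(v1 i * e2 j) + v2 i * e1 j + A j 0 * cross i 0 + A j 1 * cross i 1
      - l1 * cross i j
  have hzz : ∀ i j : Fin 2, v1 i * v2 j = 0 := by
    intro i j
    have := key i j
    rcases mul_eq_zero.mp this with h | h
    · exact h
    · exact absurd (by linarith [sub_eq_zero.mp h] : l1 = l2) h12
  obtain ⟨i, hi⟩ := exists_ne_zero_coord h1
  obtain ⟨j, hj⟩ := exists_ne_zero_coord h2
  exact hj (by
    have := hzz i j
    rcases mul_eq_zero.mp this with h | h
    · exact absurd h hi
    · exact h)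

lemma dot_self_pair_ne_zero {v1 v2 vp : Fin 2 → ℝ}
    (hD : v1 0 * v2 1 - v1 1 * v2 0 ≠ 0) (hvp : vp ≠ 0)
    (horth : vp ⬝ᵥ v2 = 0) : vp ⬝ᵥ v1 ≠ 0 := by
  intro h0
  rw [dot2] at h0 horth
  have p0 : vp 0 * (v1 0 * v2 1 - v1 1 * v2 0) = 0 := by
    linear_combination v2 1 * h0 - v1 1 * horth
  have p1 : vp 1 * (v1 0 * v2 1 - v1 1 * v2 0) = 0 := by
    linear_combination (-(v2 0)) * h0 + v1 0 * horth
  apply hvp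
  funext i
  fin_cases i
  · rcases mul_eq_zero.mp p0 with h | h
    · simpa using h
    · exact absurd h hD
  · rcases mul_eq_zero.mp p1 with h | h
    · simpa using h
    · exact absurd h hD



open scoped Kronecker

def tens (v w : Fin 2 → ℝ) : Fin 2 × Fin 2 → ℝ := fun k => v k.1 * w k.2

lemma tens_apply (v w : Fin 2 → ℝ) (i j : Fin 2) : tens v w (i, j) = v i * w j := rfl

lemma kron_mulVec (A B : Matrix (Fin 2) (Fin 2) ℝ) (v w : Fin 2 → ℝ) :
    (A ⊗ₖ B) *ᵥ (tens v w) = tens (A *ᵥ v) (B *ᵥ w) := by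
  funext k
  obtain ⟨i, j⟩ := k
  show ∑ x : Fin 2 × Fin 2, (A ⊗ₖ B) (i, j) x * tens v w x = (A *ᵥ v) i * (B *ᵥ w) j
  rw [Fintype.sum_prod_type]
  simp only [Matrix.kroneckerMap_apply, tens, mulVec2, Fin.sum_univ_two]
  ring

lemma dot_tens (a b c d : Fin 2 → ℝ) :
    tens a b ⬝ᵥ tens c d = (a ⬝ᵥ c) * (b ⬝ᵥ d) := by
  show ∑ x : Fin 2 × Fin 2, tens a b x * tens c d x = _
  rw [Fintype.sum_prod_type]
  simp only [tens, dot2, Fin.sum_univ_two]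
  ring

lemma tens_smul_smul (c d : ℝ) (v w : Fin 2 → ℝ) :
    tens (c • v) (d • w) = (c * d) • tens v w := by
  funext k
  simp only [tens, Pi.smul_apply, smul_eq_mul]
  ring

lemma tens_ne_zero {v w : Fin 2 → ℝ} (hv : v ≠ 0) (hw : w ≠ 0) : tens v w ≠ 0 := by
  obtain ⟨i, hi⟩ := exists_ne_zero_coord hv
  obtain ⟨j, hj⟩ := exists_ne_zero_coord hw
  intro h
  have := congrFun h (i, j)
  simp only [tens, Pi.zero_apply] at this
  exact (mul_ne_zero hi hj) this

lemma tens_factor_right {vp wp u w : Fin 2 → ℝ} (h : tens vp wp = tens u w)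
    {p0 : Fin 2} (hp : vp p0 ≠ 0) : wp = (u p0 / vp p0) • w := by
  funext q
  have := congrFun h (p0, q)
  simp only [tens] at this
  rw [Pi.smul_apply, smul_eq_mul, div_mul_eq_mul_div, eq_div_iff hp]
  linear_combination this

lemma tens_factor_left {vp wp u z : Fin 2 → ℝ} (h : tens vp wp = tens u z)
    {q0 : Fin 2} (hq : wp q0 ≠ 0) : vp = (z q0 / wp q0) • u := by
  funext p
  have := congrFun h (p, q0)
  simp only [tens] at this
  rw [Pi.smul_apply, smul_eq_mul, div_mul_eq_mul_div, eq_div_iff hq]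
  linear_combination this

lemma parallel_eig {B : Matrix (Fin 2) (Fin 2) ℝ} (hBsym : Bᵀ ≠ B)
    {w wp : Fin 2 → ℝ} {m mp ρ : ℝ} (hw : w ≠ 0) (hwp : wp ≠ 0)
    (hB : B *ᵥ w = m • w) (hBT : Bᵀ *ᵥ wp = mp • wp) (hpar : wp = ρ • w) : False := by
  have hρ : ρ ≠ 0 := by
    rintro rfl
    rw [zero_smul] at hpar
    exact hwp hpar
  have hBTw : Bᵀ *ᵥ w = mp • w := by
    have h1 : Bᵀ *ᵥ (ρ • w) = mp • (ρ • w) := by rw [← hpar]; exact hBT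
    rw [Matrix.mulVec_smul] at h1
    have h2 : ρ • (Bᵀ *ᵥ w) = ρ • (mp • w) := by rw [h1, smul_comm]
    exact smul_right_injective (Fin 2 → ℝ) hρ h2
  exact no_common_eigenvector hBsym hw hB hBTw

lemma tens_linearIndependent {v w : Fin 2 → Fin 2 → ℝ}
    (hDv : v 0 0 * v 1 1 - v 0 1 * v 1 0 ≠ 0)
    (hDw : w 0 0 * w 1 1 - w 0 1 * w 1 0 ≠ 0) :
    LinearIndependent ℝ (fun k : Fin 2 × Fin 2 => tens (v k.1) (w k.2)) := by
  rw [Fintype.linearIndependent_iff]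
  intro g hg
  set Vm : Matrix (Fin 2) (Fin 2) ℝ := Matrix.of (fun i a => v a i) with hVm
  set Wm : Matrix (Fin 2) (Fin 2) ℝ := Matrix.of (fun j b => w b j) with hWm
  set T : Matrix (Fin 2 × Fin 2) (Fin 2 × Fin 2) ℝ := Vm ⊗ₖ Wm with hT
  have hdet : T.det ≠ 0 := by
    rw [hT, Matrix.det_kronecker]
    have h1 : Vm.det = v 0 0 * v 1 1 - v 0 1 * v 1 0 := by
      rw [Matrix.det_fin_two]; simp [hVm]; ring
    have h2 : Wm.det = w 0 0 * w 1 1 - w 0 1 * w 1 0 := by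
      rw [Matrix.det_fin_two]; simp [hWm]; ring
    rw [h1, h2]
    simp only [Fintype.card_fin]
    exact mul_ne_zero (pow_ne_zero _ hDv) (pow_ne_zero _ hDw)
  have hmv : T *ᵥ g = 0 := by
    funext x
    have hx := congrFun hg x
    simp only [Finset.sum_apply, Pi.smul_apply, Pi.zero_apply, smul_eq_mul] at hx
    show ∑ k : Fin 2 × Fin 2, T x k * g k = 0
    rw [← hx]
    refine Finset.sum_congr rfl fun k _ => ?_
    simp only [hT, Matrix.kroneckerMap_apply, hVm, hWm, Matrix.of_apply, tens]
    ring
  intro k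
  by_contra hk
  have : ∃ y, y ≠ 0 ∧ T *ᵥ y = 0 := ⟨g, fun h => hk (by rw [h]; rfl), hmv⟩
  exact hdet (Matrix.exists_mulVec_eq_zero_iff.mp this)

section Vander

variable {V : Type*} [AddCommGroup V] [Module ℝ V]

def steps (g : V →ₗ[ℝ] V) : List ℝ → (V →ₗ[ℝ] V)
  | [] => LinearMap.id
  | c :: t => (g - c • LinearMap.id) ∘ₗ steps g t

lemma steps_mem (g : V →ₗ[ℝ] V) (ν : List ℝ) {Z : Submodule ℝ V}
    (hZ : ∀ x ∈ Z, g x ∈ Z) {x : V} (hx : x ∈ Z) : steps g ν x ∈ Z := by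
  induction ν with
  | nil => simpa [steps]
  | cons c t ih =>
    show ((g - c • LinearMap.id) ∘ₗ steps g t) x ∈ Z
    simp only [LinearMap.comp_apply, LinearMap.sub_apply, LinearMap.smul_apply,
      LinearMap.id_apply]
    exact Z.sub_mem (hZ _ ih) (Z.smul_mem _ ih)

lemma steps_apply_eig (g : V →ₗ[ℝ] V) {e : V} {c0 : ℝ} (he : g e = c0 • e) :
    ∀ ν : List ℝ, steps g ν e = ((ν.map fun c => c0 - c).prod) • e
  | [] => by simp [steps]
  | c :: t => by
    have ih := steps_apply_eig g he t
    show ((g - c • LinearMap.id) ∘ₗ steps g t) e = _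
    rw [LinearMap.comp_apply, ih]
    simp only [LinearMap.sub_apply, LinearMap.smul_apply, LinearMap.id_apply,
      LinearMap.map_smul, he, List.map_cons, List.prod_cons, smul_smul]
    rw [← sub_smul]
    congr 1
    ring

lemma eig_basis_mem {ι : Type*} [Fintype ι] [DecidableEq ι]
    (b : Module.Basis ι ℝ V) (g : V →ₗ[ℝ] V) (ν : ι → ℝ)
    (hg : ∀ i, g (b i) = ν i • b i) (hν : Function.Injective ν)
    {Z : Submodule ℝ V} (hZ : ∀ x ∈ Z, g x ∈ Z) {x : V} (hx : x ∈ Z) {k : ι}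
    (hk : b.repr x k ≠ 0) : b k ∈ Z := by
  classical
  set t : List ι := (Finset.univ.erase k).toList with ht
  have hmem : ∀ j : ι, j ∈ t ↔ j ≠ k := by
    intro j
    simp [ht, Finset.mem_toList, Finset.mem_erase]
  set L := steps g (t.map ν) with hL
  have hLx : L x ∈ Z := steps_mem g _ hZ hx
  have hval : ∀ i, L (b i) = ((t.map fun j => ν i - ν j).prod) • b i := by
    intro i
    rw [hL, steps_apply_eig g (hg i)]
    rw [List.map_map]
    rfl
  have hsum : L x = (b.repr x k * (t.map fun j => ν k - ν j).prod) • b k := by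
    conv_lhs => rw [← b.sum_repr x]
    rw [map_sum]
    have hterm : ∀ i ∈ Finset.univ, L (b.repr x i • b i)
        = (b.repr x i * (t.map fun j => ν i - ν j).prod) • b i := by
      intro i _
      rw [LinearMap.map_smul, hval i, smul_smul]
    rw [Finset.sum_congr rfl hterm]
    refine Finset.sum_eq_single k ?_ ?_
    · intro i _ hik
      have hzero : ((t.map fun j => ν i - ν j).prod : ℝ) = 0 :=
        List.prod_eq_zero (List.mem_map.mpr ⟨i, (hmem i).mpr hik, sub_self _⟩)
      rw [hzero, mul_zero, zero_smul]
    · intro hk'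
      exact absurd (Finset.mem_univ k) hk'
  have hprod : ((t.map fun j => ν k - ν j).prod : ℝ) ≠ 0 := by
    refine List.prod_ne_zero ?_
    intro h0
    obtain ⟨j, hjt, hj⟩ := List.mem_map.mp h0
    exact ((hmem j).mp hjt) (hν (sub_eq_zero.mp hj)).symm
  have hcoef : b.repr x k * (t.map fun j => ν k - ν j).prod ≠ 0 := mul_ne_zero hk hprod
  have hbk : b k = (b.repr x k * (t.map fun j => ν k - ν j).prod)⁻¹ • L x := by
    rw [hsum, smul_smul, inv_mul_cancel₀ hcoef, one_smul]
  rw [hbk]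
  exact Z.smul_mem _ hLx

lemma exists_basis_mem {ι : Type*} [Fintype ι] [DecidableEq ι]
    (b : Module.Basis ι ℝ V) (g : V →ₗ[ℝ] V) (ν : ι → ℝ)
    (hg : ∀ i, g (b i) = ν i • b i) (hν : Function.Injective ν)
    {Z : Submodule ℝ V} (hZ : ∀ x ∈ Z, g x ∈ Z) (hZbot : Z ≠ ⊥) :
    ∃ k, b k ∈ Z := by
  obtain ⟨x, hxZ, hx0⟩ := Submodule.exists_mem_ne_zero_of_ne_bot hZbot
  have : b.repr x ≠ 0 := fun h => hx0 (b.repr.map_eq_zero_iff.mp h)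
  obtain ⟨k, hk⟩ := Finsupp.ne_iff.mp this
  exact ⟨k, eig_basis_mem b g ν hg hν hZ hxZ (by simpa using hk)⟩

lemma exists_coord_zero {ι : Type*} [Fintype ι] [DecidableEq ι]
    (b : Module.Basis ι ℝ V) (g : V →ₗ[ℝ] V) (ν : ι → ℝ)
    (hg : ∀ i, g (b i) = ν i • b i) (hν : Function.Injective ν)
    {Z : Submodule ℝ V} (hZ : ∀ x ∈ Z, g x ∈ Z) (hZtop : Z ≠ ⊤) :
    ∃ k, ∀ x ∈ Z, b.repr x k = 0 := by
  by_contra hc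
  push_neg at hc
  have hall : ∀ k, b k ∈ Z := by
    intro k
    obtain ⟨x, hxZ, hxk⟩ := hc k
    exact eig_basis_mem b g ν hg hν hZ hxZ hxk
  apply hZtop
  rw [eq_top_iff, ← b.span_eq]
  refine Submodule.span_le.mpr ?_
  rintro _ ⟨k, rfl⟩
  exact hall k

lemma pow_eig (g : V →ₗ[ℝ] V) {e : V} {c : ℝ} (h : g e = c • e) (p : ℕ) :
    (g ^ p) e = (c ^ p) • e := by
  induction p with
  | zero => simp
  | succ n ih =>
    rw [pow_succ', Module.End.mul_apply, ih, LinearMap.map_smul, h, smul_smul, pow_succ]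

end Vander



lemma subset_iUnion_le {V : Type*} [AddCommGroup V] [Module ℝ V] {n : ℕ}
    (P : Submodule ℝ V) (W : Fin n → Submodule ℝ V)
    (h : (P : Set V) ⊆ ⋃ j, (W j : Set V)) : ∃ j, P ≤ W j := by
  have hcov : ⋃ j, ((Submodule.comap P.subtype (W j) : Submodule ℝ P) : Set P) = Set.univ := by
    ext ⟨x, hx⟩
    simp only [Set.mem_iUnion, SetLike.mem_coe, Submodule.mem_comap, Submodule.subtype_apply,
      Set.mem_univ, iff_true]
    have := h hx
    simpa using this
  obtain ⟨j, hj⟩ := Subspace.exists_eq_top_of_iUnion_eq_univ hcov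
  refine ⟨j, fun x hx => ?_⟩
  have hmem : (⟨x, hx⟩ : P) ∈ (⊤ : Submodule ℝ P) := trivial
  rw [← hj] at hmem
  exact hmem

lemma stepA1 {V : Type*} [AddCommGroup V] [Module ℝ V] [FiniteDimensional ℝ V]
    (g : V ≃ₗ[ℝ] V) {m : ℕ} (W : Fin (m + 1) → Submodule ℝ V)
    (h : ∀ j, ∃ k, Submodule.map (g : V →ₗ[ℝ] V) (W j) ≤ W k) {j0 : Fin (m + 1)}
    (hmax : ∀ k, Module.finrank ℝ (W k) ≤ Module.finrank ℝ (W j0)) :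
    ∃ p, 0 < p ∧ Submodule.map ((g : V →ₗ[ℝ] V) ^ p) (W j0) = W j0 := by
  classical
  set d := Module.finrank ℝ (W j0) with hd
  have hstep : ∀ j, Module.finrank ℝ (W j) = d →
      ∃ k, Module.finrank ℝ (W k) = d ∧
        Submodule.map (g : V →ₗ[ℝ] V) (W j) = W k := by
    intro j hj
    obtain ⟨k, hk⟩ := h j
    have h1 : Module.finrank ℝ (Submodule.map (g : V →ₗ[ℝ] V) (W j)) = Module.finrank ℝ (W j) :=
      LinearEquiv.finrank_map_eq g (W j)
    have h2 : Module.finrank ℝ (W k) = d := by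
      refine le_antisymm (hmax k) ?_
      rw [← hj, ← h1]
      exact Submodule.finrank_mono hk
    refine ⟨k, h2, Submodule.eq_of_le_of_finrank_le hk ?_⟩
    rw [h1, hj, h2]
  obtain ⟨σ, hσprop⟩ : ∃ σ : Fin (m + 1) → Fin (m + 1), ∀ j,
      Module.finrank ℝ (W j) = d → (Module.finrank ℝ (W (σ j)) = d ∧
        Submodule.map (g : V →ₗ[ℝ] V) (W j) = W (σ j)) := by
    choose f hf1 hf2 using hstep
    classical
    let σ0 : Fin (m + 1) → Fin (m + 1) := fun j =>
      if hj : Module.finrank ℝ (W j) = d then f j hj else j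
    refine ⟨σ0, fun j hj => ?_⟩
    have hσ0 : σ0 j = f j hj := dif_pos hj
    rw [hσ0]
    exact ⟨hf1 j hj, hf2 j hj⟩
  have hσ1 : ∀ j, Module.finrank ℝ (W j) = d → Module.finrank ℝ (W (σ j)) = d :=
    fun j hj => (hσprop j hj).1
  have hσ2 : ∀ j, Module.finrank ℝ (W j) = d →
      Submodule.map (g : V →ₗ[ℝ] V) (W j) = W (σ j) := fun j hj => (hσprop j hj).2
  have hiter : ∀ n : ℕ, Module.finrank ℝ (W (σ^[n] j0)) = d ∧
      Submodule.map ((g : V →ₗ[ℝ] V) ^ n) (W j0) = W (σ^[n] j0) := by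
    intro n
    induction n with
    | zero =>
      constructor
      · exact hd.symm
      · rw [pow_zero, Function.iterate_zero_apply, Module.End.one_eq_id, Submodule.map_id]
    | succ n ih =>
      rw [Function.iterate_succ_apply']
      constructor
      · exact hσ1 _ ih.1
      · rw [pow_succ', Module.End.mul_eq_comp, Submodule.map_comp, ih.2]
        exact hσ2 _ ih.1
  have key : ∀ a b : ℕ, a < b → σ^[a] j0 = σ^[b] j0 →
      ∃ p, 0 < p ∧ Submodule.map ((g : V →ₗ[ℝ] V) ^ p) (W j0) = W j0 := by
    intro a b hab he
    refine ⟨b - a, Nat.sub_pos_of_lt hab, ?_⟩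
    have h1 : Submodule.map ((g : V →ₗ[ℝ] V) ^ a) (W j0)
        = Submodule.map ((g : V →ₗ[ℝ] V) ^ b) (W j0) := by
      rw [(hiter a).2, (hiter b).2, he]
    have h2 : ((g : V →ₗ[ℝ] V) ^ b) = ((g : V →ₗ[ℝ] V) ^ a) ∘ₗ ((g : V →ₗ[ℝ] V) ^ (b - a)) := by
      rw [← Module.End.mul_eq_comp, ← pow_add]
      congr 1
      omega
    rw [h2, Submodule.map_comp] at h1
    have hinj : Function.Injective ((g : V →ₗ[ℝ] V) ^ a) := by
      rw [Module.End.coe_pow]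
      exact Function.Injective.iterate g.injective a
    have := Submodule.map_injective_of_injective hinj h1
    exact this.symm
  obtain ⟨a, b, hab, he⟩ := Finite.exists_ne_map_eq_of_infinite (fun n : ℕ => σ^[n] j0)
  rcases hab.lt_or_gt with h' | h'
  · exact key a b h' he
  · exact key b a h' he.symm

lemma stepA {V : Type*} [AddCommGroup V] [Module ℝ V] [FiniteDimensional ℝ V]
    (g₀ g₁ : V ≃ₗ[ℝ] V) {m : ℕ} (W : Fin (m + 1) → Submodule ℝ V)
    (h₀ : ∀ j, ∃ k, Submodule.map (g₀ : V →ₗ[ℝ] V) (W j) ≤ W k)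
    (h₁ : ∀ j, ∃ k, Submodule.map (g₁ : V →ₗ[ℝ] V) (W j) ≤ W k) :
    ∃ (j : Fin (m + 1)) (p q : ℕ), 0 < p ∧ 0 < q ∧
      Submodule.map ((g₀ : V →ₗ[ℝ] V) ^ p) (W j) = W j ∧
      Submodule.map ((g₁ : V →ₗ[ℝ] V) ^ q) (W j) = W j := by
  obtain ⟨j0, hj0⟩ : ∃ j0, ∀ k, Module.finrank ℝ (W k) ≤ Module.finrank ℝ (W j0) :=
    Finite.exists_max _
  obtain ⟨p, hp, hmp⟩ := stepA1 g₀ W h₀ hj0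
  obtain ⟨q, hq, hmq⟩ := stepA1 g₁ W h₁ hj0
  exact ⟨j0, p, q, hp, hq, hmp, hmq⟩

lemma toLin'_bijective {n : Type*} [Fintype n] [DecidableEq n]
    {M : Matrix n n ℝ} (h : M.det ≠ 0) : Function.Bijective (Matrix.toLin' M) := by
  have hinj : Function.Injective (Matrix.toLin' M) := by
    intro x y hxy
    by_contra hne
    apply h
    apply Matrix.exists_mulVec_eq_zero_iff.mp
    refine ⟨x - y, sub_ne_zero.mpr hne, ?_⟩
    rw [Matrix.mulVec_sub]
    have : M *ᵥ x = M *ᵥ y := by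
      simpa [Matrix.toLin'_apply] using hxy
    rw [this, sub_self]
  exact ⟨hinj, LinearMap.injective_iff_surjective.mp hinj⟩

lemma fin2_prod_cases (a bb x y : Fin 2) (h : (x, y) ≠ (a, bb)) :
    (x, y) = (a, ![1, 0] bb) ∨ (x, y) = (![1, 0] a, bb) ∨ (x, y) = (![1, 0] a, ![1, 0] bb) := by
  revert h
  fin_cases a <;> fin_cases bb <;> fin_cases x <;> fin_cases y <;> decide

end Aux

set_option maxHeartbeats 1600000 in
open Polynomial in
/-- If `A, B` are positive nonsymmetric `2×2` matrices with positive
determinants whose eigenvalue ratios satisfy `λ₁/λ₂ > μ₁/μ₂`, then the pair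
`(A ⊗ B, Aᵀ ⊗ Bᵀ)` is strongly irreducible. -/
theorem statement11 (A B : Matrix (Fin 2) (Fin 2) ℝ)
    (hApos : ∀ i j, 0 < A i j) (hBpos : ∀ i j, 0 < B i j)
    (hAdet : 0 < A.det) (hBdet : 0 < B.det)
    (hAsym : Aᵀ ≠ A) (hBsym : Bᵀ ≠ B)
    (l1 l2 m1 m2 : ℝ)
    (hl : A.charpoly = (X - C l1) * (X - C l2))
    (hm : B.charpoly = (X - C m1) * (X - C m2))
    (hl12 : l2 < l1) (hl2 : 0 < l2) (hm12 : m2 < m1) (hm2 : 0 < m2)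
    (hratio : m1 / m2 < l1 / l2) :
    StronglyIrreducibleTuple ![Matrix.toLin' (A ⊗ₖ B), Matrix.toLin' (Aᵀ ⊗ₖ Bᵀ)] := by
  intro m W hWbot hWtop h
  have hl1 : (0:ℝ) < l1 := lt_trans hl2 hl12
  have hm1 : (0:ℝ) < m1 := lt_trans hm2 hm12
  have hlne : l1 ≠ l2 := ne_of_gt hl12
  have hmne : m1 ≠ m2 := ne_of_gt hm12
  have hkey : l2 * m1 < l1 * m2 := by
    rw [div_lt_div_iff₀ hm2 hl2] at hratio
    linarith
  -- eigenvectors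
  obtain ⟨v1, hv1ne, hv1⟩ := eigvec_of_det (charpoly_root hl)
  obtain ⟨v2, hv2ne, hv2⟩ := eigvec_of_det (charpoly_root (l := l2) (l' := l1) (by rw [hl]; ring))
  obtain ⟨vp1, hvp1ne, hvp1⟩ := eigvec_of_det (A := Aᵀ)
    (by rw [det_transpose_sub]; exact charpoly_root hl)
  obtain ⟨vp2, hvp2ne, hvp2⟩ := eigvec_of_det (A := Aᵀ)
    (by rw [det_transpose_sub]; exact charpoly_root (l := l2) (l' := l1) (by rw [hl]; ring))
  obtain ⟨w1, hw1ne, hw1⟩ := eigvec_of_det (charpoly_root hm)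
  obtain ⟨w2, hw2ne, hw2⟩ := eigvec_of_det (charpoly_root (l := m2) (l' := m1) (by rw [hm]; ring))
  obtain ⟨wp1, hwp1ne, hwp1⟩ := eigvec_of_det (A := Bᵀ)
    (by rw [det_transpose_sub]; exact charpoly_root hm)
  obtain ⟨wp2, hwp2ne, hwp2⟩ := eigvec_of_det (A := Bᵀ)
    (by rw [det_transpose_sub]; exact charpoly_root (l := m2) (l' := m1) (by rw [hm]; ring))
  -- families
  set va : Fin 2 → Fin 2 → ℝ := ![v1, v2] with hva_def
  set vp : Fin 2 → Fin 2 → ℝ := ![vp1, vp2] with hvp_def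
  set wa : Fin 2 → Fin 2 → ℝ := ![w1, w2] with hwa_def
  set wp : Fin 2 → Fin 2 → ℝ := ![wp1, wp2] with hwp_def
  set lv : Fin 2 → ℝ := ![l1, l2] with hlv_def
  set mw : Fin 2 → ℝ := ![m1, m2] with hmw_def
  have hvaE : ∀ i, A *ᵥ va i = lv i • va i := by
    intro i; fin_cases i
    · simpa [hva_def, hlv_def] using hv1
    · simpa [hva_def, hlv_def] using hv2
  have hvpE : ∀ i, Aᵀ *ᵥ vp i = lv i • vp i := by
    intro i; fin_cases i
    · simpa [hvp_def, hlv_def] using hvp1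
    · simpa [hvp_def, hlv_def] using hvp2
  have hwaE : ∀ i, B *ᵥ wa i = mw i • wa i := by
    intro i; fin_cases i
    · simpa [hwa_def, hmw_def] using hw1
    · simpa [hwa_def, hmw_def] using hw2
  have hwpE : ∀ i, Bᵀ *ᵥ wp i = mw i • wp i := by
    intro i; fin_cases i
    · simpa [hwp_def, hmw_def] using hwp1
    · simpa [hwp_def, hmw_def] using hwp2
  have hvane : ∀ i, va i ≠ 0 := by
    intro i; fin_cases i
    · simpa [hva_def] using hv1ne
    · simpa [hva_def] using hv2ne
  have hvpne : ∀ i, vp i ≠ 0 := by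
    intro i; fin_cases i
    · simpa [hvp_def] using hvp1ne
    · simpa [hvp_def] using hvp2ne
  have hwane : ∀ i, wa i ≠ 0 := by
    intro i; fin_cases i
    · simpa [hwa_def] using hw1ne
    · simpa [hwa_def] using hw2ne
  have hwpne : ∀ i, wp i ≠ 0 := by
    intro i; fin_cases i
    · simpa [hwp_def] using hwp1ne
    · simpa [hwp_def] using hwp2ne
  have hDv : va 0 0 * va 1 1 - va 0 1 * va 1 0 ≠ 0 := by
    simpa [hva_def] using eig_det_ne_zero hlne hv1 hv2 hv1ne hv2ne
  have hDvp : vp 0 0 * vp 1 1 - vp 0 1 * vp 1 0 ≠ 0 := by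
    simpa [hvp_def] using eig_det_ne_zero hlne hvp1 hvp2 hvp1ne hvp2ne
  have hDw : wa 0 0 * wa 1 1 - wa 0 1 * wa 1 0 ≠ 0 := by
    simpa [hwa_def] using eig_det_ne_zero hmne hw1 hw2 hw1ne hw2ne
  have hDwp : wp 0 0 * wp 1 1 - wp 0 1 * wp 1 0 ≠ 0 := by
    simpa [hwp_def] using eig_det_ne_zero hmne hwp1 hwp2 hwp1ne hwp2ne
  -- bases
  have hcard : Fintype.card (Fin 2 × Fin 2) = Module.finrank ℝ (Fin 2 × Fin 2 → ℝ) := by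
    simp [Module.finrank_pi]
  have liE := tens_linearIndependent hDv hDw
  have liE' := tens_linearIndependent hDvp hDwp
  set bE : Module.Basis (Fin 2 × Fin 2) ℝ (Fin 2 × Fin 2 → ℝ) :=
    basisOfLinearIndependentOfCardEqFinrank liE hcard with hbE_def
  set bE' : Module.Basis (Fin 2 × Fin 2) ℝ (Fin 2 × Fin 2 → ℝ) :=
    basisOfLinearIndependentOfCardEqFinrank liE' hcard with hbE'_def
  have hbE : ∀ k, bE k = tens (va k.1) (wa k.2) := fun k =>
    congrFun (coe_basisOfLinearIndependentOfCardEqFinrank liE hcard) k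
  have hbE' : ∀ k, bE' k = tens (vp k.1) (wp k.2) := fun k =>
    congrFun (coe_basisOfLinearIndependentOfCardEqFinrank liE' hcard) k
  -- eigenvalues
  set μ : Fin 2 × Fin 2 → ℝ := fun k => lv k.1 * mw k.2 with hμ_def
  have hμpos : ∀ k, 0 < μ k := by
    rintro ⟨i, j⟩
    fin_cases i <;> fin_cases j <;>
      simp only [hμ_def, hlv_def, hmw_def, Fin.mk_zero, Fin.mk_one, Fin.isValue,
        Matrix.cons_val_zero, Matrix.cons_val_one, Matrix.head_cons]
    · exact mul_pos hl1 hm1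
    · exact mul_pos hl1 hm2
    · exact mul_pos hl2 hm1
    · exact mul_pos hl2 hm2
  have hμinj : Function.Injective μ := by
    have ho1 : l2 * m2 < l2 * m1 := by nlinarith
    have ho3 : l1 * m2 < l1 * m1 := by nlinarith
    rintro ⟨i, j⟩ ⟨i', j'⟩ hkk
    fin_cases i <;> fin_cases j <;> fin_cases i' <;> fin_cases j' <;>
      simp only [hμ_def, hlv_def, hmw_def, Fin.mk_zero, Fin.mk_one, Fin.isValue,
        Matrix.cons_val_zero, Matrix.cons_val_one, Matrix.head_cons] at hkk <;>
      first
        | rfl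
        | (exfalso; linarith [hkey, ho1, ho3])
  -- linear maps
  have hdet0 : (A ⊗ₖ B).det ≠ 0 := by
    rw [Matrix.det_kronecker]
    simp only [Fintype.card_fin]
    exact mul_ne_zero (pow_ne_zero _ (ne_of_gt hAdet)) (pow_ne_zero _ (ne_of_gt hBdet))
  have hdet1 : (Aᵀ ⊗ₖ Bᵀ).det ≠ 0 := by
    rw [Matrix.det_kronecker, Matrix.det_transpose, Matrix.det_transpose]
    simp only [Fintype.card_fin]
    exact mul_ne_zero (pow_ne_zero _ (ne_of_gt hAdet)) (pow_ne_zero _ (ne_of_gt hBdet))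
  set g0 : (Fin 2 × Fin 2 → ℝ) →ₗ[ℝ] (Fin 2 × Fin 2 → ℝ) := Matrix.toLin' (A ⊗ₖ B) with hg0_def
  set g1 : (Fin 2 × Fin 2 → ℝ) →ₗ[ℝ] (Fin 2 × Fin 2 → ℝ) :=
    Matrix.toLin' (Aᵀ ⊗ₖ Bᵀ) with hg1_def
  set g0e : (Fin 2 × Fin 2 → ℝ) ≃ₗ[ℝ] (Fin 2 × Fin 2 → ℝ) :=
    LinearEquiv.ofBijective g0 (toLin'_bijective hdet0) with hg0e_def
  set g1e : (Fin 2 × Fin 2 → ℝ) ≃ₗ[ℝ] (Fin 2 × Fin 2 → ℝ) :=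
    LinearEquiv.ofBijective g1 (toLin'_bijective hdet1) with hg1e_def
  have hg0e : (g0e : (Fin 2 × Fin 2 → ℝ) →ₗ[ℝ] (Fin 2 × Fin 2 → ℝ)) = g0 := rfl
  have hg1e : (g1e : (Fin 2 × Fin 2 → ℝ) →ₗ[ℝ] (Fin 2 × Fin 2 → ℝ)) = g1 := rfl
  -- invariance of the union
  have h0U : ⇑g0 '' (⋃ j, (W j : Set (Fin 2 × Fin 2 → ℝ))) = ⋃ j, (W j : Set _) := by
    have := h 0
    simpa [hg0_def] using this
  have h1U : ⇑g1 '' (⋃ j, (W j : Set (Fin 2 × Fin 2 → ℝ))) = ⋃ j, (W j : Set _) := by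
    have := h 1
    simpa [hg1_def] using this
  have h₀ : ∀ j, ∃ k, Submodule.map
      (g0e : (Fin 2 × Fin 2 → ℝ) →ₗ[ℝ] (Fin 2 × Fin 2 → ℝ)) (W j) ≤ W k := by
    intro j
    apply subset_iUnion_le
    rw [Submodule.map_coe]
    have himg : ⇑g0 '' (W j : Set _) ⊆ ⋃ k, (W k : Set _) := by
      rw [← h0U]
      refine Set.image_mono ?_
      intro x hx
      exact Set.mem_iUnion_of_mem j hx
    exact himg
  have h₁ : ∀ j, ∃ k, Submodule.map
      (g1e : (Fin 2 × Fin 2 → ℝ) →ₗ[ℝ] (Fin 2 × Fin 2 → ℝ)) (W j) ≤ W k := by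
    intro j
    apply subset_iUnion_le
    rw [Submodule.map_coe]
    have himg : ⇑g1 '' (W j : Set _) ⊆ ⋃ k, (W k : Set _) := by
      rw [← h1U]
      refine Set.image_mono ?_
      intro x hx
      exact Set.mem_iUnion_of_mem j hx
    exact himg
  obtain ⟨j0, p, q, hp, hq, hmp, hmq⟩ := stepA g0e g1e W h₀ h₁
  rw [hg0e] at hmp
  rw [hg1e] at hmq
  have hZbot := hWbot j0
  have hZtop := hWtop j0
  have hZ0 : ∀ x ∈ W j0, (g0 ^ p) x ∈ W j0 := fun x hx => hmp ▸ Submodule.mem_map_of_mem hx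
  have hZ1 : ∀ x ∈ W j0, (g1 ^ q) x ∈ W j0 := fun x hx => hmq ▸ Submodule.mem_map_of_mem hx
  -- eigen structure of powers
  have hg0E : ∀ k, g0 (bE k) = μ k • bE k := by
    intro k
    rw [hbE k, hg0_def, Matrix.toLin'_apply, kron_mulVec, hvaE k.1, hwaE k.2, tens_smul_smul]
  have hg1E : ∀ k, g1 (bE' k) = μ k • bE' k := by
    intro k
    rw [hbE' k, hg1_def, Matrix.toLin'_apply, kron_mulVec, hvpE k.1, hwpE k.2, tens_smul_smul]
  have hg0pE : ∀ k, (g0 ^ p) (bE k) = (μ k ^ p) • bE k := fun k => pow_eig g0 (hg0E k) p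
  have hg1pE : ∀ k, (g1 ^ q) (bE' k) = (μ k ^ q) • bE' k := fun k => pow_eig g1 (hg1E k) q
  have hμp_inj : Function.Injective fun k => μ k ^ p := by
    intro k k' hkk
    exact hμinj ((pow_left_strictMonoOn₀ hp.ne').injOn (hμpos k).le (hμpos k').le hkk)
  have hμq_inj : Function.Injective fun k => μ k ^ q := by
    intro k k' hkk
    exact hμinj ((pow_left_strictMonoOn₀ hq.ne').injOn (hμpos k).le (hμpos k').le hkk)
  obtain ⟨k', hk'Z⟩ := exists_basis_mem bE' (g1 ^ q) (fun k => μ k ^ q) hg1pE hμq_inj hZ1 hZbot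
  obtain ⟨k0, hk0⟩ := exists_coord_zero bE (g0 ^ p) (fun k => μ k ^ p) hg0pE hμp_inj hZ0 hZtop
  obtain ⟨a, bb⟩ := k'
  -- pairing
  obtain ⟨dv, hdv_def⟩ : ∃ dv : Fin 2 → ℝ, ∀ i, dv i = vp i ⬝ᵥ va i :=
    ⟨fun i => vp i ⬝ᵥ va i, fun i => rfl⟩
  obtain ⟨dw, hdw_def⟩ : ∃ dw : Fin 2 → ℝ, ∀ j, dw j = wp j ⬝ᵥ wa j :=
    ⟨fun j => wp j ⬝ᵥ wa j, fun j => rfl⟩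
  have hlv_ne : ∀ i i' : Fin 2, i ≠ i' → lv i ≠ lv i' := by
    intro i i' hne
    fin_cases i <;> fin_cases i' <;>
      simp only [hlv_def, Fin.mk_zero, Fin.mk_one, Fin.isValue, Matrix.cons_val_zero, Matrix.cons_val_one, Matrix.head_cons] <;>
      first
        | (exact absurd rfl hne)
        | exact hlne
        | exact (Ne.symm hlne)
  have hmw_ne : ∀ i i' : Fin 2, i ≠ i' → mw i ≠ mw i' := by
    intro i i' hne
    fin_cases i <;> fin_cases i' <;>
      simp only [hmw_def, Fin.mk_zero, Fin.mk_one, Fin.isValue, Matrix.cons_val_zero, Matrix.cons_val_one, Matrix.head_cons] <;>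
      first
        | (exact absurd rfl hne)
        | exact hmne
        | exact (Ne.symm hmne)
  have horthv : ∀ i i' : Fin 2, i ≠ i' → vp i ⬝ᵥ va i' = 0 := by
    intro i i' hne
    exact dot_eigenvec_zero (hlv_ne i i' hne) (hvaE i') (hvpE i)
  have horthw : ∀ i i' : Fin 2, i ≠ i' → wp i ⬝ᵥ wa i' = 0 := by
    intro i i' hne
    exact dot_eigenvec_zero (hmw_ne i i' hne) (hwaE i') (hwpE i)
  have hdv_ne : ∀ i, dv i ≠ 0 := by
    intro i
    rw [hdv_def i]
    fin_cases i
    · exact dot_self_pair_ne_zero (v1 := va 0) (v2 := va 1) hDv (hvpne 0)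
        (horthv 0 1 (by decide))
    · have hD' : va 1 0 * va 0 1 - va 1 1 * va 0 0 ≠ 0 := fun hh => hDv (by linarith)
      exact dot_self_pair_ne_zero (v1 := va 1) (v2 := va 0) hD' (hvpne 1)
        (horthv 1 0 (by decide))
  have hdw_ne : ∀ i, dw i ≠ 0 := by
    intro i
    rw [hdw_def i]
    fin_cases i
    · exact dot_self_pair_ne_zero (v1 := wa 0) (v2 := wa 1) hDw (hwpne 0)
        (horthw 0 1 (by decide))
    · have hD' : wa 1 0 * wa 0 1 - wa 1 1 * wa 0 0 ≠ 0 := fun hh => hDw (by linarith)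
      exact dot_self_pair_ne_zero (v1 := wa 1) (v2 := wa 0) hD' (hwpne 1)
        (horthw 1 0 (by decide))
  have hdotsum : ∀ (u : Fin 2 × Fin 2 → ℝ) (f : (Fin 2 × Fin 2) → (Fin 2 × Fin 2 → ℝ)),
      u ⬝ᵥ (∑ i, f i) = ∑ i, u ⬝ᵥ f i := by
    intro u f
    simp only [dotProduct, Finset.sum_apply, Finset.mul_sum]
    exact Finset.sum_comm
  have hdotdiag : ∀ k : Fin 2 × Fin 2,
      tens (vp k.1) (wp k.2) ⬝ᵥ bE k = dv k.1 * dw k.2 := by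
    intro k
    rw [hbE k, dot_tens, hdv_def, hdw_def]
  have hdotoff : ∀ k i : Fin 2 × Fin 2, i ≠ k →
      tens (vp k.1) (wp k.2) ⬝ᵥ bE i = 0 := by
    intro k i hik
    have hne : k.1 ≠ i.1 ∨ k.2 ≠ i.2 := by
      by_contra hc
      push_neg at hc
      exact hik (Prod.ext hc.1 hc.2).symm
    rw [hbE i, dot_tens]
    rcases hne with hne | hne
    · rw [horthv _ _ hne, zero_mul]
    · rw [horthw _ _ hne, mul_zero]
  have hpair : ∀ (x : Fin 2 × Fin 2 → ℝ) (k : Fin 2 × Fin 2),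
      tens (vp k.1) (wp k.2) ⬝ᵥ x = bE.repr x k * (dv k.1 * dw k.2) := by
    intro x k
    conv_lhs => rw [← bE.sum_repr x]
    rw [hdotsum]
    have hterm : ∀ i ∈ Finset.univ, tens (vp k.1) (wp k.2) ⬝ᵥ (bE.repr x i • bE i)
        = bE.repr x i * (tens (vp k.1) (wp k.2) ⬝ᵥ bE i) := by
      intro i _
      rw [dotProduct_smul, smul_eq_mul]
    rw [Finset.sum_congr rfl hterm]
    rw [Finset.sum_eq_single k]
    · rw [hdotdiag k]
    · intro i _ hik
      rw [hdotoff k i hik, mul_zero]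
    · intro hk'
      exact absurd (Finset.mem_univ k) hk'
  -- the coefficient vector
  have hbE'ab : bE' (a, bb) = tens (vp a) (wp bb) := hbE' (a, bb)
  obtain ⟨cc, hccdef⟩ : ∃ cc : Fin 2 × Fin 2 → ℝ,
      ∀ k, cc k = bE.repr (tens (vp a) (wp bb)) k :=
    ⟨fun k => bE.repr (tens (vp a) (wp bb)) k, fun k => rfl⟩
  have hccK0 : cc k0 = 0 := by
    have h0 := hk0 (bE' (a, bb)) hk'Z
    rw [hbE'ab] at h0
    rw [hccdef k0]
    exact h0
  have hne0 : tens (vp a) (wp bb) ⬝ᵥ tens (vp a) (wp bb) ≠ 0 := fun h0 =>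
    tens_ne_zero (hvpne a) (hwpne bb) (dotProduct_self_eq_zero.mp h0)
  have hccK' : cc (a, bb) ≠ 0 := by
    intro hc0
    have h1 : tens (vp a) (wp bb) ⬝ᵥ tens (vp a) (wp bb)
        = cc (a, bb) * (dv a * dw bb) := by
      rw [hccdef (a, bb)]
      exact hpair (tens (vp a) (wp bb)) (a, bb)
    rw [hc0, zero_mul] at h1
    exact hne0 h1
  have hEq : ∀ i j : Fin 2, cc (i, j) * (dv i * dw j)
      = (vp i ⬝ᵥ vp a) * (wp j ⬝ᵥ wp bb) := by
    intro i j
    have h1 : tens (vp i) (wp j) ⬝ᵥ tens (vp a) (wp bb)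
        = cc (i, j) * (dv i * dw j) := by
      rw [hccdef (i, j)]
      exact hpair (tens (vp a) (wp bb)) (i, j)
    rw [dot_tens] at h1
    exact h1.symm
  have hcdet : cc (0, 0) * cc (1, 1) = cc (0, 1) * cc (1, 0) := by
    have E00 := hEq 0 0
    have E01 := hEq 0 1
    have E10 := hEq 1 0
    have E11 := hEq 1 1
    have hDne : dv 0 * dv 1 * dw 0 * dw 1 ≠ 0 :=
      mul_ne_zero (mul_ne_zero (mul_ne_zero (hdv_ne 0) (hdv_ne 1)) (hdw_ne 0)) (hdw_ne 1)
    have hmul : (cc (0, 0) * cc (1, 1) - cc (0, 1) * cc (1, 0))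
        * (dv 0 * dv 1 * dw 0 * dw 1) = 0 := by
      linear_combination (cc (1, 1) * (dv 1 * dw 1)) * E00
        + ((vp 0 ⬝ᵥ vp a) * (wp 0 ⬝ᵥ wp bb)) * E11
        - (cc (1, 0) * (dv 1 * dw 0)) * E01
        - ((vp 0 ⬝ᵥ vp a) * (wp 1 ⬝ᵥ wp bb)) * E10
    rcases mul_eq_zero.mp hmul with h' | h'
    · linarith [sub_eq_zero.mp h']
    · exact absurd h' hDne
  set rv : Fin 2 → Fin 2 := ![1, 0] with hrv_def
  have hcdet' : cc (a, bb) * cc (rv a, rv bb) = cc (a, rv bb) * cc (rv a, bb) := by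
    fin_cases a <;> fin_cases bb <;>
      simp only [hrv_def, Fin.mk_zero, Fin.mk_one, Fin.isValue, Matrix.cons_val_zero, Matrix.cons_val_one, Matrix.head_cons]
    · linear_combination hcdet
    · linear_combination -hcdet
    · linear_combination -hcdet
    · linear_combination hcdet
  -- decomposition helper
  have hsum : tens (vp a) (wp bb) = ∑ k : Fin 2 × Fin 2, cc k • tens (va k.1) (wa k.2) := by
    have h0 := bE.sum_repr (tens (vp a) (wp bb))
    conv_lhs => rw [← h0]
    refine Finset.sum_congr rfl fun k _ => ?_
    rw [hbE k, hccdef k]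
  -- the two collapse cases
  have case1 : cc (a, rv bb) = 0 → False := by
    intro h1
    have h2 : cc (rv a, rv bb) = 0 := by
      have h3 : cc (a, bb) * cc (rv a, rv bb) = 0 := by rw [hcdet', h1, zero_mul]
      rcases mul_eq_zero.mp h3 with h' | h'
      · exact absurd h' hccK'
      · exact h'
    have heq : tens (vp a) (wp bb)
        = tens (cc (a, bb) • va a + cc (rv a, bb) • va (rv a)) (wa bb) := by
      rw [hsum]
      fin_cases a <;> fin_cases bb <;>
        simp only [hrv_def, Fin.mk_zero, Fin.mk_one, Fin.isValue, Matrix.cons_val_zero, Matrix.cons_val_one, Matrix.head_cons]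
          at h1 h2 ⊢ <;>
        (funext x;
         simp only [Fintype.sum_prod_type, Fin.sum_univ_two, tens, Pi.add_apply,
           Pi.smul_apply, Finset.sum_apply, smul_eq_mul, h1, h2, zero_mul] <;> ring)
    obtain ⟨p0, hp0⟩ := exists_ne_zero_coord (hvpne a)
    have hwpar := tens_factor_right heq hp0
    exact parallel_eig hBsym (hwane bb) (hwpne bb) (hwaE bb) (hwpE bb) hwpar
  have case2 : cc (rv a, bb) = 0 → False := by
    intro h1
    have h2 : cc (rv a, rv bb) = 0 := by
      have h3 : cc (a, bb) * cc (rv a, rv bb) = 0 := by rw [hcdet', h1, mul_zero]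
      rcases mul_eq_zero.mp h3 with h' | h'
      · exact absurd h' hccK'
      · exact h'
    have heq : tens (vp a) (wp bb)
        = tens (va a) (cc (a, bb) • wa bb + cc (a, rv bb) • wa (rv bb)) := by
      rw [hsum]
      fin_cases a <;> fin_cases bb <;>
        simp only [hrv_def, Fin.mk_zero, Fin.mk_one, Fin.isValue, Matrix.cons_val_zero, Matrix.cons_val_one, Matrix.head_cons]
          at h1 h2 ⊢ <;>
        (funext x;
         simp only [Fintype.sum_prod_type, Fin.sum_univ_two, tens, Pi.add_apply,
           Pi.smul_apply, Finset.sum_apply, smul_eq_mul, h1, h2, zero_mul] <;> ring)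
    obtain ⟨q0, hq0⟩ := exists_ne_zero_coord (hwpne bb)
    have hvpar := tens_factor_left heq hq0
    exact parallel_eig hAsym (hvane a) (hvpne a) (hvaE a) (hvpE a) hvpar
  -- final case analysis on k0
  have hk0ne : k0 ≠ (a, bb) := fun hh => hccK' (hh ▸ hccK0)
  obtain ⟨x0, y0⟩ := k0
  rcases fin2_prod_cases a bb x0 y0 hk0ne with h' | h' | h'
  · exact case1 (by rw [← show cc (x0, y0) = 0 from hccK0, h', hrv_def])
  · exact case2 (by rw [← show cc (x0, y0) = 0 from hccK0, h', hrv_def])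
  · have h2 : cc (rv a, rv bb) = 0 := by rw [← show cc (x0, y0) = 0 from hccK0, h', hrv_def]
    have h3 : cc (a, rv bb) * cc (rv a, bb) = 0 := by rw [← hcdet', h2, mul_zero]
    rcases mul_eq_zero.mp h3 with h4 | h4
    · exact case1 h4
    · exact case2 h4


end PaperProj
end
end
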